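/- arXiv:2103.05089 — 4 statements merged into one kernel-verified Lean document; each statement's English description precedes it below -/
import Mathlib

section
/- Let K : (0,∞) → ℝ be locally integrable, positive, eventually decreasing, with K(t) → 0 as t → ∞, and suppose K is integrable on (0,∞). Let 𝒦cos, 𝒦sin : (0,∞) → ℝ satisfy, for every ω > 0, ∫₀^A K(t)cos(ωt)dt → 𝒦cos(ω) and ∫₀^A K(t)sin(ωt)dt → 𝒦sin(ω) as A → ∞, and assume 𝒦cos(ω) > 0 for all ω > 0. Let m, λ, β, γ > 0 and set r₁₁(ω) = 2(λ + β·𝒦cos(ω)) / ((γ − m·ω² + β·ω·𝒦sin(ω))² + ω²·(λ + β·𝒦cos(ω))²). Then there exists c ∈ (0,∞) such that (1/t)·∫₀^∞ (1 − cos(tω))·ω⁻²·r₁₁(ω) dω → c as t → ∞. (This expresses that the mean squared displacement E|∫₀ᵗ x(s)ds|² = (2 k_B T/π)∫₀^∞ (1−cos(tω))ω⁻² r₁₁(ω)dω grows diffusively, i.e. linearly in t, when the memory kernel is integrable.) -/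
open MeasureTheory Filter Set

lemma aux_fejer_meas : Measurable (fun u : ℝ => (1 - Real.cos u) / u ^ 2) :=
  (measurable_const.sub Real.measurable_cos).div (measurable_id.pow_const 2)

lemma aux_fejer_nonneg (u : ℝ) : 0 ≤ (1 - Real.cos u) / u ^ 2 :=
  div_nonneg (by nlinarith [Real.cos_le_one u]) (sq_nonneg u)

lemma aux_G_integrable : IntegrableOn (fun u : ℝ => (1 - Real.cos u) / u ^ 2) (Ioi 0) := by
  have h1 : IntegrableOn (fun u : ℝ => (1 - Real.cos u) / u ^ 2) (Ioc 0 1) := by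
    refine Integrable.mono' (g := fun _ => (1 : ℝ))
      (integrableOn_const measure_Ioc_lt_top.ne)
      aux_fejer_meas.aestronglyMeasurable.restrict ?_
    filter_upwards [ae_restrict_mem measurableSet_Ioc] with u hu
    have hu0 : (0:ℝ) < u := hu.1
    rw [Real.norm_eq_abs, abs_of_nonneg (aux_fejer_nonneg u), div_le_one (by positivity)]
    nlinarith [Real.one_sub_sq_div_two_le_cos (x := u)]
  have h2 : IntegrableOn (fun u : ℝ => (1 - Real.cos u) / u ^ 2) (Ioi 1) := by
    refine Integrable.mono' (g := fun u : ℝ => 2 * u ^ (-2 : ℝ))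
      ((integrableOn_Ioi_rpow_of_lt (by norm_num) one_pos).const_mul 2)
      aux_fejer_meas.aestronglyMeasurable.restrict ?_
    filter_upwards [ae_restrict_mem measurableSet_Ioi] with u hu
    have hu1 : (1:ℝ) < u := hu
    have hrw : u ^ (-2 : ℝ) = (u ^ 2)⁻¹ := by
      rw [Real.rpow_neg (by linarith), show ((2:ℝ) = ((2:ℕ):ℝ)) by norm_num,
        Real.rpow_natCast]
    rw [Real.norm_eq_abs, abs_of_nonneg (aux_fejer_nonneg u), hrw, div_eq_mul_inv]
    have h2' : 1 - Real.cos u ≤ 2 := by nlinarith [Real.neg_one_le_cos u]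
    have : (0:ℝ) < (u ^ 2)⁻¹ := by positivity
    nlinarith
  have : Ioc (0:ℝ) 1 ∪ Ioi 1 = Ioi 0 := Ioc_union_Ioi_eq_Ioi zero_le_one
  rw [← this]
  exact h1.union h2

lemma aux_J_pos : 0 < ∫ u in Ioi (0:ℝ), (1 - Real.cos u) / u ^ 2 := by
  rw [setIntegral_pos_iff_support_of_nonneg_ae
    (Eventually.of_forall fun u => aux_fejer_nonneg u) aux_G_integrable]
  have hsub : Ioc (0:ℝ) 1 ⊆ Function.support (fun u : ℝ => (1 - Real.cos u) / u ^ 2) ∩ Ioi 0 := by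
    intro u hu
    have hu0 : (0:ℝ) < u := hu.1
    have hcos : Real.cos u < 1 := by
      rcases lt_or_eq_of_le (Real.cos_le_one u) with h | h
      · exact h
      · exfalso
        have hpi := Real.pi_gt_three
        have := (Real.cos_eq_one_iff_of_lt_of_lt (x := u)
          (by nlinarith [hu.2]) (by nlinarith [hu.2])).1 h
        linarith
    constructor
    · simp only [Function.mem_support]
      exact ne_of_gt (div_pos (by linarith) (by positivity))
    · exact hu0
  calc (0:ENNReal) < 1 := by norm_num
    _ = volume (Ioc (0:ℝ) 1) := by simp
    _ ≤ _ := measure_mono hsub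

set_option maxHeartbeats 2000000 in
/-- Diffusive growth of the mean squared displacement of the integrated
position for the harmonically bounded GLE with an integrable memory kernel:
`(1/t) ∫₀^∞ (1 − cos(tω)) ω⁻² r₁₁(ω) dω → c ∈ (0,∞)` as `t → ∞`. -/
theorem msd_diffusive_integrable_kernel
    (K : ℝ → ℝ)
    (hKloc : ∀ A > 0, IntegrableOn K (Ioc 0 A))
    (hKpos : ∀ t > 0, 0 < K t)
    (hKdec : ∃ T > 0, AntitoneOn K (Ici T))
    (hK0 : Tendsto K atTop (nhds 0))
    (hKint : IntegrableOn K (Ioi 0))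
    (Kcos Ksin : ℝ → ℝ)
    (hKcos : ∀ ω > 0, Tendsto (fun A => ∫ t in (0:ℝ)..A, K t * Real.cos (ω * t))
      atTop (nhds (Kcos ω)))
    (hKsin : ∀ ω > 0, Tendsto (fun A => ∫ t in (0:ℝ)..A, K t * Real.sin (ω * t))
      atTop (nhds (Ksin ω)))
    (hKcospos : ∀ ω > 0, 0 < Kcos ω)
    (m lam β γ : ℝ) (hm : 0 < m) (hlam : 0 < lam) (hβ : 0 < β) (hγ : 0 < γ)
    (r11 : ℝ → ℝ)
    (hr11 : ∀ ω > 0, r11 ω =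
      2 * (lam + β * Kcos ω) /
        ((γ - m * ω ^ 2 + β * ω * Ksin ω) ^ 2 + ω ^ 2 * (lam + β * Kcos ω) ^ 2)) :
    ∃ c > 0, Tendsto
      (fun t => (1 / t) * ∫ ω in Ioi (0:ℝ), (1 - Real.cos (t * ω)) / ω ^ 2 * r11 ω)
      atTop (nhds c) := by
  have hKm : AEStronglyMeasurable K (volume.restrict (Ioi 0)) := hKint.aestronglyMeasurable
  set I : ℝ := ∫ t in Ioi (0:ℝ), K t with hIdef
  have hI0 : 0 ≤ I := setIntegral_nonneg measurableSet_Ioi fun t ht => (hKpos t ht).le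
  -- integrability of the transforms' integrands
  have hbc : ∀ ω : ℝ, IntegrableOn (fun t => K t * Real.cos (ω * t)) (Ioi 0) := by
    intro ω
    refine hKint.abs.mono'
      (hKm.mul ((Real.continuous_cos.comp (continuous_const.mul continuous_id)).aestronglyMeasurable)) ?_
    filter_upwards with t
    exact (norm_mul_le _ _).trans (by
      rw [Real.norm_eq_abs, Real.norm_eq_abs]
      exact mul_le_of_le_one_right (abs_nonneg _) (Real.abs_cos_le_one _))
  have hbs : ∀ ω : ℝ, IntegrableOn (fun t => K t * Real.sin (ω * t)) (Ioi 0) := by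
    intro ω
    refine hKint.abs.mono'
      (hKm.mul ((Real.continuous_sin.comp (continuous_const.mul continuous_id)).aestronglyMeasurable)) ?_
    filter_upwards with t
    exact (norm_mul_le _ _).trans (by
      rw [Real.norm_eq_abs, Real.norm_eq_abs]
      exact mul_le_of_le_one_right (abs_nonneg _) (Real.abs_sin_le_one _))
  set Kc : ℝ → ℝ := fun ω => ∫ t in Ioi (0:ℝ), K t * Real.cos (ω * t) with hKcdef
  set Ks : ℝ → ℝ := fun ω => ∫ t in Ioi (0:ℝ), K t * Real.sin (ω * t) with hKsdef
  -- continuity of the transforms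
  have hKcCont : Continuous Kc := by
    refine continuous_of_dominated (fun ω => (hbc ω).aestronglyMeasurable)
      (fun ω => ?_) hKint.abs ?_
    · filter_upwards with t
      exact (norm_mul_le _ _).trans (by
        rw [Real.norm_eq_abs, Real.norm_eq_abs]
        exact mul_le_of_le_one_right (abs_nonneg _) (Real.abs_cos_le_one _))
    · filter_upwards with t
      exact continuous_const.mul (Real.continuous_cos.comp (continuous_id.mul continuous_const))
  have hKsCont : Continuous Ks := by
    refine continuous_of_dominated (fun ω => (hbs ω).aestronglyMeasurable)
      (fun ω => ?_) hKint.abs ?_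
    · filter_upwards with t
      exact (norm_mul_le _ _).trans (by
        rw [Real.norm_eq_abs, Real.norm_eq_abs]
        exact mul_le_of_le_one_right (abs_nonneg _) (Real.abs_sin_le_one _))
    · filter_upwards with t
      exact continuous_const.mul (Real.continuous_sin.comp (continuous_id.mul continuous_const))
  -- identification with Kcos, Ksin on (0,∞)
  have hKcEq : ∀ ω > 0, Kcos ω = Kc ω := fun ω hω =>
    tendsto_nhds_unique (hKcos ω hω)
      (intervalIntegral_tendsto_integral_Ioi 0 (hbc ω) tendsto_id)
  have hKsEq : ∀ ω > 0, Ksin ω = Ks ω := fun ω hω =>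
    tendsto_nhds_unique (hKsin ω hω)
      (intervalIntegral_tendsto_integral_Ioi 0 (hbs ω) tendsto_id)
  -- values at 0
  have hKc0 : Kc 0 = I := by
    rw [hKcdef]
    simp
    exact hIdef.symm
  have hKs0 : Ks 0 = 0 := by
    rw [hKsdef]
    simp
  -- uniform bounds on the transforms
  have hKcB : ∀ ω : ℝ, |Kc ω| ≤ I := by
    intro ω
    rw [← Real.norm_eq_abs]
    refine norm_integral_le_of_norm_le hKint ?_
    filter_upwards [ae_restrict_mem measurableSet_Ioi] with t ht
    exact (norm_mul_le _ _).trans (by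
      rw [Real.norm_eq_abs, Real.norm_eq_abs, abs_of_pos (hKpos t ht)]
      exact mul_le_of_le_one_right (hKpos t ht).le (Real.abs_cos_le_one _))
  have hKsB : ∀ ω : ℝ, |Ks ω| ≤ I := by
    intro ω
    rw [← Real.norm_eq_abs]
    refine norm_integral_le_of_norm_le hKint ?_
    filter_upwards [ae_restrict_mem measurableSet_Ioi] with t ht
    exact (norm_mul_le _ _).trans (by
      rw [Real.norm_eq_abs, Real.norm_eq_abs, abs_of_pos (hKpos t ht)]
      exact mul_le_of_le_one_right (hKpos t ht).le (Real.abs_sin_le_one _))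
  -- the Borel version of r11
  set R : ℝ → ℝ := fun ω => 2 * (lam + β * Kc ω) /
      ((γ - m * ω ^ 2 + β * ω * Ks ω) ^ 2 + ω ^ 2 * (lam + β * Kc ω) ^ 2) with hRdef
  have hnumCont : Continuous fun ω : ℝ => 2 * (lam + β * Kc ω) :=
    continuous_const.mul (continuous_const.add (continuous_const.mul hKcCont))
  have hdenCont : Continuous fun ω : ℝ =>
      (γ - m * ω ^ 2 + β * ω * Ks ω) ^ 2 + ω ^ 2 * (lam + β * Kc ω) ^ 2 := by
    apply Continuous.add
    · exact (((continuous_const.sub (continuous_const.mul (continuous_pow 2))).add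
        ((continuous_const.mul continuous_id).mul hKsCont)).pow 2)
    · exact (continuous_pow 2).mul
        ((continuous_const.add (continuous_const.mul hKcCont)).pow 2)
  have hRmeas : Measurable R := hnumCont.measurable.div hdenCont.measurable
  have hr11R : ∀ ω > 0, r11 ω = R ω := by
    intro ω hω
    rw [hr11 ω hω, hKcEq ω hω, hKsEq ω hω, hRdef]
  clear_value I Kc Ks R
  -- uniform lower bound on the denominator
  obtain ⟨δ, hδpos, hδ1, hδupper⟩ :
      ∃ δ : ℝ, 0 < δ ∧ δ ≤ 1 ∧ δ * (m + β * I + 1) ≤ γ / 2 := by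
    have h2 : (0:ℝ) < m + β * I + 1 := by positivity
    refine ⟨min 1 (γ / (2 * (m + β * I + 1))),
      lt_min one_pos (div_pos hγ (by positivity)), min_le_left _ _, ?_⟩
    have h1 : min 1 (γ / (2 * (m + β * I + 1))) ≤ γ / (2 * (m + β * I + 1)) :=
      min_le_right _ _
    calc min 1 (γ / (2 * (m + β * I + 1))) * (m + β * I + 1)
        ≤ (γ / (2 * (m + β * I + 1))) * (m + β * I + 1) :=
          mul_le_mul_of_nonneg_right h1 h2.le
      _ = γ / 2 := by field_simp
  obtain ⟨ε, hεpos, hεa, hεb⟩ :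
      ∃ ε : ℝ, 0 < ε ∧ ε ≤ (γ / 2) ^ 2 ∧ ε ≤ δ ^ 2 * lam ^ 2 :=
    ⟨min ((γ / 2) ^ 2) (δ ^ 2 * lam ^ 2), lt_min (by positivity) (by positivity),
      min_le_left _ _, min_le_right _ _⟩
  have hden_lb : ∀ ω > 0,
      ε ≤ (γ - m * ω ^ 2 + β * ω * Ks ω) ^ 2 + ω ^ 2 * (lam + β * Kc ω) ^ 2 := by
    intro ω hω
    rcases le_or_gt ω δ with h | h
    · refine le_trans hεa ?_
      have hKsabs := hKsB ω
      have h3 : m * ω ^ 2 + β * ω * |Ks ω| ≤ γ / 2 := by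
        have hω1 : ω ≤ 1 := le_trans h hδ1
        have e1 : m * ω ^ 2 ≤ m * ω := by
          nlinarith [mul_nonneg hm.le (mul_nonneg hω.le (sub_nonneg.2 hω1))]
        have e2 : β * ω * |Ks ω| ≤ β * ω * I := by
          have : (0:ℝ) ≤ β * ω := by positivity
          exact mul_le_mul_of_nonneg_left hKsabs this
        have e3 : ω * (m + β * I) ≤ δ * (m + β * I) :=
          mul_le_mul_of_nonneg_right h (by positivity)
        have e4 : δ * (m + β * I) ≤ δ * (m + β * I + 1) := by nlinarith
        have e5 : m * ω + β * ω * I = ω * (m + β * I) := by ring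
        linarith
      have h4 : γ / 2 ≤ γ - m * ω ^ 2 + β * ω * Ks ω := by
        have e6 : 0 ≤ Ks ω + |Ks ω| := by
          have := neg_abs_le (Ks ω); linarith
        have e7 : 0 ≤ β * ω * (Ks ω + |Ks ω|) :=
          mul_nonneg (by positivity) e6
        nlinarith
      have h5 : (γ / 2) ^ 2 ≤ (γ - m * ω ^ 2 + β * ω * Ks ω) ^ 2 := by
        have hg2 : (0:ℝ) ≤ γ / 2 := by positivity
        nlinarith
      exact h5.trans (le_add_of_nonneg_right (by positivity))
    · refine le_trans hεb ?_
      have hKcω : 0 < Kc ω := by rw [← hKcEq ω hω]; exact hKcospos ω hω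
      have h6 : δ ^ 2 * lam ^ 2 ≤ ω ^ 2 * (lam + β * Kc ω) ^ 2 := by
        have e1 : δ ^ 2 ≤ ω ^ 2 := pow_le_pow_left₀ hδpos.le h.le 2
        have e2 : lam ^ 2 ≤ (lam + β * Kc ω) ^ 2 := by
          nlinarith [mul_pos hβ hKcω, sq_nonneg (β * Kc ω)]
        have := mul_le_mul e1 e2 (by positivity) (by positivity)
        linarith
      exact h6.trans (le_add_of_nonneg_left (sq_nonneg _))
  -- positivity and boundedness of R on (0,∞)
  have hRpos : ∀ ω > 0, 0 < R ω := by
    intro ω hω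
    have hKcω : 0 < Kc ω := by rw [← hKcEq ω hω]; exact hKcospos ω hω
    rw [hRdef]
    simp only []
    refine div_pos ?_ (lt_of_lt_of_le hεpos (hden_lb ω hω))
    have h7 : 0 < β * Kc ω := mul_pos hβ hKcω
    linarith
  obtain ⟨M, hMdef⟩ : ∃ M : ℝ, M = 2 * (lam + β * I) / ε := ⟨_, rfl⟩
  have hRle : ∀ ω > 0, R ω ≤ M := by
    intro ω hω
    have h1 : 2 * (lam + β * Kc ω) ≤ 2 * (lam + β * I) := by
      have h8 := (le_abs_self (Kc ω)).trans (hKcB ω)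
      have h9 : β * Kc ω ≤ β * I := mul_le_mul_of_nonneg_left h8 hβ.le
      linarith
    rw [hRdef, hMdef]
    simp only []
    have h10 : (0:ℝ) ≤ 2 * (lam + β * I) := by
      have := mul_nonneg hβ.le hI0
      linarith
    exact div_le_div₀ h10 h1 hεpos (hden_lb ω hω)
  -- continuity of R at 0 and its positive value there
  have hden0 : (γ - m * (0:ℝ) ^ 2 + β * 0 * Ks 0) ^ 2 + (0:ℝ) ^ 2 * (lam + β * Kc 0) ^ 2
      = γ ^ 2 := by ring
  have hRcont : ContinuousAt R 0 := by
    rw [hRdef]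
    refine ContinuousAt.div hnumCont.continuousAt hdenCont.continuousAt ?_
    rw [hden0]
    exact pow_ne_zero 2 hγ.ne'
  have hR0 : R 0 = 2 * (lam + β * I) / γ ^ 2 := by
    rw [hRdef]
    simp only []
    rw [hKs0, hKc0]
    norm_num
  have hR0pos : 0 < R 0 := by
    rw [hR0]
    have h11 : (0:ℝ) < 2 * (lam + β * I) := by
      have := mul_nonneg hβ.le hI0
      linarith
    exact div_pos h11 (by exact pow_pos hγ 2)
  -- pointwise limit along the scaling
  have hcomp : ∀ u : ℝ, 0 < u → Tendsto (fun t : ℝ => R (u / t)) atTop (nhds (R 0)) := by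
    intro u hu
    have h1 : Tendsto (fun t : ℝ => u / t) atTop (nhds 0) :=
      Tendsto.div_atTop tendsto_const_nhds tendsto_id
    exact hRcont.tendsto.comp h1
  -- the rescaled integrand
  set F : ℝ → ℝ → ℝ := fun t u => (1 - Real.cos u) / u ^ 2 * R (u / t) with hFdef
  -- change of variables
  have key : ∀ t : ℝ, 0 < t →
      (1 / t) * (∫ ω in Ioi (0:ℝ), (1 - Real.cos (t * ω)) / ω ^ 2 * r11 ω)
        = ∫ u in Ioi (0:ℝ), F t u := by
    intro t ht
    have h1 : ∫ ω in Ioi (0:ℝ), (1 - Real.cos (t * ω)) / ω ^ 2 * r11 ω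
        = ∫ ω in Ioi (0:ℝ), t ^ 2 * F t (t * ω) := by
      refine setIntegral_congr_fun measurableSet_Ioi fun ω hω => ?_
      have hω' : (0:ℝ) < ω := hω
      have hω0 : ω ≠ 0 := ne_of_gt hω'
      have ht0 : t ≠ 0 := ne_of_gt ht
      rw [hFdef]
      simp only []
      rw [hr11R ω hω]
      have htω : t * ω / t = ω := by field_simp
      rw [htω]
      field_simp
    have h2 : (∫ ω in Ioi (0:ℝ), F t (t * ω)) = t⁻¹ • ∫ u in Ioi (t * 0), F t u :=
      integral_comp_mul_left_Ioi (F t) 0 ht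
    rw [mul_zero] at h2
    rw [h1, integral_const_mul, h2, smul_eq_mul]
    field_simp
  -- measurability and bound for dominated convergence
  have hFmeas : ∀ t : ℝ, AEStronglyMeasurable (F t) (volume.restrict (Ioi 0)) := by
    intro t
    exact (aux_fejer_meas.mul (hRmeas.comp (measurable_id.div_const t))).aestronglyMeasurable
  have hFbound : ∀ t : ℝ, 0 < t → ∀ᵐ u ∂(volume.restrict (Ioi 0)),
      ‖F t u‖ ≤ M * ((1 - Real.cos u) / u ^ 2) := by
    intro t ht
    filter_upwards [ae_restrict_mem measurableSet_Ioi] with u hu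
    have hu' : (0:ℝ) < u := hu
    have hut : 0 < u / t := div_pos hu' ht
    have h1 : 0 < R (u / t) := hRpos _ hut
    have h2 : R (u / t) ≤ M := hRle _ hut
    have h3 : 0 ≤ (1 - Real.cos u) / u ^ 2 := aux_fejer_nonneg u
    rw [hFdef]
    simp only []
    rw [Real.norm_eq_abs, abs_of_nonneg (mul_nonneg h3 h1.le)]
    calc (1 - Real.cos u) / u ^ 2 * R (u / t) ≤ (1 - Real.cos u) / u ^ 2 * M :=
          mul_le_mul_of_nonneg_left h2 h3
      _ = M * ((1 - Real.cos u) / u ^ 2) := mul_comm _ _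
  -- dominated convergence
  have hDCT : Tendsto (fun t : ℝ => ∫ u in Ioi (0:ℝ), F t u) atTop
      (nhds (∫ u in Ioi (0:ℝ), (1 - Real.cos u) / u ^ 2 * R 0)) := by
    refine tendsto_integral_filter_of_dominated_convergence
      (fun u => M * ((1 - Real.cos u) / u ^ 2))
      (Eventually.of_forall hFmeas) ?_ (aux_G_integrable.const_mul M) ?_
    · filter_upwards [eventually_gt_atTop (0:ℝ)] with t ht
      exact hFbound t ht
    · filter_upwards [ae_restrict_mem measurableSet_Ioi] with u hu
      exact Tendsto.const_mul _ (hcomp u hu)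
  refine ⟨∫ u in Ioi (0:ℝ), (1 - Real.cos u) / u ^ 2 * R 0, ?_, ?_⟩
  · rw [integral_mul_const]
    exact mul_pos aux_J_pos hR0pos
  · refine hDCT.congr' ?_
    filter_upwards [eventually_gt_atTop (0:ℝ)] with t ht
    exact (key t ht).symm
end

section
/- Let K : ℝ → ℝ be even with K restricted to (0,∞) locally integrable, positive, eventually decreasing, tending to 0 at ∞, and satisfying one of: (a) K is integrable on (0,∞); or (b) t·K(t) → c₁ ∈ (0,∞) as t → ∞; or (c) t^α·K(t) → c_α ∈ (0,∞) for some α ∈ (0,1). Let 𝒦cos : (0,∞) → ℝ satisfy ∫₀^A K(t)cos(ωt)dt → 𝒦cos(ω) as A → ∞ for every ω > 0. Then for every Schwartz function φ : ℝ → ℂ, ∫_ℝ K(|t|)·φ̂(t) dt = 2·∫_ℝ 𝒦cos(|ω|)·φ(ω) dω, where φ̂(ω) = ∫_ℝ φ(t) e^{−itω} dt. In other words, the Fourier transform of K in the sense of tempered distributions is the locally integrable function 2𝒦cos. -/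
open MeasureTheory Filter Set

lemma integral_Ioc_cos_bound (a c ω : ℝ) (hω : 0 < ω) :
    |∫ t in Ioc a c, Real.cos (ω * t)| ≤ 2 / ω := by
  rcases le_or_gt a c with h | h
  · rw [← intervalIntegral.integral_of_le h]
    have h1 : ∫ t in a..c, Real.cos (ω * t) =
        (Real.sin (ω * c) - Real.sin (ω * a)) / ω := by
      have := intervalIntegral.integral_comp_mul_left (a := a) (b := c)
        (fun x => Real.cos x) (ne_of_gt hω)
      rw [this, integral_cos]
      simp [smul_eq_mul]
      ring
    rw [h1, abs_div, abs_of_pos hω, div_le_div_iff_of_pos_right hω]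
    have := abs_sub (Real.sin (ω * c)) (Real.sin (ω * a))
    calc |Real.sin (ω * c) - Real.sin (ω * a)|
        ≤ |Real.sin (ω * c)| + |Real.sin (ω * a)| := abs_sub _ _
      _ ≤ 1 + 1 := add_le_add (Real.abs_sin_le_one _) (Real.abs_sin_le_one _)
      _ = 2 := by norm_num
  · rw [Ioc_eq_empty (not_lt.mpr h.le), setIntegral_empty, abs_zero]
    positivity

lemma osc_bound (f : ℝ → ℝ) (a b ω : ℝ) (hab : a ≤ b) (hω : 0 < ω)
    (hf : AntitoneOn f (Icc a b)) (hfb : 0 ≤ f b) :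
    |∫ t in Ioc a b, f t * Real.cos (ω * t)| ≤ 2 * f a / ω := by
  set h : ℝ → ℝ := fun t => f (max a (min b t)) - f b with hh_def
  have hmem : ∀ t, max a (min b t) ∈ Icc a b := fun t =>
    ⟨le_max_left _ _, max_le hab (min_le_left _ _)⟩
  have hclamp_mono : Monotone fun t => max a (min b t) := fun x y hxy =>
    max_le_max le_rfl (min_le_min le_rfl hxy)
  have hh_anti : Antitone h := fun x y hxy =>
    sub_le_sub_right (hf (hmem x) (hmem y) (hclamp_mono hxy)) _
  have hh_nonneg : ∀ t, 0 ≤ h t := fun t =>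
    sub_nonneg.mpr (hf (hmem t) ⟨hab, le_rfl⟩ (hmem t).2)
  set M : ℝ := f a - f b with hM_def
  have hM_nonneg : 0 ≤ M := sub_nonneg.mpr (hf ⟨le_rfl, hab⟩ ⟨hab, le_rfl⟩ hab)
  have hh_le : ∀ t, h t ≤ M := fun t =>
    sub_le_sub_right (hf ⟨le_rfl, hab⟩ (hmem t) (hmem t).1) _
  have hh_eq : ∀ t ∈ Ioc a b, h t = f t - f b := by
    intro t ht
    have : max a (min b t) = t := by
      rw [min_eq_right ht.2, max_eq_right ht.1.le]
    simp [hh_def, this]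
  have hh_meas : Measurable h := hh_anti.measurable
  -- the product function
  set S : Set (ℝ × ℝ) := {p | p.1 ∈ Ioc a b ∧ p.2 ∈ Ioc 0 (h p.1)} with hS_def
  set P : ℝ × ℝ → ℝ := S.indicator (fun p => Real.cos (ω * p.1)) with hP_def
  have hS_meas : MeasurableSet S := by
    have h1 : MeasurableSet {p : ℝ × ℝ | p.1 ∈ Ioc a b} :=
      measurable_fst measurableSet_Ioc
    have h2 : MeasurableSet {p : ℝ × ℝ | 0 < p.2} :=
      measurableSet_lt measurable_const measurable_snd
    have h3 : MeasurableSet {p : ℝ × ℝ | p.2 ≤ h p.1} :=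
      measurableSet_le measurable_snd (hh_meas.comp measurable_fst)
    have : S = {p : ℝ × ℝ | p.1 ∈ Ioc a b} ∩ ({p | 0 < p.2} ∩ {p | p.2 ≤ h p.1}) := by
      ext p; simp [hS_def, mem_Ioc, and_assoc]
    rw [this]; exact h1.inter (h2.inter h3)
  have hS_sub : S ⊆ Ioc a b ×ˢ Ioc 0 M := by
    rintro ⟨t, s⟩ ⟨ht, hs⟩
    exact ⟨ht, hs.1, hs.2.trans (hh_le t)⟩
  have hbig : Integrable ((Ioc a b ×ˢ Ioc 0 M).indicator fun _ => (1 : ℝ))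
      (volume.prod volume) := by
    rw [integrable_indicator_iff (measurableSet_Ioc.prod measurableSet_Ioc)]
    refine (integrableOn_const_iff (C := (1:ℝ))).mpr ?_
    right
    rw [Measure.prod_prod]
    exact ENNReal.mul_lt_top measure_Ioc_lt_top measure_Ioc_lt_top
  have hP_int : Integrable P (volume.prod volume) := by
    apply hbig.mono'
    · exact (Continuous.aestronglyMeasurable (Real.continuous_cos.comp (continuous_const.mul continuous_fst))).indicator hS_meas
    · refine ae_of_all _ fun p => ?_
      by_cases hp : p ∈ S
      · rw [hP_def, indicator_of_mem hp, indicator_of_mem (hS_sub hp)]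
        simpa using Real.abs_cos_le_one _
      · rw [hP_def, indicator_of_notMem hp]
        simp only [norm_zero]
        exact indicator_nonneg (fun _ _ => zero_le_one) _
  -- swap
  have hswap : ∫ t : ℝ, ∫ s : ℝ, P (t, s) = ∫ s : ℝ, ∫ t : ℝ, P (t, s) :=
    MeasureTheory.integral_integral_swap hP_int
  -- evaluation of inner integral in s
  have heval1 : ∀ t : ℝ, (∫ s : ℝ, P (t, s)) =
      (Ioc a b).indicator (fun t => h t * Real.cos (ω * t)) t := by
    intro t
    by_cases ht : t ∈ Ioc a b
    · have : (fun s => P (t, s)) = (Ioc 0 (h t)).indicator fun _ => Real.cos (ω * t) := by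
        funext s
        by_cases hs : s ∈ Ioc 0 (h t)
        · rw [hP_def, indicator_of_mem (show (t, s) ∈ S from ⟨ht, hs⟩), indicator_of_mem hs]
        · rw [hP_def, indicator_of_notMem (fun hmem' => hs hmem'.2), indicator_of_notMem hs]
      rw [this, integral_indicator_const _ measurableSet_Ioc, indicator_of_mem ht]
      rw [Real.volume_real_Ioc_of_le (hh_nonneg t)]
      rw [sub_zero]
      simp [smul_eq_mul]
    · have : (fun s => P (t, s)) = fun _ => (0:ℝ) := by
        funext s
        exact indicator_of_notMem (fun hmem' => ht hmem'.1) _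
      rw [this, integral_zero, indicator_of_notMem ht]
  -- bound on inner integral in t
  have heval2 : ∀ s : ℝ, |∫ t : ℝ, P (t, s)| ≤
      (Ioc 0 M).indicator (fun _ => 2 / ω) s := by
    intro s
    by_cases hs : s ∈ Ioc 0 M
    · set E : Set ℝ := {t | t ∈ Ioc a b ∧ s ∈ Ioc 0 (h t)} with hE_def
      have hE_meas : MeasurableSet E := by
        have : E = Ioc a b ∩ h ⁻¹' (Ici s) := by
          ext t; simp [hE_def, mem_Ioc, hs.1, and_comm]
        rw [this]
        exact measurableSet_Ioc.inter (hh_meas measurableSet_Ici)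
      have hPs : (fun t => P (t, s)) = E.indicator fun t => Real.cos (ω * t) := by
        funext t
        by_cases ht : t ∈ E
        · rw [hP_def, indicator_of_mem (show (t,s) ∈ S from ⟨ht.1, ht.2⟩), indicator_of_mem ht]
        · rw [hP_def, indicator_of_notMem (fun hmem' => ht ⟨hmem'.1, hmem'.2⟩),
            indicator_of_notMem ht]
      set c : ℝ := sSup (insert a E) with hc_def
      have hbdd : BddAbove (insert a E) := by
        apply BddAbove.mono (show insert a E ⊆ Icc a b from ?_) bddAbove_Icc
        rintro x (rfl | hx)
        · exact ⟨le_rfl, hab⟩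
        · exact ⟨hx.1.1.le, hx.1.2⟩
      have hac : a ≤ c := le_csSup hbdd (mem_insert _ _)
      have hsub1 : E ⊆ Ioc a c := fun t ht =>
        ⟨ht.1.1, le_csSup hbdd (mem_insert_of_mem _ ht)⟩
      have hsub2 : Ioo a c ⊆ E := by
        intro t ht
        obtain ⟨x, hx, htx⟩ := exists_lt_of_lt_csSup ⟨a, mem_insert _ _⟩ ht.2
        rcases hx with rfl | hxE
        · exact absurd ht.1 (not_lt.mpr htx.le)
        · exact ⟨⟨ht.1, htx.le.trans hxE.1.2⟩, hs.1,
            le_trans hxE.2.2 (hh_anti htx.le)⟩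
      have hEae : E =ᵐ[volume] Ioc a c := by
        rw [MeasureTheory.ae_eq_set]
        constructor
        · rw [diff_eq_empty.mpr hsub1]; simp
        · apply measure_mono_null (show Ioc a c \ E ⊆ {c} from ?_) (measure_singleton c)
          intro t ⟨ht1, ht2⟩
          rcases lt_or_eq_of_le ht1.2 with h' | h'
          · exact absurd (hsub2 ⟨ht1.1, h'⟩) ht2
          · exact h'
      rw [hPs, integral_indicator hE_meas, setIntegral_congr_set hEae,
        indicator_of_mem hs]
      exact integral_Ioc_cos_bound a c ω hω
    · have : (fun t => P (t, s)) = fun _ => (0:ℝ) := by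
        funext t
        apply indicator_of_notMem
        rintro ⟨ht, hs2⟩
        exact hs ⟨hs2.1, hs2.2.trans (hh_le t)⟩
      rw [this, integral_zero, abs_zero, indicator_of_notMem hs]
  -- combine: bound on ∫ h cos
  have hkey : |∫ t in Ioc a b, h t * Real.cos (ω * t)| ≤ M * (2 / ω) := by
    have e1 : ∫ t in Ioc a b, h t * Real.cos (ω * t) = ∫ t : ℝ, ∫ s : ℝ, P (t, s) := by
      rw [show (fun t => ∫ s : ℝ, P (t, s)) =
        (Ioc a b).indicator (fun t => h t * Real.cos (ω * t)) from funext heval1]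
      rw [integral_indicator measurableSet_Ioc]
    rw [e1, hswap]
    calc |∫ s : ℝ, ∫ t : ℝ, P (t, s)| ≤ ∫ s : ℝ, ‖∫ t : ℝ, P (t, s)‖ := by
          rw [← Real.norm_eq_abs]
          exact norm_integral_le_integral_norm _
      _ ≤ ∫ s : ℝ, (Ioc 0 M).indicator (fun _ => 2 / ω) s := by
          apply integral_mono_of_nonneg (ae_of_all _ fun s => norm_nonneg _)
          · rw [integrable_indicator_iff measurableSet_Ioc]
            exact (integrableOn_const_iff (C := 2 / ω)).mpr (Or.inr measure_Ioc_lt_top)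
          · exact ae_of_all _ fun s => by
              simpa [Real.norm_eq_abs] using heval2 s
      _ = M * (2 / ω) := by
          rw [integral_indicator_const _ measurableSet_Ioc, Real.volume_real_Ioc_of_le hM_nonneg,
            sub_zero, smul_eq_mul]
  -- assemble
  have hcos_int : IntegrableOn (fun t => Real.cos (ω * t)) (Ioc a b) :=
    (Continuous.integrableOn_Ioc (Real.continuous_cos.comp (continuous_const.mul continuous_id)))
  have hh_int : IntegrableOn (fun t => h t * Real.cos (ω * t)) (Ioc a b) := by
    apply Integrable.mono' ((integrableOn_const_iff (C := M)).mpr (Or.inr measure_Ioc_lt_top) :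
      IntegrableOn (fun _ => M) (Ioc a b) volume)
    · exact ((hh_meas.mul (Real.continuous_cos.comp (continuous_const.mul continuous_id) : Continuous fun t : ℝ =>
        Real.cos (ω * t)).measurable).aestronglyMeasurable).restrict
    · refine ae_of_all _ fun t => ?_
      rw [Real.norm_eq_abs, abs_mul]
      calc |h t| * |Real.cos (ω * t)| ≤ M * 1 := by
            apply mul_le_mul (le_of_eq_of_le (abs_of_nonneg (hh_nonneg t)) (hh_le t))
              (Real.abs_cos_le_one _) (abs_nonneg _) hM_nonneg
        _ = M := mul_one M
  have hsplit : ∫ t in Ioc a b, f t * Real.cos (ω * t) =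
      (∫ t in Ioc a b, h t * Real.cos (ω * t)) + f b * ∫ t in Ioc a b, Real.cos (ω * t) := by
    rw [← integral_const_mul, ← integral_add hh_int (hcos_int.const_mul _)]
    apply setIntegral_congr_fun measurableSet_Ioc
    intro t ht
    dsimp only
    rw [hh_eq t ht]
    ring
  rw [hsplit]
  calc |(∫ t in Ioc a b, h t * Real.cos (ω * t)) + f b * ∫ t in Ioc a b, Real.cos (ω * t)|
      ≤ |∫ t in Ioc a b, h t * Real.cos (ω * t)| + |f b * ∫ t in Ioc a b, Real.cos (ω * t)| :=
        abs_add_le _ _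
    _ ≤ M * (2 / ω) + f b * (2 / ω) := by
        apply add_le_add hkey
        rw [abs_mul, abs_of_nonneg hfb]
        exact mul_le_mul_of_nonneg_left (integral_Ioc_cos_bound a b ω hω) hfb
    _ = 2 * f a / ω := by rw [hM_def]; ring

/-- reflection of an even function: integrability transfers. -/
lemma even_integrableOn_reflect {g : ℝ → ℝ} (hg : ∀ t, g (-t) = g t) {A : ℝ}
    (h : IntegrableOn g (Ico 0 A)) : IntegrableOn g (Ioc (-A) 0) := by
  have h1 : Integrable ((Ico 0 A).indicator g) :=
    (integrable_indicator_iff measurableSet_Ico).mpr h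
  have h2 := h1.comp_neg
  have h3 : (fun t => (Ico 0 A).indicator g (-t)) = (Ioc (-A) 0).indicator g := by
    funext t
    by_cases ht : t ∈ Ioc (-A) 0
    · rw [indicator_of_mem (show -t ∈ Ico 0 A by
        constructor <;> [linarith [ht.2]; linarith [ht.1]]), indicator_of_mem ht, hg]
    · rw [indicator_of_notMem (fun hmem => ht ?_), indicator_of_notMem ht]
      exact ⟨by linarith [hmem.2], by linarith [hmem.1]⟩
  rw [h3] at h2
  exact (integrable_indicator_iff measurableSet_Ioc).mp h2

lemma even_integrableOn_reflect' {g : ℝ → ℝ} (hg : ∀ t, g (-t) = g t) {A : ℝ}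
    (h : IntegrableOn g (Ioc 0 A)) : IntegrableOn g (Ioc (-A) 0) :=
  even_integrableOn_reflect hg
    (h.congr_set_ae ((Ioo_ae_eq_Ico).symm.trans Ioo_ae_eq_Ioc))

/-- reflection for `Iio 0` from `Ioi 0`. -/
lemma even_integrableOn_reflect_Iio {g : ℝ → ℝ} (hg : ∀ t, g (-t) = g t)
    (h : IntegrableOn g (Ioi 0)) : IntegrableOn g (Iio 0) := by
  have h1 : Integrable ((Ioi (0:ℝ)).indicator g) :=
    (integrable_indicator_iff measurableSet_Ioi).mpr h
  have h2 := h1.comp_neg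
  have h3 : (fun t => (Ioi (0:ℝ)).indicator g (-t)) = (Iio (0:ℝ)).indicator g := by
    funext t
    by_cases ht : t ∈ Iio (0:ℝ)
    · rw [indicator_of_mem (show -t ∈ Ioi (0:ℝ) by simpa using ht), indicator_of_mem ht, hg]
    · rw [indicator_of_notMem (fun hmem => ht (by simpa using hmem)),
        indicator_of_notMem ht]
  rw [h3] at h2
  exact (integrable_indicator_iff measurableSet_Iio).mp h2

/-- even functions: a.e. strong measurability transfers from `Ioi 0` to all of `ℝ`. -/
lemma even_aesm {g : ℝ → ℝ} (hg : ∀ t, g (-t) = g t)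
    (h : AEStronglyMeasurable g (volume.restrict (Ioi 0))) :
    AEStronglyMeasurable g (volume : Measure ℝ) := by
  have hmp : MeasurePreserving (fun t : ℝ => -t) (volume.restrict (Iio 0))
      (volume.restrict (Ioi 0)) := by
    constructor
    · exact measurable_neg
    · have h1 : Neg.neg ⁻¹' (Ioi (0:ℝ)) = Iio 0 := by ext x; simp
      have h2 := Measure.restrict_map (μ := (volume : Measure ℝ)) measurable_neg
        (measurableSet_Ioi (a := (0:ℝ)))
      rw [Measure.map_neg_eq_self, h1] at h2
      exact h2.symm
  have hIio : AEStronglyMeasurable g (volume.restrict (Iio 0)) := by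
    have := h.comp_measurePreserving hmp
    have heq : (g ∘ fun t : ℝ => -t) = g := funext fun t => hg t
    rwa [heq] at this
  have hIci : AEStronglyMeasurable g (volume.restrict (Ici 0)) := by
    rwa [← Measure.restrict_congr_set (Ioi_ae_eq_Ici (a := (0:ℝ)))]
  have hall : AEStronglyMeasurable g (volume.restrict (Iio 0 ∪ Ici 0)) :=
    aestronglyMeasurable_union_iff.mpr ⟨hIio, hIci⟩
  rwa [Iio_union_Ici, Measure.restrict_univ] at hall

lemma K_intOn (K : ℝ → ℝ) (hKloc : ∀ A > 0, IntegrableOn K (Ioc 0 A))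
    {a b : ℝ} (ha : 0 ≤ a) : IntegrableOn K (Ioc a b) := by
  rcases le_or_gt b a with h | h
  · rw [Ioc_eq_empty (not_lt.mpr h)]; exact integrableOn_empty
  · exact (hKloc b (lt_of_le_of_lt ha h)).mono_set (Ioc_subset_Ioc ha le_rfl)

lemma Kcos_intOn (K : ℝ → ℝ) (hKloc : ∀ A > 0, IntegrableOn K (Ioc 0 A))
    (ω : ℝ) {a b : ℝ} (ha : 0 ≤ a) :
    IntegrableOn (fun t => K t * Real.cos (ω * t)) (Ioc a b) := by
  have h1 : IntegrableOn K (Ioc a b) := K_intOn K hKloc ha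
  have := h1.bdd_mul (f := fun t => Real.cos (ω * t))
    ((Real.continuous_cos.comp
      (continuous_const.mul continuous_id)).aestronglyMeasurable.restrict)
    (c := 1) (ae_of_all _ fun t => by simpa [Real.norm_eq_abs] using Real.abs_cos_le_one (ω * t))
  exact this.congr (ae_of_all _ fun t => mul_comm _ _)

lemma abs_int_le_intK (K : ℝ → ℝ) (hKloc : ∀ A > 0, IntegrableOn K (Ioc 0 A))
    (hKpos : ∀ t > 0, 0 < K t) {a b ω : ℝ} (ha : 0 ≤ a) :
    |∫ t in Ioc a b, K t * Real.cos (ω * t)| ≤ ∫ t in Ioc a b, K t := by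
  calc |∫ t in Ioc a b, K t * Real.cos (ω * t)|
      ≤ ∫ t in Ioc a b, |K t| * |Real.cos (ω * t)| := by
        have := norm_integral_le_integral_norm (μ := volume.restrict (Ioc a b))
          (f := fun t => K t * Real.cos (ω * t))
        simpa [Real.norm_eq_abs, abs_mul] using this
    _ ≤ ∫ t in Ioc a b, K t := by
        apply setIntegral_mono_on (((Kcos_intOn K hKloc ω ha).abs).congr
          (ae_of_all _ fun t => abs_mul _ _)) (K_intOn K hKloc ha)
          measurableSet_Ioc
        intro t ht
        rw [abs_of_pos (hKpos t (lt_of_le_of_lt ha ht.1))]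
        calc K t * |Real.cos (ω * t)| ≤ K t * 1 :=
              mul_le_mul_of_nonneg_left (Real.abs_cos_le_one _)
                (hKpos t (lt_of_le_of_lt ha ht.1)).le
          _ = K t := mul_one _

/-- The uniform bound on partial cosine integrals. -/
lemma uniform_bound (K : ℝ → ℝ) (hKloc : ∀ A > 0, IntegrableOn K (Ioc 0 A))
    (hKpos : ∀ t > 0, 0 < K t)
    (hKdec : ∃ T > 0, AntitoneOn K (Ici T))
    (hKcase : IntegrableOn K (Ioi 0) ∨
      (∃ c₁ > 0, Tendsto (fun t => t * K t) atTop (nhds c₁)) ∨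
      (∃ α ∈ Set.Ioo (0:ℝ) 1, ∃ cα > 0,
        Tendsto (fun t => t ^ α * K t) atTop (nhds cα))) :
    ∃ C > 0, ∃ β : ℝ, β ∈ Ioo (0:ℝ) 1 ∧ ∀ ω > 0, ∀ A, 0 ≤ A →
      |∫ t in (0:ℝ)..A, K t * Real.cos (ω * t)| ≤ C * (1 + ω ^ (-β)) := by
  obtain ⟨T, hT, hanti⟩ := hKdec
  rcases hKcase with hint | hcase
  · refine ⟨(∫ t in Ioi (0:ℝ), K t) + 1, by
      have : 0 ≤ ∫ t in Ioi (0:ℝ), K t :=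
        setIntegral_nonneg measurableSet_Ioi fun t ht => (hKpos t ht).le
      linarith, 1/2, ⟨by norm_num, by norm_num⟩, ?_⟩
    intro ω hω A hA
    rw [intervalIntegral.integral_of_le hA]
    have h1 := abs_int_le_intK K hKloc hKpos (a := 0) (b := A) (ω := ω) le_rfl
    have h2 : ∫ t in Ioc 0 A, K t ≤ ∫ t in Ioi (0:ℝ), K t := by
      apply setIntegral_mono_set hint
      · exact ae_restrict_of_forall_mem measurableSet_Ioi fun t ht => (hKpos t ht).le
      · exact HasSubset.Subset.eventuallyLE Ioc_subset_Ioi_self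
    have h3 : (0:ℝ) ≤ ω ^ (-(1/2) : ℝ) := Real.rpow_nonneg hω.le _
    have h4 : 0 ≤ ∫ t in Ioi (0:ℝ), K t :=
      setIntegral_nonneg measurableSet_Ioi fun t ht => (hKpos t ht).le
    nlinarith
  · have hpow : ∃ T₁ c α : ℝ, max T 1 ≤ T₁ ∧ 0 < c ∧ 0 < α ∧ α < 1 ∧
        ∀ t ≥ T₁, K t ≤ c * t ^ (-α) := by
      rcases hcase with ⟨c₁, hc₁, hlim⟩ | ⟨α, hα, cα, hcα, hlim⟩
      · obtain ⟨T₀, hT₀⟩ :=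
          (hlim.eventually_le_const (by linarith : c₁ < 2 * c₁)).exists_forall_of_atTop
        refine ⟨max (max T 1) T₀, 2 * c₁, 1/2, le_max_left _ _, by linarith, by norm_num,
          by norm_num, ?_⟩
        intro t ht
        have ht1 : (1:ℝ) ≤ t := le_trans (le_trans (le_max_right T 1) (le_max_left _ _)) ht
        have htpos : (0:ℝ) < t := by linarith
        have h1 : t * K t ≤ 2 * c₁ := hT₀ t (le_trans (le_max_right _ _) ht)
        have h2 : K t ≤ 2 * c₁ / t := by
          rw [le_div_iff₀ htpos]; linarith [mul_comm t (K t)]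
        calc K t ≤ 2 * c₁ / t := h2
          _ = 2 * c₁ * t ^ (-(1:ℝ)) := by rw [Real.rpow_neg_one]; ring
          _ ≤ 2 * c₁ * t ^ (-(1/2):ℝ) := by
              apply mul_le_mul_of_nonneg_left
                (Real.rpow_le_rpow_of_exponent_le ht1 (by norm_num)) (by linarith)
      · obtain ⟨T₀, hT₀⟩ :=
          (hlim.eventually_le_const (by linarith : cα < 2 * cα)).exists_forall_of_atTop
        refine ⟨max (max T 1) T₀, 2 * cα, α, le_max_left _ _, by linarith, hα.1, hα.2, ?_⟩
        intro t ht
        have ht1 : (1:ℝ) ≤ t := le_trans (le_trans (le_max_right T 1) (le_max_left _ _)) ht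
        have htpos : (0:ℝ) < t := by linarith
        have hp : (0:ℝ) < t ^ α := Real.rpow_pos_of_pos htpos α
        have h1 : t ^ α * K t ≤ 2 * cα := hT₀ t (le_trans (le_max_right _ _) ht)
        have h2 : K t ≤ 2 * cα / t ^ α := by
          rw [le_div_iff₀ hp]; linarith [mul_comm (t ^ α) (K t)]
        calc K t ≤ 2 * cα / t ^ α := h2
          _ = 2 * cα * t ^ (-α) := by rw [Real.rpow_neg htpos.le]; ring
    obtain ⟨T₁, c, α, hTT₁, hc, hα0, hα1, hKle⟩ := hpow
    have hT₁1 : (1:ℝ) ≤ T₁ := le_trans (le_max_right T 1) hTT₁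
    have hT₁pos : (0:ℝ) < T₁ := by linarith
    have hTT : T ≤ T₁ := le_trans (le_max_left T 1) hTT₁
    have hβ0 : 0 < 1 - α := by linarith
    have hC₀0 : 0 ≤ ∫ t in Ioc (0:ℝ) T₁, K t :=
      setIntegral_nonneg measurableSet_Ioc fun t ht => (hKpos t ht.1).le
    set C₀ := ∫ t in Ioc (0:ℝ) T₁, K t with hC₀
    have hq : 0 < c / (1 - α) := div_pos hc hβ0
    have hT₁β : (1:ℝ) ≤ T₁ ^ (1 - α) := Real.one_le_rpow hT₁1 hβ0.le
    refine ⟨C₀ + c / (1 - α) * (T₁ ^ (1 - α) + 1) + 2 * c + 1, by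
        nlinarith [mul_nonneg hq.le (by linarith : (0:ℝ) ≤ T₁ ^ (1 - α) + 1)],
      1 - α, ⟨hβ0, by linarith⟩, ?_⟩
    intro ω hω A hA
    set B := max T₁ (1/ω) with hB
    have hT₁B : T₁ ≤ B := le_max_left _ _
    have hB1 : (1:ℝ) ≤ B := le_trans hT₁1 hT₁B
    have hBpos : (0:ℝ) < B := by linarith
    have hωB : 1/ω ≤ B := le_max_right _ _
    have hx : (0:ℝ) ≤ ω ^ (-(1 - α)) := Real.rpow_nonneg hω.le _
    have hT₁β0 : (0:ℝ) ≤ T₁ ^ (1 - α) := Real.rpow_nonneg hT₁pos.le _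
    have hintT₁B : IntegrableOn (fun t => c * t ^ (-α)) (Ioc T₁ B) := by
      have h := (intervalIntegral.intervalIntegrable_rpow'
        (a := T₁) (b := B) (r := -α) (by linarith)).const_mul c
      rwa [intervalIntegrable_iff, uIoc_of_le hT₁B] at h
    have bound1 : ∫ t in Ioc (0:ℝ) B, K t ≤
        C₀ + c / (1 - α) * (T₁ ^ (1 - α) + ω ^ (-(1 - α))) := by
      have hsplit : ∫ t in Ioc (0:ℝ) B, K t = C₀ + ∫ t in Ioc T₁ B, K t := by
        rw [hC₀, ← setIntegral_union (Set.Ioc_disjoint_Ioc_of_le le_rfl) measurableSet_Ioc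
          (K_intOn K hKloc le_rfl) (K_intOn K hKloc hT₁pos.le),
          Ioc_union_Ioc_eq_Ioc hT₁pos.le hT₁B]
      have h2 : ∫ t in Ioc T₁ B, K t ≤ ∫ t in Ioc T₁ B, c * t ^ (-α) :=
        setIntegral_mono_on (K_intOn K hKloc hT₁pos.le) hintT₁B measurableSet_Ioc
          (fun t ht => hKle t ht.1.le)
      have h3 : ∫ t in Ioc T₁ B, c * t ^ (-α) =
          c * ((B ^ (1 - α) - T₁ ^ (1 - α)) / (1 - α)) := by
        rw [← intervalIntegral.integral_of_le hT₁B, intervalIntegral.integral_const_mul,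
          integral_rpow (Or.inl (by linarith))]
        rw [show -α + 1 = 1 - α by ring]
      have hBβ : B ^ (1 - α) - T₁ ^ (1 - α) ≤ ω ^ (-(1 - α)) := by
        rcases max_cases T₁ (1/ω) with ⟨hBe, _⟩ | ⟨hBe, _⟩
        · rw [hB, hBe]; linarith
        · have he : (1/ω) ^ (1 - α) = ω ^ (-(1 - α)) := by
            rw [one_div, Real.rpow_neg hω.le, Real.inv_rpow hω.le]
          rw [hB, hBe, he]; linarith
      have h4 : c * ((B ^ (1 - α) - T₁ ^ (1 - α)) / (1 - α)) ≤
          c / (1 - α) * ω ^ (-(1 - α)) := by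
        rw [mul_div_assoc', div_mul_eq_mul_div, div_le_div_iff_of_pos_right hβ0]
        exact mul_le_mul_of_nonneg_left hBβ hc.le
      rw [hsplit]
      nlinarith [mul_nonneg hq.le hT₁β0]
    rcases le_or_gt A B with hAB | hAB
    · rw [intervalIntegral.integral_of_le hA]
      have h1 := abs_int_le_intK K hKloc hKpos (a := 0) (b := A) (ω := ω) le_rfl
      have h2 : ∫ t in Ioc (0:ℝ) A, K t ≤ ∫ t in Ioc (0:ℝ) B, K t :=
        setIntegral_mono_set (K_intOn K hKloc le_rfl)
          (ae_restrict_of_forall_mem measurableSet_Ioc fun t ht => (hKpos t ht.1).le)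
          (HasSubset.Subset.eventuallyLE (Ioc_subset_Ioc le_rfl hAB))
      nlinarith [mul_nonneg hq.le hx, mul_nonneg hC₀0 hx, mul_nonneg hq.le hT₁β0,
        mul_nonneg (mul_nonneg hq.le hT₁β0) hx, mul_nonneg hc.le hx]
    · have hII1 : IntervalIntegrable (fun t => K t * Real.cos (ω * t)) volume 0 B := by
        rw [intervalIntegrable_iff, uIoc_of_le hBpos.le]
        exact Kcos_intOn K hKloc ω le_rfl
      have hII2 : IntervalIntegrable (fun t => K t * Real.cos (ω * t)) volume B A := by
        rw [intervalIntegrable_iff, uIoc_of_le hAB.le]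
        exact Kcos_intOn K hKloc ω hBpos.le
      have hsplit2 : ∫ t in (0:ℝ)..A, K t * Real.cos (ω * t) =
          (∫ t in (0:ℝ)..B, K t * Real.cos (ω * t)) +
            ∫ t in B..A, K t * Real.cos (ω * t) :=
        (intervalIntegral.integral_add_adjacent_intervals hII1 hII2).symm
      have hb1 : |∫ t in (0:ℝ)..B, K t * Real.cos (ω * t)| ≤ ∫ t in Ioc (0:ℝ) B, K t := by
        rw [intervalIntegral.integral_of_le hBpos.le]
        exact abs_int_le_intK K hKloc hKpos le_rfl
      have hb2 : |∫ t in B..A, K t * Real.cos (ω * t)| ≤ 2 * (c * B ^ (-α)) / ω := by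
        rw [intervalIntegral.integral_of_le hAB.le]
        have hsubset : Icc B A ⊆ Ici T := fun x hx =>
          le_trans (le_trans hTT hT₁B) hx.1
        have h := osc_bound K B A ω hAB.le hω (hanti.mono hsubset)
          (hKpos A (by linarith)).le
        refine h.trans ?_
        gcongr
        exact hKle B hT₁B
      have hb2' : 2 * (c * B ^ (-α)) / ω ≤ 2 * c * ω ^ (-(1 - α)) := by
        have h5 : B ^ (-α) ≤ (1/ω) ^ (-α) :=
          Real.rpow_le_rpow_of_nonpos (by positivity) hωB (by linarith)
        have h6 : (1/ω) ^ (-α) = ω ^ α := by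
          rw [one_div, Real.rpow_neg (inv_nonneg.mpr hω.le), Real.inv_rpow hω.le, inv_inv]
        have h7 : ω ^ α / ω = ω ^ (-(1 - α)) := by
          rw [show -(1 - α) = α - 1 by ring, Real.rpow_sub hω, Real.rpow_one]
        calc 2 * (c * B ^ (-α)) / ω ≤ 2 * (c * ω ^ α) / ω := by
              gcongr
              rw [← h6]; exact h5
          _ = 2 * c * (ω ^ α / ω) := by ring
          _ = 2 * c * ω ^ (-(1 - α)) := by rw [h7]
      calc |∫ t in (0:ℝ)..A, K t * Real.cos (ω * t)|
          ≤ |∫ t in (0:ℝ)..B, K t * Real.cos (ω * t)| +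
            |∫ t in B..A, K t * Real.cos (ω * t)| := by rw [hsplit2]; exact abs_add_le _ _
        _ ≤ (C₀ + c / (1 - α) * (T₁ ^ (1 - α) + ω ^ (-(1 - α)))) +
            2 * c * ω ^ (-(1 - α)) :=
            add_le_add (hb1.trans bound1) (hb2.trans hb2')
        _ ≤ (C₀ + c / (1 - α) * (T₁ ^ (1 - α) + 1) + 2 * c + 1) * (1 + ω ^ (-(1 - α))) := by
            nlinarith [mul_nonneg hq.le hx, mul_nonneg hC₀0 hx, mul_nonneg hq.le hT₁β0,
              mul_nonneg (mul_nonneg hq.le hT₁β0) hx, mul_nonneg hc.le hx]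
set_option maxHeartbeats 1600000 in
/-- The Fourier transform of the even memory kernel `K` in the sense of
tempered distributions is the locally integrable function `2𝒦cos`:
for every Schwartz function `φ`, `∫ K(|t|) φ̂(t) dt = 2 ∫ 𝒦cos(|ω|) φ(ω) dω`. -/
theorem kernel_distributional_fourier_transform
    (K : ℝ → ℝ) (hKeven : ∀ t, K (-t) = K t)
    (hKloc : ∀ A > 0, IntegrableOn K (Ioc 0 A))
    (hKpos : ∀ t > 0, 0 < K t)
    (hKdec : ∃ T > 0, AntitoneOn K (Ici T))
    (hK0 : Tendsto K atTop (nhds 0))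
    (hKcase : IntegrableOn K (Ioi 0) ∨
      (∃ c₁ > 0, Tendsto (fun t => t * K t) atTop (nhds c₁)) ∨
      (∃ α ∈ Set.Ioo (0:ℝ) 1, ∃ cα > 0,
        Tendsto (fun t => t ^ α * K t) atTop (nhds cα)))
    (Kcos : ℝ → ℝ)
    (hKcos : ∀ ω > 0, Tendsto (fun A => ∫ t in (0:ℝ)..A, K t * Real.cos (ω * t))
      atTop (nhds (Kcos ω))) :
    ∀ φ : SchwartzMap ℝ ℂ,
      ∫ t : ℝ, (K |t| : ℂ) *
          (∫ s : ℝ, φ s * Complex.exp (-(Complex.I * (s : ℂ) * (t : ℂ)))) =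
        2 * ∫ ω : ℝ, (Kcos |ω| : ℂ) * φ ω := by
  intro φ
  classical
  obtain ⟨T, hT, hanti⟩ := hKdec
  set g : ℝ → ℝ := fun t => K |t| with hg_def
  have hg_even : ∀ t, g (-t) = g t := fun t => by simp only [hg_def, abs_neg]
  have h0ae : ∀ᵐ ω : ℝ, ω ≠ 0 := by
    rw [ae_iff]
    have h : {ω : ℝ | ¬ω ≠ 0} = {0} := by ext x; simp
    rw [h]
    exact measure_singleton 0
  -- measurability of g
  have hKaesm_Ioi : AEStronglyMeasurable K (volume.restrict (Ioi 0)) := by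
    have hU : Ioi (0:ℝ) = ⋃ n : ℕ, Ioc (0:ℝ) (n+1) := by
      ext x
      simp only [mem_Ioi, mem_iUnion, mem_Ioc]
      constructor
      · intro hx
        obtain ⟨n, hn⟩ := exists_nat_ge x
        exact ⟨n, hx, by linarith⟩
      · rintro ⟨n, h1, _⟩; exact h1
    rw [hU]
    exact aestronglyMeasurable_iUnion_iff.mpr fun n =>
      (hKloc (n+1) (by positivity)).aestronglyMeasurable
  have hgaesm : AEStronglyMeasurable g volume := by
    apply even_aesm hg_even
    apply hKaesm_Ioi.congr
    exact ae_restrict_of_forall_mem measurableSet_Ioi fun t ht => by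
      rw [hg_def]; simp only; rw [abs_of_pos ht]
  have hgC : AEStronglyMeasurable (fun t => (g t : ℂ)) volume :=
    Complex.continuous_ofReal.comp_aestronglyMeasurable hgaesm
  -- integrability of truncations of g
  have hKabsInt : ∀ A : ℝ, 0 ≤ A → IntegrableOn g (Ioc (-A) A) := by
    intro A hA
    have h1 : IntegrableOn g (Ioc 0 A) :=
      (K_intOn K hKloc le_rfl).congr_fun
        (fun x hx => by rw [hg_def]; simp only; rw [abs_of_pos hx.1]) measurableSet_Ioc
    have h2 : IntegrableOn g (Ioc (-A) 0) := even_integrableOn_reflect' hg_even h1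
    rw [show Ioc (-A) A = Ioc (-A) 0 ∪ Ioc 0 A from
      (Ioc_union_Ioc_eq_Ioc (by linarith) hA).symm]
    exact h2.union h1
  -- the Fourier transform of φ
  set ψ := SchwartzMap.fourierTransformCLM ℂ φ with hψ_def
  have hψcoe : ⇑ψ = FourierTransform.fourier ⇑φ := SchwartzMap.fourier_coe φ
  have hπ : (0:ℝ) < 2 * Real.pi := by positivity
  set FF : ℝ → ℂ := fun t => ∫ s : ℝ, φ s * Complex.exp (-(Complex.I * (s : ℂ) * (t : ℂ)))
    with hFF_def
  have hFeq : ∀ t : ℝ, FF t = ψ (t / (2 * Real.pi)) := by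
    intro t
    have h2 : ψ (t / (2 * Real.pi)) =
        ∫ s : ℝ, Real.fourierChar (-(s * (t / (2 * Real.pi)))) • φ s := by
      rw [hψcoe]; exact Real.fourier_real_eq _ _
    rw [h2]
    show (∫ s : ℝ, φ s * Complex.exp (-(Complex.I * (s : ℂ) * (t : ℂ)))) =
      ∫ s : ℝ, Real.fourierChar (-(s * (t / (2 * Real.pi)))) • φ s
    congr 1
    funext s
    rw [Circle.smul_def, Real.fourierChar_apply, smul_eq_mul]
    have harg : 2 * Real.pi * -(s * (t / (2 * Real.pi))) = -(s*t) := by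
      have h3 : (2 * Real.pi) * (2 * Real.pi)⁻¹ = 1 := mul_inv_cancel₀ (ne_of_gt hπ)
      rw [div_eq_mul_inv]
      linear_combination (-(s*t)) * h3
    rw [harg]
    have harg2 : ((-(s*t) : ℝ) : ℂ) * Complex.I = -(Complex.I * s * t) := by push_cast; ring
    rw [harg2, mul_comm]
  have hFF : FF = fun t => ψ (t / (2 * Real.pi)) := funext hFeq
  -- decay of ψ
  obtain ⟨C0, hC0pos, hC0⟩ := ψ.decay 0 0
  obtain ⟨C2, hC2pos, hC2⟩ := ψ.decay 2 0
  set D := (C0 + C2) * (2*Real.pi)^2 with hD_def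
  have hψb : ∀ x : ℝ, ‖ψ x‖ ≤ (C0 + C2) / (1 + x^2) := by
    intro x
    have h0 := hC0 x; have h2 := hC2 x
    rw [norm_iteratedFDeriv_zero] at h0 h2
    simp only [pow_zero, one_mul] at h0
    rw [Real.norm_eq_abs] at h2
    rw [le_div_iff₀ (by positivity)]
    nlinarith [sq_abs x, norm_nonneg (ψ x)]
  have hFb : ∀ t : ℝ, ‖ψ (t / (2*Real.pi))‖ ≤ D / (1 + t^2) := by
    intro t
    refine (hψb _).trans ?_
    rw [div_le_div_iff₀ (by positivity) (by positivity), hD_def]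
    have hπ1 : (1:ℝ) ≤ (2*Real.pi)^2 := by nlinarith [Real.pi_gt_three]
    have key : (t/(2*Real.pi))^2 * (2*Real.pi)^2 = t^2 := by field_simp
    nlinarith [sq_nonneg t, sq_nonneg (t/(2*Real.pi)), hC0pos.le, hC2pos.le]
  -- majorant integrability
  have hmajor : Integrable (fun t : ℝ => g t / (1 + t ^ 2)) := by
    have heven : ∀ t : ℝ, g (-t) / (1 + (-t) ^ 2) = g t / (1 + t ^ 2) := fun t => by
      rw [hg_even, neg_sq]
    have haesm2 : AEStronglyMeasurable (fun t : ℝ => g t / (1 + t ^ 2)) volume := by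
      have hc : Continuous fun t : ℝ => (1 + t ^ 2)⁻¹ :=
        (continuous_const.add (continuous_pow 2)).inv₀ (fun x => (by positivity : (1:ℝ) + x ^ 2 ≠ 0))
      exact (hgaesm.mul hc.aestronglyMeasurable).congr
        (ae_of_all _ fun t => (div_eq_mul_inv _ _).symm)
    have hIoiT : IntegrableOn (fun t : ℝ => g t / (1 + t ^ 2)) (Ioi T) := by
      apply Integrable.mono'
        (((integrable_inv_one_add_sq).const_mul (K T)).integrableOn (s := Ioi T))
      · exact haesm2.restrict
      · apply ae_restrict_of_forall_mem measurableSet_Ioi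
        intro t ht
        have htpos : 0 < t := lt_trans hT ht
        have hKt : K t ≤ K T := hanti (self_mem_Ici) (le_of_lt (show T < t from ht)) (le_of_lt (show T < t from ht))
        have hgt : g t = K t := by rw [hg_def]; simp only; rw [abs_of_pos htpos]
        rw [Real.norm_eq_abs, abs_div, hgt, abs_of_pos (hKpos t htpos),
          abs_of_pos (by positivity : (0:ℝ) < 1 + t^2)]
        rw [show K T * (1 + t^2)⁻¹ = K T / (1 + t^2) by ring]
        gcongr
    have hIocT : IntegrableOn (fun t : ℝ => g t / (1 + t ^ 2)) (Ioc 0 T) := by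
      apply Integrable.mono' (K_intOn K hKloc (le_rfl) (b := T))
      · exact haesm2.restrict
      · apply ae_restrict_of_forall_mem measurableSet_Ioc
        intro t ht
        have hgt : g t = K t := by rw [hg_def]; simp only; rw [abs_of_pos ht.1]
        rw [Real.norm_eq_abs, abs_div, hgt, abs_of_pos (hKpos t ht.1),
          abs_of_pos (by positivity : (0:ℝ) < 1 + t^2)]
        exact div_le_self (hKpos t ht.1).le (by nlinarith [sq_nonneg t])
    have hIoi : IntegrableOn (fun t : ℝ => g t / (1 + t ^ 2)) (Ioi 0) := by
      rw [← Ioc_union_Ioi_eq_Ioi hT.le]; exact hIocT.union hIoiT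
    have hIio : IntegrableOn (fun t : ℝ => g t / (1 + t ^ 2)) (Iio 0) :=
      even_integrableOn_reflect_Iio heven hIoi
    have hIci : IntegrableOn (fun t : ℝ => g t / (1 + t ^ 2)) (Ici 0) :=
      hIoi.congr_set_ae (Ioi_ae_eq_Ici (a := (0:ℝ))).symm
    rw [← integrableOn_univ, ← Iio_union_Ici (a := (0:ℝ))]
    exact hIio.union hIci
  -- integrability of the full integrand
  have hInt : Integrable (fun t : ℝ => (K |t| : ℂ) * FF t) := by
    apply Integrable.mono' (hmajor.const_mul D)
    · exact hgC.mul (by rw [hFF]; exact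
        (ψ.continuous.comp (continuous_id.div_const _)).aestronglyMeasurable)
    · filter_upwards [h0ae] with t ht
      have hgpos : 0 < g t := hKpos |t| (abs_pos.mpr ht)
      rw [norm_mul, Complex.norm_real, Real.norm_eq_abs]
      have h1 : ‖FF t‖ ≤ D / (1 + t^2) := by rw [hFeq t]; exact hFb t
      calc |g t| * ‖FF t‖ ≤ g t * (D / (1 + t^2)) := by
            rw [abs_of_pos hgpos]; exact mul_le_mul_of_nonneg_left h1 hgpos.le
        _ = D * (g t / (1 + t^2)) := by ring
  -- the per-truncation Fubini identity
  have hfub : ∀ A : ℝ, 0 ≤ A →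
      (∫ t in Ioc (-A) A, (K |t| : ℂ) * FF t) =
      ∫ ω : ℝ, 2 * ((↑(∫ t in (0:ℝ)..A, K t * Real.cos (|ω| * t)) : ℂ) * φ ω) := by
    intro A hA
    have hKA : IntegrableOn (fun t => (g t : ℂ)) (Ioc (-A) A) := (hKabsInt A hA).ofReal
    have hphase_norm : ∀ (s t : ℝ), ‖Complex.exp (-(Complex.I * s * t))‖ = 1 := by
      intro s t
      rw [show -(Complex.I * (s:ℂ) * (t:ℂ)) = ((-(s*t) : ℝ) : ℂ) * Complex.I by
        push_cast; ring, Complex.norm_exp_ofReal_mul_I]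
    have hprod : Integrable (fun p : ℝ × ℝ => (g p.1 : ℂ) * φ p.2)
        ((volume.restrict (Ioc (-A) A)).prod volume) :=
      Integrable.mul_prod hKA φ.integrable
    have hF_int : Integrable (fun p : ℝ × ℝ => (g p.1 : ℂ) *
        (φ p.2 * Complex.exp (-(Complex.I * p.2 * p.1))))
        ((volume.restrict (Ioc (-A) A)).prod volume) := by
      apply (hprod.norm).mono'
      · exact (hKA.aestronglyMeasurable.comp_fst).mul
          (((φ.continuous.comp continuous_snd).aestronglyMeasurable).mul
            (Continuous.aestronglyMeasurable (by fun_prop)))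
      · refine ae_of_all _ fun p => ?_
        simp only [norm_mul, hphase_norm, mul_one, le_refl]
    have hswap := MeasureTheory.integral_integral_swap
      (f := fun t s => (g t : ℂ) * (φ s * Complex.exp (-(Complex.I * s * t)))) hF_int
    have hL : (∫ t in Ioc (-A) A, (K |t| : ℂ) * FF t) =
        ∫ t in Ioc (-A) A, ∫ s : ℝ, (g t : ℂ) *
          (φ s * Complex.exp (-(Complex.I * s * t))) := by
      refine setIntegral_congr_fun measurableSet_Ioc fun t _ => ?_
      rw [integral_const_mul]
    have hKe_int : ∀ s : ℝ, IntegrableOn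
        (fun t => (g t : ℂ) * Complex.exp (-(Complex.I * s * t))) (Ioc (-A) A) := by
      intro s
      have h := hKA.bdd_mul (f := fun t : ℝ => Complex.exp (-(Complex.I * s * t)))
        (Continuous.aestronglyMeasurable (by fun_prop)).restrict
        (c := 1) (ae_of_all _ fun t => le_of_eq (hphase_norm s t))
      exact h.congr (ae_of_all _ fun t => mul_comm _ _)
    have hinner : ∀ s : ℝ,
        (∫ t in Ioc (-A) A, (g t : ℂ) * (φ s * Complex.exp (-(Complex.I * s * t)))) =
        2 * ((↑(∫ t in (0:ℝ)..A, K t * Real.cos (|s| * t)) : ℂ) * φ s) := by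
      intro s
      have h1 : (∫ t in Ioc (-A) A, (g t : ℂ) * (φ s * Complex.exp (-(Complex.I * s * t)))) =
          φ s * ∫ t in Ioc (-A) A, (g t : ℂ) * Complex.exp (-(Complex.I * s * t)) := by
        rw [← integral_const_mul]
        exact setIntegral_congr_fun measurableSet_Ioc fun t _ => by ring
      rw [h1]
      have hIIl : IntervalIntegrable
          (fun t => (g t : ℂ) * Complex.exp (-(Complex.I * s * t))) volume (-A) 0 := by
        rw [intervalIntegrable_iff, uIoc_of_le (by linarith : -A ≤ 0)]
        exact (hKe_int s).mono_set (Ioc_subset_Ioc le_rfl hA)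
      have hIIr : IntervalIntegrable
          (fun t => (g t : ℂ) * Complex.exp (-(Complex.I * s * t))) volume 0 A := by
        rw [intervalIntegrable_iff, uIoc_of_le hA]
        exact (hKe_int s).mono_set (Ioc_subset_Ioc (by linarith) le_rfl)
      have hII_neg : IntervalIntegrable
          (fun t => (g (-t) : ℂ) * Complex.exp (-(Complex.I * s * ((-t : ℝ) : ℂ))))
          volume 0 A := by
        have h := (IntervalIntegrable.iff_comp_neg).mp hIIl
        simp only [neg_neg, neg_zero] at h
        exact h.symm
      have hrefl := intervalIntegral.integral_comp_neg (a := (0:ℝ)) (b := A)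
        (fun t => (g t : ℂ) * Complex.exp (-(Complex.I * s * t)))
      rw [neg_zero] at hrefl
      have hsp : (∫ t in Ioc (-A) A, (g t : ℂ) * Complex.exp (-(Complex.I * s * t))) =
          (∫ t in (0:ℝ)..A, (g (-t) : ℂ) * Complex.exp (-(Complex.I * s * ((-t : ℝ) : ℂ)))) +
          ∫ t in (0:ℝ)..A, (g t : ℂ) * Complex.exp (-(Complex.I * s * t)) := by
        rw [← intervalIntegral.integral_of_le (by linarith : -A ≤ A),
          ← intervalIntegral.integral_add_adjacent_intervals hIIl hIIr, hrefl]
      have hcomb : (∫ t in (0:ℝ)..A,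
            (g (-t) : ℂ) * Complex.exp (-(Complex.I * s * ((-t : ℝ) : ℂ)))) +
          (∫ t in (0:ℝ)..A, (g t : ℂ) * Complex.exp (-(Complex.I * s * t))) =
          ∫ t in (0:ℝ)..A, ((2 * (K t * Real.cos (|s| * t)) : ℝ) : ℂ) := by
        rw [← intervalIntegral.integral_add hII_neg hIIr]
        apply intervalIntegral.integral_congr
        intro t ht
        rw [uIcc_of_le hA] at ht
        have hgt : g (-t) = K t ∧ g t = K t := by
          constructor <;> (rw [hg_def]; simp only [abs_neg]; rw [abs_of_nonneg ht.1])
        have hcos : Real.cos (|s| * t) = Real.cos (s * t) := by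
          rcases abs_cases s with ⟨h,_⟩ | ⟨h,_⟩
          · rw [h]
          · rw [h, show -s*t = -(s*t) by ring, Real.cos_neg]
        have e1 : -(Complex.I * (s:ℂ) * ((-t : ℝ) : ℂ)) = (((s*t) : ℝ) : ℂ) * Complex.I := by
          push_cast; ring
        have e2 : -(Complex.I * (s:ℂ) * (t:ℂ)) = -(((s*t) : ℝ) : ℂ) * Complex.I := by
          push_cast; ring
        simp only [hgt.1, hgt.2, e1, e2, hcos]
        push_cast [Complex.ofReal_cos]
        linear_combination (-((K t : ℝ) : ℂ)) * Complex.two_cos (x := ((s:ℂ) * (t:ℂ)))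
      have hlast : (∫ t in (0:ℝ)..A, ((2 * (K t * Real.cos (|s| * t)) : ℝ) : ℂ)) =
          2 * (↑(∫ t in (0:ℝ)..A, K t * Real.cos (|s| * t)) : ℂ) := by
        rw [intervalIntegral.integral_ofReal, intervalIntegral.integral_const_mul]
        push_cast
        ring
      rw [hsp, hcomb, hlast]
      ring
    rw [hL, hswap]
    exact integral_congr_ae (ae_of_all _ fun s => hinner s)
  -- limit of left-hand sides
  have hmono : Monotone (fun n : ℕ => Ioc (-(n:ℝ)) (n:ℝ)) := fun m n hmn =>
    Ioc_subset_Ioc (neg_le_neg (Nat.cast_le.mpr hmn)) (Nat.cast_le.mpr hmn)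
  have hunion : (⋃ n : ℕ, Ioc (-(n:ℝ)) (n:ℝ)) = univ := by
    ext x
    simp only [mem_iUnion, mem_Ioc, mem_univ, iff_true]
    obtain ⟨n, hn⟩ := exists_nat_gt |x|
    have h := abs_lt.mp hn
    exact ⟨n, h.1, h.2.le⟩
  have hLHS : Tendsto (fun n : ℕ => ∫ t in Ioc (-(n:ℝ)) (n:ℝ), (K |t| : ℂ) * FF t) atTop
      (nhds (∫ t : ℝ, (K |t| : ℂ) * FF t)) := by
    have h := tendsto_setIntegral_of_monotone (fun n : ℕ => measurableSet_Ioc) hmono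
      (by rw [hunion]; exact hInt.integrableOn)
    rwa [hunion, setIntegral_univ] at h
  -- DCT for the right-hand sides
  obtain ⟨C, hCpos, β, hβmem, hbound⟩ := uniform_bound K hKloc hKpos ⟨T, hT, hanti⟩ hKcase
  obtain ⟨Mφ, hMφpos, hMφ0⟩ := φ.decay 0 0
  have hMφ : ∀ x : ℝ, ‖φ x‖ ≤ Mφ := fun x => by
    have := hMφ0 x
    simpa [norm_iteratedFDeriv_zero] using this
  set bfun : ℝ → ℝ := fun ω => 2 * C * ‖φ ω‖ + 2 * C * (|ω| ^ (-β) * ‖φ ω‖) with hbfun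
  have hb_int : Integrable bfun := by
    apply Integrable.add
    · exact (φ.integrable.norm).const_mul _
    · apply Integrable.const_mul
      have hmeas : AEStronglyMeasurable (fun ω : ℝ => |ω| ^ (-β) * ‖φ ω‖) volume :=
        (Measurable.aestronglyMeasurable (by fun_prop)).mul
          φ.continuous.norm.aestronglyMeasurable
      have hrint : IntegrableOn (fun ω : ℝ => |ω| ^ (-β)) (Ioc (-1:ℝ) 1) := by
        have h1 : IntegrableOn (fun ω : ℝ => ω ^ (-β)) (Ioc (0:ℝ) 1) := by
          have h := intervalIntegral.intervalIntegrable_rpow' (a := (0:ℝ)) (b := 1)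
            (r := -β) (by linarith [hβmem.2])
          rwa [intervalIntegrable_iff, uIoc_of_le zero_le_one] at h
        have h2 : IntegrableOn (fun ω : ℝ => |ω| ^ (-β)) (Ioc (0:ℝ) 1) :=
          h1.congr_fun (fun x hx => by rw [abs_of_pos hx.1]) measurableSet_Ioc
        have h3 : IntegrableOn (fun ω : ℝ => |ω| ^ (-β)) (Ioc (-1:ℝ) 0) :=
          even_integrableOn_reflect' (fun t => by rw [abs_neg]) h2
        rw [show Ioc (-1:ℝ) 1 = Ioc (-1:ℝ) 0 ∪ Ioc 0 1 from
          (Ioc_union_Ioc_eq_Ioc (by norm_num) zero_le_one).symm]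
        exact h3.union h2
      apply Integrable.mono'
        (g := fun ω => Mφ * (Ioc (-1:ℝ) 1).indicator (fun ω => |ω| ^ (-β)) ω + ‖φ ω‖)
      · exact Integrable.add
          (((integrable_indicator_iff measurableSet_Ioc).mpr hrint).const_mul Mφ)
          φ.integrable.norm
      · exact hmeas
      · refine ae_of_all _ fun ω => ?_
        rw [Real.norm_eq_abs, abs_mul, abs_of_nonneg (Real.rpow_nonneg (abs_nonneg ω) _),
          abs_of_nonneg (norm_nonneg _)]
        by_cases hω : ω ∈ Ioc (-1:ℝ) 1
        · rw [indicator_of_mem hω]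
          nlinarith [Real.rpow_nonneg (abs_nonneg ω) (-β), norm_nonneg (φ ω),
            mul_le_mul_of_nonneg_left (hMφ ω) (Real.rpow_nonneg (abs_nonneg ω) (-β))]
        · rw [indicator_of_notMem hω, mul_zero, zero_add]
          have h1 : (1:ℝ) ≤ |ω| := by
            by_contra h
            push_neg at h
            have h2 := abs_lt.mp h
            exact hω ⟨h2.1, h2.2.le⟩
          have h2 : |ω| ^ (-β) ≤ 1 :=
            Real.rpow_le_one_of_one_le_of_nonpos h1 (by linarith [hβmem.1])
          nlinarith [norm_nonneg (φ ω)]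
  have hGn_cont : ∀ n : ℕ, Continuous fun ω : ℝ =>
      ∫ t in Ioc (0:ℝ) (n:ℝ), K t * Real.cos (ω * t) := by
    intro n
    apply continuous_of_dominated (bound := fun t => |K t|)
    · intro ω
      exact ((K_intOn K hKloc le_rfl (b := (n:ℝ))).aestronglyMeasurable).mul
        (Continuous.aestronglyMeasurable (by fun_prop))
    · intro ω
      refine ae_of_all _ fun t => ?_
      rw [Real.norm_eq_abs, abs_mul]
      calc |K t| * |Real.cos (ω * t)| ≤ |K t| * 1 :=
            mul_le_mul_of_nonneg_left (Real.abs_cos_le_one _) (abs_nonneg _)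
        _ = |K t| := mul_one _
    · exact (K_intOn K hKloc le_rfl (b := (n:ℝ))).abs
    · refine ae_of_all _ fun t => ?_
      fun_prop
  have hFn_aesm : ∀ n : ℕ, AEStronglyMeasurable (fun ω : ℝ =>
      2 * ((↑(∫ t in (0:ℝ)..(n:ℝ), K t * Real.cos (|ω| * t)) : ℂ) * φ ω)) volume := by
    intro n
    have h1 : Continuous fun ω : ℝ => ∫ t in (0:ℝ)..(n:ℝ), K t * Real.cos (|ω| * t) := by
      have h := (hGn_cont n).comp continuous_abs
      have he : (fun ω : ℝ => ∫ t in (0:ℝ)..(n:ℝ), K t * Real.cos (|ω| * t)) =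
          fun ω : ℝ => ∫ t in Ioc (0:ℝ) (n:ℝ), K t * Real.cos (|ω| * t) := by
        funext ω; rw [intervalIntegral.integral_of_le (Nat.cast_nonneg n)]
      rw [he]; exact h
    exact (continuous_const.mul
      ((Complex.continuous_ofReal.comp h1).mul φ.continuous)).aestronglyMeasurable
  have h_b : ∀ n : ℕ, ∀ᵐ ω : ℝ,
      ‖2 * ((↑(∫ t in (0:ℝ)..(n:ℝ), K t * Real.cos (|ω| * t)) : ℂ) * φ ω)‖ ≤ bfun ω := by
    intro n
    filter_upwards [h0ae] with ω hω
    have h1 := hbound |ω| (abs_pos.mpr hω) (n:ℝ) (Nat.cast_nonneg n)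
    rw [norm_mul, norm_mul, Complex.norm_real, Real.norm_eq_abs]
    have h2 : ‖(2:ℂ)‖ = 2 := by norm_num
    rw [h2]
    calc 2 * (|∫ t in (0:ℝ)..(n:ℝ), K t * Real.cos (|ω| * t)| * ‖φ ω‖)
        ≤ 2 * ((C * (1 + |ω| ^ (-β))) * ‖φ ω‖) := by
          apply mul_le_mul_of_nonneg_left
            (mul_le_mul_of_nonneg_right h1 (norm_nonneg _)) (by norm_num)
      _ = bfun ω := by rw [hbfun]; ring
  have h_lim : ∀ᵐ ω : ℝ, Tendsto (fun n : ℕ =>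
      2 * ((↑(∫ t in (0:ℝ)..(n:ℝ), K t * Real.cos (|ω| * t)) : ℂ) * φ ω)) atTop
      (nhds (2 * ((Kcos |ω| : ℂ) * φ ω))) := by
    filter_upwards [h0ae] with ω hω
    have h1 := (hKcos |ω| (abs_pos.mpr hω)).comp (tendsto_natCast_atTop_atTop (R := ℝ))
    exact ((h1.ofReal.mul_const (φ ω)).const_mul 2)
  have hRHS := tendsto_integral_of_dominated_convergence bfun hFn_aesm hb_int h_b h_lim
  rw [show (fun n : ℕ => ∫ t in Ioc (-(n:ℝ)) (n:ℝ), (K |t| : ℂ) * FF t) =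
    (fun n : ℕ => ∫ ω : ℝ,
      2 * ((↑(∫ t in (0:ℝ)..(n:ℝ), K t * Real.cos (|ω| * t)) : ℂ) * φ ω)) from
    funext fun n => hfub (n:ℝ) (Nat.cast_nonneg n)] at hLHS
  have hmain := tendsto_nhds_unique hLHS hRHS
  rw [hmain]
  exact integral_const_mul 2 _
end

section
/- Let K : (0,∞) → ℝ be locally integrable, positive, eventually decreasing, and suppose t·K(t) → c₁ for some c₁ ∈ (0,∞) as t → ∞ (in particular K(t) → 0). Let 𝒦cos, 𝒦sin : (0,∞) → ℝ satisfy ∫₀^A K(t)cos(ωt)dt → 𝒦cos(ω) and ∫₀^A K(t)sin(ωt)dt → 𝒦sin(ω) as A → ∞ for every ω > 0. Then, as ω → 0⁺, 𝒦cos(ω)/|log ω| → c₁ and 𝒦sin(ω) → c₁·π/2. -/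
open MeasureTheory Filter Set Real Topology

lemma auxAbsSinNonneg {x : ℝ} (h : 0 ≤ x) : |Real.sin x| ≤ x := by
  rw [abs_le]
  refine ⟨?_, Real.sin_le h⟩
  rcases le_total x 1 with h1 | h1
  · have hpi : x ≤ π := h1.trans (by nlinarith [Real.pi_gt_three])
    nlinarith [Real.sin_nonneg_of_nonneg_of_le_pi h hpi]
  · nlinarith [Real.neg_one_le_sin x]

lemma auxAbsSin (x : ℝ) : |Real.sin x| ≤ |x| := by
  rcases le_total 0 x with h | h
  · rw [abs_of_nonneg h]; exact auxAbsSinNonneg h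
  · rw [abs_of_nonpos h]
    have := auxAbsSinNonneg (neg_nonneg.2 h)
    rwa [Real.sin_neg, abs_neg] at this

lemma auxAbsOneSubCos (x : ℝ) : |1 - Real.cos x| ≤ |x| := by
  have h3 := Real.cos_two_mul (x / 2)
  have h4 := Real.sin_sq_add_cos_sq (x / 2)
  have h2 : Real.cos x = 1 - 2 * Real.sin (x / 2) ^ 2 := by
    rw [show (2:ℝ) * (x / 2) = x by ring] at h3
    nlinarith [Real.sin_sq_add_cos_sq (x / 2)]
  have h5 : |Real.sin (x / 2)| ≤ |x| / 2 := by
    have := auxAbsSin (x / 2)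
    rwa [abs_div, abs_two] at this
  have h6 : |Real.sin (x / 2)| ≤ 1 :=
    abs_le.mpr ⟨Real.neg_one_le_sin _, Real.sin_le_one _⟩
  have h7 : Real.sin (x / 2) ^ 2 = |Real.sin (x / 2)| ^ 2 := (sq_abs _).symm
  rw [h2]
  rw [abs_of_nonneg (by nlinarith [sq_nonneg (Real.sin (x / 2))] :
    (0:ℝ) ≤ 1 - (1 - 2 * Real.sin (x / 2) ^ 2))]
  nlinarith [abs_nonneg (Real.sin (x / 2))]

lemma auxSincAbs (u : ℝ) : |Real.sin u / u| ≤ 1 := by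
  rcases eq_or_ne u 0 with rfl | hu
  · simp
  · rw [abs_div, div_le_one (abs_pos.2 hu)]
    exact auxAbsSin u

lemma sincIntervalIntegrable (a b : ℝ) :
    IntervalIntegrable (fun u => Real.sin u / u) volume a b := by
  have hm : Measurable fun u : ℝ => Real.sin u / u :=
    Real.measurable_sin.div measurable_id
  rw [intervalIntegrable_iff]
  exact Measure.integrableOn_of_bounded measure_Ioc_lt_top.ne hm.aestronglyMeasurable
    (ae_of_all _ fun u => by rw [Real.norm_eq_abs]; exact auxSincAbs u)

lemma expDecayIntegral {x : ℝ} (hx : 0 < x) :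
    ∫ s in Ioi (0:ℝ), Real.exp (-(x * s)) = 1 / x := by
  have hderiv : ∀ s ∈ Ici (0:ℝ),
      HasDerivAt (fun s => -Real.exp (-(x * s)) / x) (Real.exp (-(x * s))) s := by
    intro s _
    have h1 : HasDerivAt (fun s : ℝ => -(x * s)) (-x) s := by
      simpa using (hasDerivAt_id s).const_mul (-x)
    have h3 := (h1.exp.neg).div_const x
    convert h3 using 1
    · rfl
    · rfl
    · rfl
    rw [eq_div_iff hx.ne']; ring
  have hint : IntegrableOn (fun s : ℝ => Real.exp (-(x * s))) (Ioi 0) := by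
    simpa [neg_mul] using exp_neg_integrableOn_Ioi 0 hx
  have htend : Tendsto (fun s => -Real.exp (-(x * s)) / x) atTop (𝓝 0) := by
    have h1 : Tendsto (fun s : ℝ => x * s) atTop atTop := tendsto_id.const_mul_atTop hx
    have h2 : Tendsto (fun s : ℝ => Real.exp (-(x * s))) atTop (𝓝 0) :=
      Real.tendsto_exp_neg_atTop_nhds_zero.comp h1
    simpa using (h2.neg).div_const x
  have := integral_Ioi_of_hasDerivAt_of_tendsto' hderiv hint htend
  rw [this]
  field_simp
  simp

lemma laplaceSin (s b : ℝ) :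
    ∫ x in (0:ℝ)..b, Real.exp (-(s * x)) * Real.sin x
      = (1 - Real.exp (-(s * b)) * (s * Real.sin b + Real.cos b)) / (1 + s ^ 2) := by
  have hs : (0:ℝ) < 1 + s ^ 2 := by positivity
  have hF : ∀ x : ℝ, HasDerivAt
      (fun x => -(Real.exp (-(s * x)) * (s * Real.sin x + Real.cos x)) / (1 + s ^ 2))
      (Real.exp (-(s * x)) * Real.sin x) x := by
    intro x
    have h1 : HasDerivAt (fun x : ℝ => -(s * x)) (-s) x := by
      simpa using (hasDerivAt_id x).const_mul (-s)
    have h2 : HasDerivAt (fun x => Real.exp (-(s * x))) (Real.exp (-(s * x)) * (-s)) x := h1.exp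
    have h3 : HasDerivAt (fun x => s * Real.sin x + Real.cos x)
        (s * Real.cos x + -Real.sin x) x :=
      ((Real.hasDerivAt_sin x).const_mul s).add (Real.hasDerivAt_cos x)
    have h4 := ((h2.mul h3).neg).div_const (1 + s ^ 2)
    convert h4 using 1
    · rfl
    · rfl
    · rfl
    rw [eq_div_iff hs.ne']; ring
  have hcont : Continuous fun x => Real.exp (-(s * x)) * Real.sin x := by continuity
  rw [intervalIntegral.integral_eq_sub_of_hasDerivAt (fun x _ => hF x)
    (hcont.intervalIntegrable 0 b)]
  field_simp
  simp
  ring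


lemma dirichletKey {b : ℝ} (hb : 0 < b) :
    |(∫ x in (0:ℝ)..b, Real.sin x / x) - π / 2| ≤ 2 / b := by
  have hcont : Continuous fun p : ℝ × ℝ => Real.sin p.1 * Real.exp (-(p.1 * p.2)) := by
    exact (Real.continuous_sin.comp continuous_fst).mul
      (Real.continuous_exp.comp (continuous_fst.mul continuous_snd).neg)
  set μ := volume.restrict (Ioc (0:ℝ) b) with hμ
  set ν := volume.restrict (Ioi (0:ℝ)) with hν
  have hmeas : AEStronglyMeasurable (fun p : ℝ × ℝ => Real.sin p.1 * Real.exp (-(p.1 * p.2)))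
      (μ.prod ν) := hcont.aestronglyMeasurable
  have hInt : Integrable (fun p : ℝ × ℝ => Real.sin p.1 * Real.exp (-(p.1 * p.2))) (μ.prod ν) := by
    rw [integrable_prod_iff hmeas]
    constructor
    · filter_upwards [ae_restrict_mem measurableSet_Ioc] with x hx
      have hx0 : 0 < x := hx.1
      have h1 : IntegrableOn (fun s => Real.exp (-(x * s))) (Ioi 0) := by
        simpa [neg_mul] using exp_neg_integrableOn_Ioi 0 hx0
      exact h1.const_mul _
    · apply Measure.integrableOn_of_bounded (M := 1) measure_Ioc_lt_top.ne
      · exact (hcont.norm.stronglyMeasurable.integral_prod_right').aestronglyMeasurable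
      · filter_upwards [ae_restrict_mem measurableSet_Ioc] with x hx
        have hx0 : 0 < x := hx.1
        have h1 : (fun s => ‖Real.sin x * Real.exp (-(x * s))‖)
            = fun s => |Real.sin x| * Real.exp (-(x * s)) := by
          funext s
          rw [norm_mul, Real.norm_eq_abs, Real.norm_eq_abs, Real.abs_exp]
        rw [Real.norm_eq_abs]
        calc |∫ s, ‖Real.sin x * Real.exp (-(x * s))‖ ∂ν|
            = |∫ s in Ioi (0:ℝ), |Real.sin x| * Real.exp (-(x * s))| := by rw [h1]
          _ = abs (|Real.sin x| * (1 / x)) := by rw [integral_const_mul, expDecayIntegral hx0]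
          _ ≤ 1 := by
              rw [abs_of_nonneg (by positivity)]
              have := auxAbsSin x
              rw [abs_of_pos hx0] at this
              rw [mul_one_div, div_le_one hx0]
              exact this
  have hswap := integral_integral_swap
    (f := fun x s => Real.sin x * Real.exp (-(x * s))) hInt
  have hL : ∫ x, (∫ s, Real.sin x * Real.exp (-(x * s)) ∂ν) ∂μ
      = ∫ x in (0:ℝ)..b, Real.sin x / x := by
    rw [intervalIntegral.integral_of_le hb.le]
    apply integral_congr_ae
    filter_upwards [ae_restrict_mem measurableSet_Ioc] with x hx
    rw [integral_const_mul, expDecayIntegral hx.1, mul_one_div]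
  have hR1 : ∫ s, (∫ x, Real.sin x * Real.exp (-(x * s)) ∂μ) ∂ν
      = ∫ s in Ioi (0:ℝ),
          (1 - Real.exp (-(s * b)) * (s * Real.sin b + Real.cos b)) / (1 + s ^ 2) := by
    refine integral_congr_ae (ae_of_all _ fun s => ?_)
    show (∫ x, Real.sin x * Real.exp (-(x * s)) ∂μ)
      = (1 - Real.exp (-(s * b)) * (s * Real.sin b + Real.cos b)) / (1 + s ^ 2)
    have h2 : ∫ x, Real.sin x * Real.exp (-(x * s)) ∂μ
        = ∫ x in (0:ℝ)..b, Real.exp (-(s * x)) * Real.sin x := by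
      rw [intervalIntegral.integral_of_le hb.le]
      refine integral_congr_ae (ae_of_all _ fun x => ?_)
      show Real.sin x * Real.exp (-(x * s)) = Real.exp (-(s * x)) * Real.sin x
      rw [mul_comm x s, mul_comm]
    rw [h2, laplaceSin]
  -- remainder integrand
  set g2 : ℝ → ℝ := fun s => Real.exp (-(s * b)) * (s * Real.sin b + Real.cos b) / (1 + s ^ 2)
    with hg2def
  have hbound : ∀ s : ℝ, 0 < s → |g2 s| ≤ 2 * Real.exp (-(b * s)) := by
    intro s hs
    have hden : (0:ℝ) < 1 + s ^ 2 := by positivity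
    have he : (0:ℝ) < Real.exp (-(s * b)) := Real.exp_pos _
    have habs : |s * Real.sin b + Real.cos b| ≤ s + 1 := by
      calc |s * Real.sin b + Real.cos b| ≤ |s * Real.sin b| + |Real.cos b| := abs_add_le _ _
        _ ≤ s * 1 + 1 := by
            rw [abs_mul, abs_of_pos hs]
            exact add_le_add (mul_le_mul_of_nonneg_left
              (abs_le.mpr ⟨Real.neg_one_le_sin b, Real.sin_le_one b⟩ :
                |Real.sin b| ≤ 1) hs.le)
              (abs_le.mpr ⟨Real.neg_one_le_cos b, Real.cos_le_one b⟩)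
        _ = s + 1 := by ring
    have hkey : s + 1 ≤ 2 * (1 + s ^ 2) := by nlinarith [sq_nonneg (2 * s - 1)]
    rw [hg2def, abs_div, abs_of_pos hden, abs_mul, Real.abs_exp, div_le_iff₀ hden,
      show -(s * b) = -(b * s) by ring]
    have h1 : Real.exp (-(b * s)) * |s * Real.sin b + Real.cos b|
        ≤ Real.exp (-(b * s)) * (2 * (1 + s ^ 2)) :=
      mul_le_mul_of_nonneg_left (habs.trans hkey) (Real.exp_pos _).le
    nlinarith [h1]
  have hg2meas : AEStronglyMeasurable g2 ν := by
    apply Continuous.aestronglyMeasurable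
    apply Continuous.div
    · continuity
    · continuity
    · intro s; positivity
  have hgint2 : Integrable (fun s => 2 * Real.exp (-(b * s))) ν := by
    simpa [neg_mul] using (((exp_neg_integrableOn_Ioi 0 hb)).const_mul 2 : Integrable _ ν)
  have hg2int : Integrable g2 ν := by
    apply Integrable.mono hgint2 hg2meas
    filter_upwards [ae_restrict_mem measurableSet_Ioi] with s hs
    rw [Real.norm_eq_abs, Real.norm_eq_abs]
    refine (hbound s hs).trans ?_
    rw [abs_of_pos (by positivity)]
  have hR2 : ∫ s in Ioi (0:ℝ),
      (1 - Real.exp (-(s * b)) * (s * Real.sin b + Real.cos b)) / (1 + s ^ 2)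
      = π / 2 - ∫ s in Ioi (0:ℝ), g2 s := by
    have hsplit : ∀ s : ℝ,
        (1 - Real.exp (-(s * b)) * (s * Real.sin b + Real.cos b)) / (1 + s ^ 2)
        = (1 + s ^ 2)⁻¹ - g2 s := fun s => by rw [hg2def, sub_div, one_div]
    simp_rw [hsplit]
    rw [integral_sub integrable_inv_one_add_sq.integrableOn hg2int,
      integral_Ioi_inv_one_add_sq, Real.arctan_zero, sub_zero]
  have hrem : |∫ s in Ioi (0:ℝ), g2 s| ≤ 2 / b := by
    have h1 : ‖∫ s, g2 s ∂ν‖ ≤ ∫ s, 2 * Real.exp (-(b * s)) ∂ν := by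
      apply norm_integral_le_of_norm_le hgint2
      · filter_upwards [ae_restrict_mem measurableSet_Ioi] with s hs
        rw [Real.norm_eq_abs]
        exact hbound s hs
    rw [Real.norm_eq_abs] at h1
    refine h1.trans ?_
    rw [integral_const_mul, expDecayIntegral hb]
    rw [mul_one_div]
  have hfinal : ∫ x in (0:ℝ)..b, Real.sin x / x = π / 2 - ∫ s in Ioi (0:ℝ), g2 s := by
    rw [← hL, hswap, hR1, hR2]
  rw [hfinal]
  rw [show π / 2 - (∫ s in Ioi (0:ℝ), g2 s) - π / 2 = -(∫ s in Ioi (0:ℝ), g2 s) by ring,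
    abs_neg]
  exact hrem

lemma dirichletTendsto :
    Tendsto (fun b => ∫ x in (0:ℝ)..b, Real.sin x / x) atTop (𝓝 (π / 2)) := by
  have h0 : Tendsto (fun b : ℝ => 2 / b) atTop (𝓝 0) :=
    tendsto_const_nhds.div_atTop tendsto_id
  have h1 : Tendsto (fun b => (∫ x in (0:ℝ)..b, Real.sin x / x) - π / 2) atTop (𝓝 0) := by
    apply squeeze_zero_norm' _ h0
    filter_upwards [eventually_gt_atTop 0] with b hb
    rw [Real.norm_eq_abs]
    exact dirichletKey hb
  simpa using h1.add_const (π / 2)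


lemma antiMulSinII {ω : ℝ} {g : ℝ → ℝ} (hg : AntitoneOn g (Ici 0)) {a b : ℝ}
    (ha : 0 ≤ a) (hab : a ≤ b) :
    IntervalIntegrable (fun s => g s * Real.sin (ω * s)) volume a b := by
  have hsub : uIcc a b ⊆ Ici 0 := by
    rw [uIcc_of_le hab]; exact fun x hx => ha.trans hx.1
  exact ((hg.mono hsub).intervalIntegrable).mul_continuousOn
    (Continuous.continuousOn (by continuity))

lemma periodBound {ω : ℝ} (hω : 0 < ω) {g : ℝ → ℝ} (hg : AntitoneOn g (Ici 0))
    (hg0 : ∀ x, 0 ≤ x → 0 ≤ g x) :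
    0 ≤ (∫ s in (0:ℝ)..(2 * π / ω), g s * Real.sin (ω * s)) ∧
    (∫ s in (0:ℝ)..(2 * π / ω), g s * Real.sin (ω * s))
      ≤ π / ω * (g 0 - g (2 * π / ω)) := by
  have hπ := Real.pi_pos
  have hpo : 0 < π / ω := by positivity
  have h2p : 2 * π / ω = π / ω + π / ω := by ring
  have hganti2 : AntitoneOn (fun s => g (s + π / ω)) (Ici 0) := by
    intro a ha b hb hab
    exact hg (mem_Ici.2 (by simp only [mem_Ici] at ha; linarith))
      (mem_Ici.2 (by simp only [mem_Ici] at hb; linarith)) (by linarith)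
  have hiiA : IntervalIntegrable (fun s => g s * Real.sin (ω * s)) volume 0 (π / ω) :=
    antiMulSinII hg le_rfl hpo.le
  have hiiB : IntervalIntegrable (fun s => g (s + π / ω) * Real.sin (ω * s)) volume 0 (π / ω) :=
    antiMulSinII hganti2 le_rfl hpo.le
  have hiiC : IntervalIntegrable (fun s => g s * Real.sin (ω * s)) volume (π / ω) (2 * π / ω) :=
    antiMulSinII hg hpo.le (by linarith)
  have hshift : (∫ s in (π / ω)..(2 * π / ω), g s * Real.sin (ω * s))
      = - ∫ u in (0:ℝ)..(π / ω), g (u + π / ω) * Real.sin (ω * u) := by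
    have h1 : (∫ u in (0:ℝ)..(π / ω), (fun t => g t * Real.sin (ω * t)) (u + π / ω))
        = ∫ t in (0 + π / ω)..(π / ω + π / ω), g t * Real.sin (ω * t) :=
      intervalIntegral.integral_comp_add_right (a := 0) (b := π / ω)
        (fun t => g t * Real.sin (ω * t)) (π / ω)
    rw [zero_add, ← h2p] at h1
    rw [← h1, ← intervalIntegral.integral_neg]
    apply intervalIntegral.integral_congr
    intro u _
    show g (u + π / ω) * Real.sin (ω * (u + π / ω)) = -(g (u + π / ω) * Real.sin (ω * u))
    have he : ω * (u + π / ω) = ω * u + π := by field_simp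
    rw [he, Real.sin_add_pi]; ring
  have hcomb : (∫ s in (0:ℝ)..(2 * π / ω), g s * Real.sin (ω * s))
      = ∫ s in (0:ℝ)..(π / ω),
          (g s * Real.sin (ω * s) - g (s + π / ω) * Real.sin (ω * s)) := by
    rw [← intervalIntegral.integral_add_adjacent_intervals hiiA hiiC, hshift,
      intervalIntegral.integral_sub hiiA hiiB, sub_eq_add_neg]
  have hsin : ∀ u ∈ Icc (0:ℝ) (π / ω), 0 ≤ Real.sin (ω * u) ∧ Real.sin (ω * u) ≤ 1 := by
    intro u hu
    have hup : ω * u ≤ π := by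
      have h1 : ω * u ≤ ω * (π / ω) := mul_le_mul_of_nonneg_left hu.2 hω.le
      have h2 : ω * (π / ω) = π := by field_simp
      linarith
    exact ⟨Real.sin_nonneg_of_nonneg_of_le_pi (mul_nonneg hω.le hu.1) hup, Real.sin_le_one _⟩
  constructor
  · rw [hcomb]
    apply intervalIntegral.integral_nonneg hpo.le
    intro u hu
    have h1 := hsin u hu
    have h2 : g (u + π / ω) ≤ g u :=
      hg (mem_Ici.2 hu.1) (mem_Ici.2 (by linarith [hu.1])) (by linarith)
    nlinarith [mul_nonneg (sub_nonneg.2 h2) h1.1]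
  · rw [hcomb]
    have hmono := intervalIntegral.integral_mono_on hpo.le (hiiA.sub hiiB)
      (intervalIntegrable_const (c := g 0 - g (2 * π / ω))) ?_
    · have hc := intervalIntegral.integral_const (a := (0:ℝ)) (b := π / ω)
        (c := g 0 - g (2 * π / ω))
      rw [hc, smul_eq_mul, sub_zero] at hmono
      exact hmono
    · intro u hu
      have h1 := hsin u hu
      have h2 : g (u + π / ω) ≤ g u :=
        hg (mem_Ici.2 hu.1) (mem_Ici.2 (by linarith [hu.1])) (by linarith)
      have h3 : g u ≤ g 0 := hg (mem_Ici.2 le_rfl) (mem_Ici.2 hu.1) hu.1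
      have h4 : g (2 * π / ω) ≤ g (u + π / ω) :=
        hg (mem_Ici.2 (by linarith [hu.1])) (mem_Ici.2 (by linarith)) (by linarith [hu.2])
      show g u * Real.sin (ω * u) - g (u + π / ω) * Real.sin (ω * u) ≤ g 0 - g (2 * π / ω)
      nlinarith [mul_le_mul_of_nonneg_left h1.2 (sub_nonneg.2 h2)]

lemma partialBound {ω : ℝ} (hω : 0 < ω) {f : ℝ → ℝ} (hf : AntitoneOn f (Ici 0))
    (hf0 : ∀ x, 0 ≤ x → 0 ≤ f x) (N : ℕ) :
    0 ≤ (∫ t in (0:ℝ)..(2 * π * N / ω), f t * Real.sin (ω * t)) ∧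
    (∫ t in (0:ℝ)..(2 * π * N / ω), f t * Real.sin (ω * t))
      ≤ π / ω * (f 0 - f (2 * π * N / ω)) := by
  have hπ := Real.pi_pos
  induction N with
  | zero => simp
  | succ N ih =>
    set c : ℝ := 2 * π * N / ω with hc
    have hc0 : 0 ≤ c := by positivity
    have hstep : 2 * π * ((N:ℕ)+1:ℕ) / ω = c + 2 * π / ω := by rw [hc]; push_cast; ring
    have hganti : AntitoneOn (fun s => f (s + c)) (Ici 0) := by
      intro a ha b hb hab
      exact hf (mem_Ici.2 (by simp only [mem_Ici] at ha; linarith))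
        (mem_Ici.2 (by simp only [mem_Ici] at hb; linarith)) (by linarith)
    have hg0 : ∀ x, 0 ≤ x → 0 ≤ (fun s => f (s + c)) x := by
      intro x hx; exact hf0 _ (by linarith)
    have hPeq : (∫ t in c..(c + 2 * π / ω), f t * Real.sin (ω * t))
        = ∫ s in (0:ℝ)..(2 * π / ω), f (s + c) * Real.sin (ω * s) := by
      have h1 : (∫ u in (0:ℝ)..(2 * π / ω), (fun t => f t * Real.sin (ω * t)) (u + c))
          = ∫ t in (0 + c)..(2 * π / ω + c), f t * Real.sin (ω * t) :=
        intervalIntegral.integral_comp_add_right (a := 0) (b := 2 * π / ω)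
          (fun t => f t * Real.sin (ω * t)) c
      rw [zero_add, show 2 * π / ω + c = c + 2 * π / ω by ring] at h1
      rw [← h1]
      apply intervalIntegral.integral_congr
      intro u _
      show f (u + c) * Real.sin (ω * (u + c)) = f (u + c) * Real.sin (ω * u)
      have he : ω * (u + c) = ω * u + N * (2 * π) := by rw [hc]; field_simp
      rw [he, Real.sin_add_nat_mul_two_pi]
    have hper := periodBound hω hganti hg0
    rw [← hPeq] at hper
    have hadd := intervalIntegral.integral_add_adjacent_intervals
      (antiMulSinII (ω := ω) hf le_rfl hc0)
      (antiMulSinII (ω := ω) hf hc0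
        (le_add_of_nonneg_right (by positivity : (0:ℝ) ≤ 2 * π / ω)))
    rw [hstep, ← hadd]
    rw [zero_add, show 2 * π / ω + c = c + 2 * π / ω from by ring] at hper
    constructor
    · linarith [ih.1, hper.1]
    · have h2 := ih.2
      have h3 := hper.2
      nlinarith [h2, h3]

lemma tailBound {ω : ℝ} (hω : 0 < ω) (k : ℕ) {f : ℝ → ℝ} {L : ℝ}
    (hf : AntitoneOn f (Ici (2 * π * k / ω)))
    (hf0 : ∀ x, 2 * π * k / ω ≤ x → 0 ≤ f x)
    (hL : Tendsto (fun A => ∫ t in (2 * π * (k:ℝ) / ω)..A, f t * Real.sin (ω * t))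
      atTop (𝓝 L)) :
    0 ≤ L ∧ L ≤ π / ω * f (2 * π * k / ω) := by
  have hπ := Real.pi_pos
  set B : ℝ := 2 * π * k / ω with hB
  have hB0 : 0 ≤ B := by positivity
  have hganti : AntitoneOn (fun s => f (s + B)) (Ici 0) := by
    intro a ha b hb hab
    exact hf (mem_Ici.2 (by simp only [mem_Ici] at ha; linarith))
      (mem_Ici.2 (by simp only [mem_Ici] at hb; linarith)) (by linarith)
  have hg0 : ∀ x, 0 ≤ x → 0 ≤ (fun s => f (s + B)) x := by
    intro x hx; exact hf0 _ (by linarith)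
  have hterm : ∀ N : ℕ, (∫ t in B..(B + 2 * π * N / ω), f t * Real.sin (ω * t))
      = ∫ s in (0:ℝ)..(2 * π * N / ω), f (s + B) * Real.sin (ω * s) := by
    intro N
    have h1 : (∫ u in (0:ℝ)..(2 * π * N / ω), (fun t => f t * Real.sin (ω * t)) (u + B))
        = ∫ t in (0 + B)..(2 * π * N / ω + B), f t * Real.sin (ω * t) :=
      intervalIntegral.integral_comp_add_right (a := 0) (b := 2 * π * N / ω)
        (fun t => f t * Real.sin (ω * t)) B
    rw [zero_add, show 2 * π * (N:ℝ) / ω + B = B + 2 * π * N / ω by ring] at h1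
    rw [← h1]
    apply intervalIntegral.integral_congr
    intro u _
    show f (u + B) * Real.sin (ω * (u + B)) = f (u + B) * Real.sin (ω * u)
    have he : ω * (u + B) = ω * u + k * (2 * π) := by rw [hB]; field_simp
    rw [he, Real.sin_add_nat_mul_two_pi]
  have hsub : Tendsto (fun N : ℕ => ∫ t in B..(B + 2 * π * N / ω),
      f t * Real.sin (ω * t)) atTop (𝓝 L) := by
    apply hL.comp
    have h1 : Tendsto (fun N : ℕ => 2 * π / ω * (N:ℝ)) atTop atTop :=
      tendsto_natCast_atTop_atTop.const_mul_atTop (by positivity)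
    have h2 : Tendsto (fun N : ℕ => B + 2 * π * (N:ℝ) / ω) atTop atTop := by
      apply tendsto_atTop_add_const_left
      exact h1.congr (fun N => by ring)
    exact h2
  have hbd := fun N : ℕ => partialBound hω hganti hg0 N
  constructor
  · apply ge_of_tendsto hsub
    filter_upwards with N
    rw [hterm N]
    exact (hbd N).1
  · apply le_of_tendsto hsub
    filter_upwards with N
    rw [hterm N]
    have h2 := (hbd N).2
    rw [zero_add] at h2
    have hz2 : 0 ≤ f (2 * π * N / ω + B) := hf0 _ (le_add_of_nonneg_left (by positivity))
    have hpo : 0 ≤ π / ω := by positivity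
    nlinarith [h2, hz2]


set_option maxHeartbeats 2000000 in
/-- Abelian theorem in the critical case: if `t·K(t) → c₁ ∈ (0,∞)`, then
`𝒦cos(ω)/|log ω| → c₁` and `𝒦sin(ω) → c₁·π/2` as `ω → 0⁺`. -/
theorem abelian_critical_case
    (K : ℝ → ℝ)
    (hKloc : ∀ A > 0, IntegrableOn K (Ioc 0 A))
    (hKpos : ∀ t > 0, 0 < K t)
    (hKdec : ∃ T > 0, AntitoneOn K (Ici T))
    (c₁ : ℝ) (hc₁ : 0 < c₁)
    (hK1 : Tendsto (fun t => t * K t) atTop (nhds c₁))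
    (Kcos Ksin : ℝ → ℝ)
    (hKcos : ∀ ω > 0, Tendsto (fun A => ∫ t in (0:ℝ)..A, K t * Real.cos (ω * t))
      atTop (nhds (Kcos ω)))
    (hKsin : ∀ ω > 0, Tendsto (fun A => ∫ t in (0:ℝ)..A, K t * Real.sin (ω * t))
      atTop (nhds (Ksin ω))) :
    Tendsto (fun ω => Kcos ω / |Real.log ω|) (nhdsWithin 0 (Ioi 0)) (nhds c₁) ∧
    Tendsto Ksin (nhdsWithin 0 (Ioi 0)) (nhds (c₁ * Real.pi / 2)) := by
  obtain ⟨T, hT, hanti⟩ := hKdec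
  have hπ := Real.pi_pos
  have hKii : ∀ a b : ℝ, 0 ≤ a → a ≤ b → 0 < b → IntervalIntegrable K volume a b := by
    intro a b ha hab hb
    rw [intervalIntegrable_iff_integrableOn_Ioc_of_le hab]
    exact (hKloc b hb).mono_set (Ioc_subset_Ioc ha le_rfl)
  have hKhii : ∀ (h : ℝ → ℝ), Continuous h → ∀ a b : ℝ, 0 ≤ a → a ≤ b → 0 < b →
      IntervalIntegrable (fun t => K t * h t) volume a b := by
    intro h hh a b ha hab hb
    exact (hKii a b ha hab hb).mul_continuousOn hh.continuousOn
  constructor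
  · -- COSINE part
    rw [Metric.tendsto_nhds]
    intro ε₀ hε₀
    set ε : ℝ := min c₁ (ε₀ / 2) with hεdef
    have hεpos : 0 < ε := lt_min hc₁ (by positivity)
    have hεc₁ : ε ≤ c₁ := min_le_left _ _
    have hεhalf : ε ≤ ε₀ / 2 := min_le_right _ _
    obtain ⟨S₀, hS₀⟩ := Metric.tendsto_atTop.1 hK1 ε hεpos
    set S : ℝ := max S₀ (max T 1) with hSdef
    have hS1 : (1:ℝ) ≤ S := le_trans (le_max_right T 1) (le_max_right _ _)
    have hST : T ≤ S := le_trans (le_max_left T 1) (le_max_right _ _)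
    have hSpos : 0 < S := lt_of_lt_of_le one_pos hS1
    have hSb : ∀ t, S ≤ t → |t * K t - c₁| ≤ ε := by
      intro t ht
      have := hS₀ t (le_trans (le_max_left _ _) ht)
      rw [Real.dist_eq] at this
      exact this.le
    have hKub : ∀ t, S ≤ t → K t ≤ 2 * c₁ / t := by
      intro t ht
      have ht0 : 0 < t := lt_of_lt_of_le hSpos ht
      have h1 := abs_le.1 (hSb t ht)
      rw [le_div_iff₀ ht0]
      nlinarith [h1.2, hεc₁]
    set CS : ℝ := ∫ t in (0:ℝ)..S, K t with hCSdef
    have hCS0 : 0 ≤ CS := by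
      rw [hCSdef, intervalIntegral.integral_of_le hSpos.le]
      exact setIntegral_nonneg measurableSet_Ioc fun x hx => (hKpos x hx.1).le
    have hlgS : 0 ≤ Real.log S := Real.log_nonneg hS1
    have hlg32 : 0 ≤ Real.log (3 * π / 2) :=
      Real.log_nonneg (by nlinarith [Real.pi_gt_three])
    set D₀ : ℝ := CS + 3 * π * c₁ + 4 * c₁ / 3
      + 2 * c₁ * (Real.log (3 * π / 2) + Real.log S) + 1 with hD₀def
    have hD₀pos : 0 < D₀ := by
      rw [hD₀def]
      nlinarith [hCS0, mul_nonneg hc₁.le (add_nonneg hlg32 hlgS), mul_pos hπ hc₁]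
    set δ : ℝ := min (min 1 (3 * π / (2 * S))) (Real.exp (-(2 * D₀ / ε₀))) with hδdef
    have hδpos : 0 < δ := lt_min (lt_min one_pos (by positivity)) (Real.exp_pos _)
    filter_upwards [Ioo_mem_nhdsGT_of_mem (show (0:ℝ) ∈ Ico 0 δ from ⟨le_rfl, hδpos⟩)]
      with ω hωIoo
    have hω0 : 0 < ω := hωIoo.1
    have hω1 : ω < 1 :=
      lt_of_lt_of_le hωIoo.2 ((min_le_left _ _).trans (min_le_left _ _))
    have hωS : ω ≤ 3 * π / (2 * S) :=
      le_trans hωIoo.2.le ((min_le_left _ _).trans (min_le_right _ _))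
    have hωexp : ω < Real.exp (-(2 * D₀ / ε₀)) :=
      lt_of_lt_of_le hωIoo.2 (min_le_right _ _)
    set L : ℝ := -Real.log ω with hLdef
    have habslog : |Real.log ω| = L := by
      rw [hLdef, abs_of_neg (Real.log_neg hω0 hω1)]
    have hLgt : 2 * D₀ / ε₀ < L := by
      have h1 : Real.log ω < Real.log (Real.exp (-(2 * D₀ / ε₀))) :=
        Real.log_lt_log hω0 hωexp
      rw [Real.log_exp] at h1
      rw [hLdef]; linarith
    have hLpos : 0 < L := lt_trans (by positivity) hLgt
    set B : ℝ := 3 * π / (2 * ω) with hBdef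
    have hB0 : 0 < B := by rw [hBdef]; positivity
    have hSB : S ≤ B := by
      have h1 : ω * (2 * S) ≤ 3 * π := (le_div_iff₀ (by positivity)).1 hωS
      rw [hBdef, le_div_iff₀ (by positivity : (0:ℝ) < 2 * ω)]
      nlinarith
    have hωB : ω * B = 3 * π / 2 := by rw [hBdef]; field_simp
    have hcosc : Continuous fun t : ℝ => Real.cos (ω * t) :=
      Real.continuous_cos.comp (continuous_const.mul continuous_id)
    set cq : ℝ := π / (2 * ω) with hcqdef
    have hcq0 : 0 < cq := by rw [hcqdef]; positivity
    have hBcq : 2 * π * ((1:ℕ):ℝ) / ω = B + cq := by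
      rw [hBdef, hcqdef]; push_cast; field_simp; ring
    have htailconv : Tendsto (fun A => ∫ u in (2 * π * ((1:ℕ):ℝ) / ω)..A,
        (fun v => K (v - cq)) u * Real.sin (ω * u)) atTop
        (𝓝 (Kcos ω - ∫ t in (0:ℝ)..B, K t * Real.cos (ω * t))) := by
      have h2 : Tendsto (fun A : ℝ => A - cq) atTop atTop := by
        simpa [sub_eq_add_neg] using tendsto_atTop_add_const_right atTop (-cq) tendsto_id
      apply Tendsto.congr' _
        (((hKcos ω hω0).sub_const (∫ t in (0:ℝ)..B, K t * Real.cos (ω * t))).comp h2)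
      filter_upwards [eventually_ge_atTop (B + cq)] with A hA
      have hBAc : B ≤ A - cq := by linarith
      have e1 := intervalIntegral.integral_add_adjacent_intervals
        (hKhii _ hcosc 0 B le_rfl hB0.le hB0)
        (hKhii _ hcosc B (A - cq) hB0.le hBAc (lt_of_lt_of_le hB0 hBAc))
      have e2 : (∫ u in (B + cq)..A, (fun t => K t * Real.cos (ω * t)) (u + -cq))
          = ∫ t in (B + cq + -cq)..(A + -cq), K t * Real.cos (ω * t) :=
        intervalIntegral.integral_comp_add_right (a := B + cq) (b := A)
          (fun t => K t * Real.cos (ω * t)) (-cq)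
      rw [show B + cq + -cq = B by ring, show A + -cq = A - cq by ring] at e2
      have e3 : (∫ u in (B + cq)..A, K (u - cq) * Real.sin (ω * u))
          = ∫ u in (B + cq)..A, (fun t => K t * Real.cos (ω * t)) (u + -cq) := by
        apply intervalIntegral.integral_congr
        intro u _
        show K (u - cq) * Real.sin (ω * u) = K (u + -cq) * Real.cos (ω * (u + -cq))
        have harg : ω * (u + -cq) = ω * u - π / 2 := by
          rw [hcqdef]; field_simp; ring
        rw [harg, Real.cos_sub_pi_div_two, show u + -cq = u - cq by ring]
      show (∫ t in (0:ℝ)..(A - cq), K t * Real.cos (ω * t))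
          - (∫ t in (0:ℝ)..B, K t * Real.cos (ω * t))
          = ∫ u in (2 * π * ((1:ℕ):ℝ) / ω)..A, K (u - cq) * Real.sin (ω * u)
      rw [hBcq, e3, e2]
      linarith [e1]
    have htail := tailBound hω0 1 (f := fun v => K (v - cq))
      (by
        intro a ha b hb hab
        rw [mem_Ici, hBcq] at ha hb
        exact hanti (mem_Ici.2 (by linarith [hST, hSB])) (mem_Ici.2 (by linarith [hST, hSB]))
          (by linarith))
      (by
        intro x hx
        rw [hBcq] at hx
        exact (hKpos _ (by linarith [hB0])).le)
      htailconv
    have harg2 : (2 * π * ((1:ℕ):ℝ) / ω) - cq = B := by rw [hBcq]; ring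
    beta_reduce at htail
    rw [harg2] at htail
    have htailub2 : π / ω * K B ≤ 4 * c₁ / 3 := by
      have hKB : K B ≤ 2 * c₁ / B := hKub B hSB
      have h6 : π / ω * K B ≤ π / ω * (2 * c₁ / B) :=
        mul_le_mul_of_nonneg_left hKB (by positivity)
      have h7 : π / ω * (2 * c₁ / B) = 4 * c₁ / 3 := by
        rw [hBdef]; field_simp; ring
      linarith
    have hsplit := intervalIntegral.integral_add_adjacent_intervals
      (hKhii _ hcosc 0 S le_rfl hSpos.le hSpos) (hKhii _ hcosc S B hSpos.le hSB hB0)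
    have hiiK := hKii S B hSpos.le hSB hB0
    have hiiKc1 : IntervalIntegrable (fun t => K t * (Real.cos (ω * t) - 1)) volume S B :=
      hiiK.mul_continuousOn ((hcosc.sub continuous_const).continuousOn)
    have hsplit2 : (∫ t in S..B, K t * Real.cos (ω * t))
        = (∫ t in S..B, K t) + ∫ t in S..B, K t * (Real.cos (ω * t) - 1) := by
      rw [← intervalIntegral.integral_add hiiK hiiKc1]
      apply intervalIntegral.integral_congr
      intro t _
      show K t * Real.cos (ω * t) = K t + K t * (Real.cos (ω * t) - 1)
      ring
    have hT1 : |∫ t in (0:ℝ)..S, K t * Real.cos (ω * t)| ≤ CS := by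
      have h1 : ‖∫ t in (0:ℝ)..S, K t * Real.cos (ω * t)‖
          ≤ |∫ t in (0:ℝ)..S, K t| := by
        apply intervalIntegral.norm_integral_le_abs_of_norm_le _
          (hKii 0 S le_rfl hSpos.le hSpos)
        filter_upwards [ae_restrict_mem measurableSet_uIoc] with t ht
        rw [uIoc_of_le hSpos.le] at ht
        have hK0 := hKpos t ht.1
        rw [norm_mul, Real.norm_eq_abs, Real.norm_eq_abs, abs_of_pos hK0]
        nlinarith [mul_le_mul_of_nonneg_left
          (abs_le.2 ⟨Real.neg_one_le_cos (ω * t), Real.cos_le_one (ω * t)⟩ :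
            |Real.cos (ω * t)| ≤ 1) hK0.le]
      rw [Real.norm_eq_abs, ← hCSdef, abs_of_nonneg hCS0] at h1
      exact h1
    have hT2b : |∫ t in S..B, K t * (Real.cos (ω * t) - 1)| ≤ 3 * π * c₁ := by
      have h1 : ∀ x ∈ uIoc S B, ‖K x * (Real.cos (ω * x) - 1)‖ ≤ 2 * c₁ * ω := by
        intro x hx
        rw [uIoc_of_le hSB] at hx
        have hx0 : 0 < x := lt_trans hSpos hx.1
        have hKx := hKub x hx.1.le
        have hcos : |Real.cos (ω * x) - 1| ≤ ω * x := by
          rw [abs_sub_comm]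
          have := auxAbsOneSubCos (ω * x)
          rwa [abs_of_nonneg (mul_nonneg hω0.le hx0.le)] at this
        rw [Real.norm_eq_abs, abs_mul, abs_of_pos (hKpos x hx0)]
        calc K x * |Real.cos (ω * x) - 1| ≤ (2 * c₁ / x) * (ω * x) :=
              mul_le_mul hKx hcos (abs_nonneg _) (by positivity)
          _ = 2 * c₁ * ω := by field_simp
      have h4 := intervalIntegral.norm_integral_le_of_norm_le_const h1
      rw [Real.norm_eq_abs, abs_of_nonneg (by linarith : (0:ℝ) ≤ B - S)] at h4
      have h6 : 2 * c₁ * (ω * B) = 3 * π * c₁ := by rw [hωB]; ring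
      have h5 : 2 * c₁ * ω * (B - S) ≤ 3 * π * c₁ := by
        nlinarith [mul_nonneg (mul_nonneg hc₁.le hω0.le) hSpos.le]
      linarith
    have hiiInv : IntervalIntegrable (fun t : ℝ => t⁻¹) volume S B := by
      apply ContinuousOn.intervalIntegrable
      apply ContinuousOn.inv₀ continuousOn_id
      intro t ht
      rw [uIcc_of_le hSB] at ht
      exact ne_of_gt (lt_of_lt_of_le hSpos ht.1)
    have hlogdiff : (∫ t in S..B, t⁻¹) = Real.log B - Real.log S := by
      rw [integral_inv (show (0:ℝ) ∉ uIcc S B by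
        rw [uIcc_of_le hSB]; intro h; exact absurd h.1 (not_le.2 hSpos))]
      rw [Real.log_div hB0.ne' hSpos.ne']
    have hup : (∫ t in S..B, K t) ≤ (c₁ + ε) * (Real.log B - Real.log S) := by
      have h1 := intervalIntegral.integral_mono_on hSB hiiK
        (hiiInv.const_mul (c₁ + ε)) (fun x hx => by
          have hx0 : 0 < x := lt_of_lt_of_le hSpos hx.1
          have h2 := abs_le.1 (hSb x hx.1)
          rw [← div_eq_mul_inv, le_div_iff₀ hx0, mul_comm]
          linarith [h2.2])
      rwa [intervalIntegral.integral_const_mul, hlogdiff] at h1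
    have hlo : (c₁ - ε) * (Real.log B - Real.log S) ≤ ∫ t in S..B, K t := by
      have h1 := intervalIntegral.integral_mono_on hSB
        (hiiInv.const_mul (c₁ - ε)) hiiK (fun x hx => by
          have hx0 : 0 < x := lt_of_lt_of_le hSpos hx.1
          have h2 := abs_le.1 (hSb x hx.1)
          rw [← div_eq_mul_inv, div_le_iff₀ hx0, mul_comm]
          linarith [h2.1])
      rwa [intervalIntegral.integral_const_mul, hlogdiff] at h1
    have hlogB : Real.log B = Real.log (3 * π / 2) + L := by
      rw [hBdef, show 3 * π / (2 * ω) = (3 * π / 2) / ω by ring,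
        Real.log_div (by positivity : (3 * π / 2 : ℝ) ≠ 0) hω0.ne', hLdef]
      ring
    set J : ℝ := Real.log (3 * π / 2) - Real.log S with hJdef
    have hJabs : |J| ≤ Real.log (3 * π / 2) + Real.log S :=
      abs_le.2 ⟨by rw [hJdef]; linarith, by rw [hJdef]; linarith⟩
    have hJL : Real.log B - Real.log S = J + L := by rw [hJdef, hlogB]; ring
    have hT2a : |(∫ t in S..B, K t) - c₁ * L|
        ≤ ε * L + 2 * c₁ * (Real.log (3 * π / 2) + Real.log S) := by
      rw [hJL] at hup hlo
      clear_value ε S J L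
      have hJub : (c₁ + ε) * J ≤ 2 * c₁ * (Real.log (3 * π / 2) + Real.log S) := by
        have j1 : (c₁ + ε) * J ≤ (c₁ + ε) * |J| :=
          mul_le_mul_of_nonneg_left (le_abs_self J) (by linarith)
        have j2 : (c₁ + ε) * |J| ≤ (2 * c₁) * (Real.log (3 * π / 2) + Real.log S) :=
          mul_le_mul (by linarith) hJabs (abs_nonneg _) (by linarith)
        linarith
      have hJlb : -(2 * c₁ * (Real.log (3 * π / 2) + Real.log S)) ≤ (c₁ - ε) * J := by
        have j1 : (c₁ - ε) * (-|J|) ≤ (c₁ - ε) * J :=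
          mul_le_mul_of_nonneg_left (neg_abs_le J) (by linarith)
        have j2 : (c₁ - ε) * |J| ≤ (2 * c₁) * (Real.log (3 * π / 2) + Real.log S) :=
          mul_le_mul (by linarith) hJabs (abs_nonneg _) (by linarith)
        have j3 : (c₁ - ε) * (-|J|) = -((c₁ - ε) * |J|) := by ring
        linarith
      rw [abs_le]
      constructor
      · have hex : (c₁ - ε) * (J + L) = c₁ * L - ε * L + (c₁ - ε) * J := by ring
        linarith [hlo, hJlb]
      · have hex : (c₁ + ε) * (J + L) = c₁ * L + ε * L + (c₁ + ε) * J := by ring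
        linarith [hup, hJub]
    rw [Real.dist_eq, habslog]
    have hid : Kcos ω - c₁ * L
        = (∫ t in (0:ℝ)..S, K t * Real.cos (ω * t))
          + ((∫ t in S..B, K t) - c₁ * L)
          + (∫ t in S..B, K t * (Real.cos (ω * t) - 1))
          + (Kcos ω - ∫ t in (0:ℝ)..B, K t * Real.cos (ω * t)) := by
      linear_combination hsplit2 - hsplit
    have hTL : |Kcos ω - ∫ t in (0:ℝ)..B, K t * Real.cos (ω * t)| ≤ 4 * c₁ / 3 :=
      abs_le.2 ⟨by linarith [htail.1, hc₁], by linarith [htail.2, htailub2]⟩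
    have htot : |Kcos ω - c₁ * L| ≤ ε * L + D₀ := by
      rw [hid]
      have t0 := abs_add_le
        ((∫ t in (0:ℝ)..S, K t * Real.cos (ω * t))
          + ((∫ t in S..B, K t) - c₁ * L)
          + (∫ t in S..B, K t * (Real.cos (ω * t) - 1)))
        (Kcos ω - ∫ t in (0:ℝ)..B, K t * Real.cos (ω * t))
      have t1 := abs_add_le
        ((∫ t in (0:ℝ)..S, K t * Real.cos (ω * t))
          + ((∫ t in S..B, K t) - c₁ * L))
        (∫ t in S..B, K t * (Real.cos (ω * t) - 1))
      have t2 := abs_add_le (∫ t in (0:ℝ)..S, K t * Real.cos (ω * t))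
        ((∫ t in S..B, K t) - c₁ * L)
      rw [hD₀def]
      linarith [hT1, hT2a, hT2b, hTL]
    have hfrac : Kcos ω / L - c₁ = (Kcos ω - c₁ * L) / L := by
      field_simp
    rw [hfrac, abs_div, abs_of_pos hLpos, div_lt_iff₀ hLpos]
    have hx1 : ε * L ≤ ε₀ / 2 * L := mul_le_mul_of_nonneg_right hεhalf hLpos.le
    have hx2 : 2 * D₀ < L * ε₀ := (div_lt_iff₀ hε₀).1 hLgt
    clear_value ε S CS D₀ L J B
    linarith [htot, hx1, hx2]
  · -- SINE part
    rw [Metric.tendsto_nhds]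
    intro ε₀ hε₀
    obtain ⟨b₀, hb₀⟩ := Metric.tendsto_atTop.1 dirichletTendsto (ε₀ / (8 * (c₁ + 1)))
      (by positivity)
    set N : ℕ := max (⌈b₀⌉₊) (⌈8 * c₁ / ε₀⌉₊) + 1 with hNdef
    have hN1 : 1 ≤ (N:ℝ) := by
      have : 1 ≤ N := Nat.succ_le_succ (Nat.zero_le _)
      exact_mod_cast this
    have hNpos : (0:ℝ) < N := by linarith
    have hNb : b₀ ≤ 2 * π * N := by
      have h1 : b₀ ≤ (⌈b₀⌉₊ : ℝ) := Nat.le_ceil b₀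
      have h2 : ((⌈b₀⌉₊ : ℕ) : ℝ) ≤ (N : ℝ) := by
        have : ⌈b₀⌉₊ ≤ N := le_trans (le_max_left _ _) (Nat.le_succ _)
        exact_mod_cast this
      have h3 : (N:ℝ) ≤ 2 * π * N := by nlinarith [Real.pi_gt_three]
      linarith
    have hNc : 8 * c₁ / ε₀ ≤ (N:ℝ) := by
      have h1 : 8 * c₁ / ε₀ ≤ (⌈8 * c₁ / ε₀⌉₊ : ℝ) := Nat.le_ceil _
      have h2 : ((⌈8 * c₁ / ε₀⌉₊ : ℕ) : ℝ) ≤ (N : ℝ) := by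
        have : ⌈8 * c₁ / ε₀⌉₊ ≤ N := le_trans (le_max_right _ _) (Nat.le_succ _)
        exact_mod_cast this
      linarith
    have hc₁N : c₁ / N ≤ ε₀ / 8 := by
      rw [div_le_div_iff₀ hNpos (by norm_num : (0:ℝ) < 8)]
      have := (div_le_iff₀ hε₀).1 hNc
      linarith
    set ε : ℝ := min c₁ (ε₀ / (8 * (2 * π * N + 1))) with hεdef
    have hεpos : 0 < ε := lt_min hc₁ (by positivity)
    have hεc₁ : ε ≤ c₁ := min_le_left _ _
    have hεN : ε * (2 * π * N) ≤ ε₀ / 8 := by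
      have h1 : ε ≤ ε₀ / (8 * (2 * π * N + 1)) := min_le_right _ _
      have h3 : ε * (8 * (2 * π * N + 1)) ≤ ε₀ :=
        (le_div_iff₀ (by positivity)).1 h1
      nlinarith [hεpos]
    obtain ⟨S₀, hS₀⟩ := Metric.tendsto_atTop.1 hK1 ε hεpos
    set S : ℝ := max S₀ (max T 1) with hSdef
    have hS1 : (1:ℝ) ≤ S := le_trans (le_max_right T 1) (le_max_right _ _)
    have hST : T ≤ S := le_trans (le_max_left T 1) (le_max_right _ _)
    have hSpos : 0 < S := lt_of_lt_of_le one_pos hS1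
    have hSb : ∀ t, S ≤ t → |t * K t - c₁| ≤ ε := by
      intro t ht
      have := hS₀ t (le_trans (le_max_left _ _) ht)
      rw [Real.dist_eq] at this
      exact this.le
    have hKub : ∀ t, S ≤ t → K t ≤ 2 * c₁ / t := by
      intro t ht
      have ht0 : 0 < t := lt_of_lt_of_le hSpos ht
      have h1 := abs_le.1 (hSb t ht)
      rw [le_div_iff₀ ht0]
      nlinarith [h1.2, hεc₁]
    set CS : ℝ := ∫ t in (0:ℝ)..S, K t with hCSdef
    have hCS0 : 0 ≤ CS := by
      rw [hCSdef, intervalIntegral.integral_of_le hSpos.le]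
      exact setIntegral_nonneg measurableSet_Ioc fun x hx => (hKpos x hx.1).le
    set M : ℝ := S * CS + S * c₁ + 1 with hMdef
    have hMpos : 0 < M := by
      have h1 : 0 ≤ S * CS := mul_nonneg hSpos.le hCS0
      have h2 : 0 < S * c₁ := mul_pos hSpos hc₁
      rw [hMdef]; linarith
    set δ : ℝ := min (min (2 * π * N / S) 1) (ε₀ / (8 * M)) with hδdef
    have hδpos : 0 < δ :=
      lt_min (lt_min (by positivity) one_pos) (by positivity)
    filter_upwards [Ioo_mem_nhdsGT_of_mem (show (0:ℝ) ∈ Ico 0 δ from ⟨le_rfl, hδpos⟩)]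
      with ω hωIoo
    have hω0 : 0 < ω := hωIoo.1
    have hωδ : ω < δ := hωIoo.2
    have hωNS : ω * S ≤ 2 * π * N := by
      have h1 : ω ≤ 2 * π * N / S :=
        le_trans hωδ.le ((min_le_left _ _).trans (min_le_left _ _))
      exact (le_div_iff₀ hSpos).1 h1
    have hωM : ω * (8 * M) ≤ ε₀ := by
      have h1 : ω ≤ ε₀ / (8 * M) := le_trans hωδ.le (min_le_right _ _)
      exact (le_div_iff₀ (by positivity)).1 h1
    rw [hMdef] at hωM
    set B : ℝ := 2 * π * N / ω with hBdef
    have hB0 : 0 < B := by rw [hBdef]; positivity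
    have hSB : S ≤ B := by
      rw [hBdef, le_div_iff₀ hω0]
      nlinarith [hωNS]
    have hωB : ω * B = 2 * π * N := by
      rw [hBdef]; field_simp
    have hsinc : Continuous fun t : ℝ => Real.sin (ω * t) :=
      Real.continuous_sin.comp (continuous_const.mul continuous_id)
    -- tail
    have htailconv : Tendsto (fun A => ∫ t in (2 * π * ((N:ℕ):ℝ) / ω)..A, K t * Real.sin (ω * t))
        atTop (𝓝 (Ksin ω - ∫ t in (0:ℝ)..B, K t * Real.sin (ω * t))) := by
      apply Tendsto.congr' _
        ((hKsin ω hω0).sub_const (∫ t in (0:ℝ)..B, K t * Real.sin (ω * t)))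
      filter_upwards [eventually_ge_atTop B] with A hA
      have hadd := intervalIntegral.integral_add_adjacent_intervals
        (hKhii _ hsinc 0 B le_rfl hB0.le hB0)
        (hKhii _ hsinc B A hB0.le hA (lt_of_lt_of_le hB0 hA))
      show (∫ t in (0:ℝ)..A, K t * Real.sin (ω * t))
          - (∫ t in (0:ℝ)..B, K t * Real.sin (ω * t))
          = ∫ t in (2 * π * ((N:ℕ):ℝ) / ω)..A, K t * Real.sin (ω * t)
      rw [← hBdef]
      linarith [hadd]
    have htail := tailBound hω0 N
      (by rw [← hBdef]; exact hanti.mono (Ici_subset_Ici.2 (hST.trans hSB)))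
      (by rw [← hBdef]; exact fun x hx => (hKpos x (lt_of_lt_of_le hB0 hx)).le)
      htailconv
    rw [← hBdef] at htail
    have hKB : K B ≤ 2 * c₁ / B := hKub B hSB
    have htailub : Ksin ω - (∫ t in (0:ℝ)..B, K t * Real.sin (ω * t)) ≤ ε₀ / 8 := by
      have h6 : π / ω * K B ≤ π / ω * (2 * c₁ / B) :=
        mul_le_mul_of_nonneg_left hKB (by positivity)
      have h7 : π / ω * (2 * c₁ / B) = c₁ / N := by
        rw [hBdef]
        have hNne : (N:ℝ) ≠ 0 := ne_of_gt hNpos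
        field_simp
      linarith [htail.2, hc₁N]
    -- split 0..B at S
    have hsplitSB := intervalIntegral.integral_add_adjacent_intervals
      (hKhii _ hsinc 0 S le_rfl hSpos.le hSpos)
      (hKhii _ hsinc S B hSpos.le hSB hB0)
    -- A1
    have hA1 : |∫ t in (0:ℝ)..S, K t * Real.sin (ω * t)| ≤ ω * S * CS := by
      have h1 : ‖∫ t in (0:ℝ)..S, K t * Real.sin (ω * t)‖
          ≤ |∫ t in (0:ℝ)..S, ω * S * K t| := by
        apply intervalIntegral.norm_integral_le_abs_of_norm_le _
          ((hKii 0 S le_rfl hSpos.le hSpos).const_mul (ω * S))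
        filter_upwards [ae_restrict_mem measurableSet_uIoc] with t ht
        rw [uIoc_of_le hSpos.le] at ht
        have hK0 := hKpos t ht.1
        have hsin := auxAbsSin (ω * t)
        rw [abs_of_nonneg (mul_nonneg hω0.le ht.1.le)] at hsin
        rw [norm_mul, Real.norm_eq_abs, Real.norm_eq_abs, abs_of_pos hK0]
        nlinarith [mul_le_mul_of_nonneg_left hsin hK0.le,
          mul_nonneg (mul_nonneg hω0.le (sub_nonneg.2 ht.2)) hK0.le]
      have h2 : (∫ t in (0:ℝ)..S, ω * S * K t) = ω * S * CS := by
        rw [intervalIntegral.integral_const_mul, hCSdef]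
      rw [Real.norm_eq_abs, h2, abs_of_nonneg (mul_nonneg (by positivity) hCS0)] at h1
      exact h1
    have hA1b : ω * S * CS ≤ ε₀ / 8 := by
      nlinarith [hωM, mul_nonneg (mul_nonneg hω0.le hSpos.le) hc₁.le, hω0.le]
    have hc₁ωS : c₁ * (ω * S) ≤ ε₀ / 8 := by
      nlinarith [hωM, mul_nonneg (mul_nonneg hω0.le hSpos.le) hCS0, hω0.le]
    -- A2
    have hiiKsinSB := hKhii _ hsinc S B hSpos.le hSB hB0
    have hiic : IntervalIntegrable (fun t => c₁ / t * Real.sin (ω * t)) volume S B := by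
      apply ContinuousOn.intervalIntegrable
      apply ContinuousOn.mul
      · apply ContinuousOn.div continuousOn_const continuousOn_id
        intro t ht
        rw [uIcc_of_le hSB] at ht
        exact ne_of_gt (lt_of_lt_of_le hSpos ht.1)
      · exact hsinc.continuousOn
    have hA2eq : (∫ t in S..B, K t * Real.sin (ω * t))
        = (∫ t in S..B, (K t * Real.sin (ω * t) - c₁ / t * Real.sin (ω * t)))
          + ∫ t in S..B, c₁ / t * Real.sin (ω * t) := by
      rw [← intervalIntegral.integral_add (hiiKsinSB.sub hiic) hiic]
      apply intervalIntegral.integral_congr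
      intro t _
      show K t * Real.sin (ω * t)
        = (K t * Real.sin (ω * t) - c₁ / t * Real.sin (ω * t)) + c₁ / t * Real.sin (ω * t)
      ring
    have hA2 : |∫ t in S..B, (K t * Real.sin (ω * t) - c₁ / t * Real.sin (ω * t))|
        ≤ ε₀ / 8 := by
      have h1 : ∀ x ∈ uIoc S B,
          ‖K x * Real.sin (ω * x) - c₁ / x * Real.sin (ω * x)‖ ≤ ε * ω := by
        intro x hx
        rw [uIoc_of_le hSB] at hx
        have hx0 : 0 < x := lt_trans hSpos hx.1
        have hfac : K x * Real.sin (ω * x) - c₁ / x * Real.sin (ω * x)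
            = (x * K x - c₁) / x * Real.sin (ω * x) := by
          field_simp
        rw [Real.norm_eq_abs, hfac, abs_mul, abs_div, abs_of_pos hx0]
        have h2 : |x * K x - c₁| ≤ ε := hSb x hx.1.le
        have h3 := auxAbsSin (ω * x)
        rw [abs_of_nonneg (mul_nonneg hω0.le hx0.le)] at h3
        calc |x * K x - c₁| / x * |Real.sin (ω * x)| ≤ (ε / x) * (ω * x) := by
              apply mul_le_mul _ h3 (abs_nonneg _) (by positivity)
              gcongr
          _ = ε * ω := by field_simp
      have h4 := intervalIntegral.norm_integral_le_of_norm_le_const h1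
      rw [Real.norm_eq_abs, abs_of_nonneg (by linarith : (0:ℝ) ≤ B - S)] at h4
      have h6' : ε * ω * B = ε * (2 * π * N) := by rw [← hωB]; ring
      have h6 : ε * ω * (B - S) ≤ ε * (2 * π * N) := by
        nlinarith [mul_nonneg (mul_nonneg hεpos.le hω0.le) hSpos.le]
      linarith [h4, h6, hεN]
    -- A3 substitution
    have hsubst : (∫ t in S..B, c₁ / t * Real.sin (ω * t))
        = c₁ * ∫ u in (ω * S)..(2 * π * (N:ℝ)), Real.sin u / u := by
      have h1 : (∫ t in S..B, (fun u => Real.sin u / u) (ω * t))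
          = ω⁻¹ • ∫ u in (ω * S)..(ω * B), Real.sin u / u :=
        intervalIntegral.integral_comp_mul_left (a := S) (b := B)
          (fun u => Real.sin u / u) hω0.ne'
      have h2 : (∫ t in S..B, c₁ / t * Real.sin (ω * t))
          = ∫ t in S..B, (c₁ * ω) * ((fun u => Real.sin u / u) (ω * t)) := by
        apply intervalIntegral.integral_congr
        intro t ht
        rw [uIcc_of_le hSB] at ht
        have ht0 : 0 < t := lt_of_lt_of_le hSpos ht.1
        show c₁ / t * Real.sin (ω * t) = (c₁ * ω) * (Real.sin (ω * t) / (ω * t))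
        field_simp
      rw [h2, intervalIntegral.integral_const_mul, h1, smul_eq_mul, hωB]
      field_simp
    have hA3split : (∫ u in (ω * S)..(2 * π * (N:ℝ)), Real.sin u / u)
        = (∫ u in (0:ℝ)..(2 * π * (N:ℝ)), Real.sin u / u)
          - ∫ u in (0:ℝ)..(ω * S), Real.sin u / u := by
      have := intervalIntegral.integral_add_adjacent_intervals
        (sincIntervalIntegrable 0 (ω * S)) (sincIntervalIntegrable (ω * S) (2 * π * N))
      linarith
    have hD1 : |(∫ u in (0:ℝ)..(2 * π * (N:ℝ)), Real.sin u / u) - π / 2|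
        < ε₀ / (8 * (c₁ + 1)) := by
      have := hb₀ (2 * π * N) hNb
      rwa [Real.dist_eq] at this
    have hD2 : |∫ u in (0:ℝ)..(ω * S), Real.sin u / u| ≤ ω * S := by
      have h1 := intervalIntegral.norm_integral_le_of_norm_le_const
        (show ∀ x ∈ uIoc (0:ℝ) (ω * S), ‖Real.sin x / x‖ ≤ 1 from
          fun x _ => by rw [Real.norm_eq_abs]; exact auxSincAbs x)
      rw [Real.norm_eq_abs, sub_zero,
        abs_of_nonneg (mul_nonneg hω0.le hSpos.le), one_mul] at h1
      exact h1
    -- assembly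
    rw [Real.dist_eq]
    have e2 : (∫ t in S..B, K t * Real.sin (ω * t))
        = (∫ t in S..B, (K t * Real.sin (ω * t) - c₁ / t * Real.sin (ω * t)))
          + c₁ * ((∫ u in (0:ℝ)..(2 * π * (N:ℝ)), Real.sin u / u)
            - ∫ u in (0:ℝ)..(ω * S), Real.sin u / u) := by
      rw [hA2eq, hsubst, hA3split]
    have hid : Ksin ω - c₁ * π / 2
        = (∫ t in (0:ℝ)..S, K t * Real.sin (ω * t))
          + (∫ t in S..B, (K t * Real.sin (ω * t) - c₁ / t * Real.sin (ω * t)))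
          + (c₁ * ((∫ u in (0:ℝ)..(2 * π * (N:ℝ)), Real.sin u / u) - π / 2)
             - c₁ * (∫ u in (0:ℝ)..(ω * S), Real.sin u / u))
          + (Ksin ω - ∫ t in (0:ℝ)..B, K t * Real.sin (ω * t)) := by
      linear_combination e2 - hsplitSB
    have hmid : |c₁ * ((∫ u in (0:ℝ)..(2 * π * (N:ℝ)), Real.sin u / u) - π / 2)
        - c₁ * (∫ u in (0:ℝ)..(ω * S), Real.sin u / u)|
        ≤ c₁ * |(∫ u in (0:ℝ)..(2 * π * (N:ℝ)), Real.sin u / u) - π / 2|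
          + c₁ * |∫ u in (0:ℝ)..(ω * S), Real.sin u / u| := by
      rw [sub_eq_add_neg]
      refine (abs_add_le _ _).trans ?_
      rw [abs_neg, abs_mul, abs_mul, abs_of_pos hc₁]
    have hmid1 : c₁ * |(∫ u in (0:ℝ)..(2 * π * (N:ℝ)), Real.sin u / u) - π / 2|
        ≤ ε₀ / 8 := by
      have h1 : c₁ * (ε₀ / (8 * (c₁ + 1))) ≤ ε₀ / 8 := by
        rw [show c₁ * (ε₀ / (8 * (c₁ + 1))) = c₁ * ε₀ / (8 * (c₁ + 1)) from
          (mul_div_assoc _ _ _).symm,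
          div_le_div_iff₀ (by positivity) (by norm_num : (0:ℝ) < 8)]
        nlinarith
      nlinarith [hD1.le, hc₁]
    have hmid2 : c₁ * |∫ u in (0:ℝ)..(ω * S), Real.sin u / u| ≤ ε₀ / 8 := by
      have := mul_le_mul_of_nonneg_left hD2 hc₁.le
      linarith [hc₁ωS]
    have hTL : |Ksin ω - ∫ t in (0:ℝ)..B, K t * Real.sin (ω * t)| ≤ ε₀ / 8 :=
      abs_le.2 ⟨by linarith [htail.1], htailub⟩
    have htotal : |Ksin ω - c₁ * π / 2|
        ≤ (ω * S * CS) + ε₀ / 8 + (ε₀ / 8 + ε₀ / 8) + ε₀ / 8 := by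
      rw [hid]
      refine (abs_add_le _ _).trans ?_
      have t1 := abs_add_le
        ((∫ t in (0:ℝ)..S, K t * Real.sin (ω * t))
          + (∫ t in S..B, (K t * Real.sin (ω * t) - c₁ / t * Real.sin (ω * t))))
        (c₁ * ((∫ u in (0:ℝ)..(2 * π * (N:ℝ)), Real.sin u / u) - π / 2)
             - c₁ * (∫ u in (0:ℝ)..(ω * S), Real.sin u / u))
      have t2 := abs_add_le (∫ t in (0:ℝ)..S, K t * Real.sin (ω * t))
        (∫ t in S..B, (K t * Real.sin (ω * t) - c₁ / t * Real.sin (ω * t)))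
      linarith [hA1, hA2, hmid, hmid1, hmid2, hTL]
    have : Ksin ω - c₁ * Real.pi / 2 = Ksin ω - c₁ * π / 2 := rfl
    linarith [htotal, hA1b]
end

section
/- Let α ∈ (0,1) and let K : (0,∞) → ℝ be locally integrable, positive, eventually decreasing, and suppose t^α·K(t) → c_α for some c_α ∈ (0,∞) as t → ∞ (in particular K(t) → 0). Let 𝒦cos, 𝒦sin : (0,∞) → ℝ satisfy ∫₀^A K(t)cos(ωt)dt → 𝒦cos(ω) and ∫₀^A K(t)sin(ωt)dt → 𝒦sin(ω) as A → ∞ for every ω > 0. Then the improper integrals C₁ = lim_{A→∞} ∫₀^A u^{−α}cos(u) du and C₂ = lim_{A→∞} ∫₀^A u^{−α}sin(u) du exist and are positive, and, as ω → 0⁺, ω^{1−α}·𝒦cos(ω) → c_α·C₁ and ω^{1−α}·𝒦sin(ω) → c_α·C₂. -/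
open MeasureTheory Filter Set Real

/-- Compare |∫ f| with ∫ g when |f| ≤ g on the open-closed interval. -/
lemma abs_intInt_le {f g : ℝ → ℝ} {a b : ℝ} (hab : a ≤ b)
    (hf : IntervalIntegrable f volume a b) (hg : IntervalIntegrable g volume a b)
    (h : ∀ u ∈ Ioc a b, |f u| ≤ g u) :
    |∫ u in a..b, f u| ≤ ∫ u in a..b, g u := by
  have h1 : |∫ u in a..b, f u| ≤ ∫ u in a..b, |f u| :=
    intervalIntegral.abs_integral_le_integral_abs hab
  refine h1.trans ?_
  rw [intervalIntegral.integral_of_le hab, intervalIntegral.integral_of_le hab]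
  exact MeasureTheory.setIntegral_mono_on
    ((intervalIntegrable_iff_integrableOn_Ioc_of_le hab).1 hf.abs)
    ((intervalIntegrable_iff_integrableOn_Ioc_of_le hab).1 hg)
    measurableSet_Ioc h

lemma intInt_le_const {g : ℝ → ℝ} {a b c : ℝ} (hab : a ≤ b)
    (hg : IntervalIntegrable g volume a b)
    (h : ∀ u ∈ Ioc a b, g u ≤ c) :
    ∫ u in a..b, g u ≤ (b - a) * c := by
  rw [intervalIntegral.integral_of_le hab]
  have h2 : ∫ u in Ioc a b, g u ≤ ∫ _u in Ioc a b, c :=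
    MeasureTheory.setIntegral_mono_on
      ((intervalIntegrable_iff_integrableOn_Ioc_of_le hab).1 hg)
      (integrableOn_const (by simp [Real.volume_Ioc, ENNReal.ofReal_lt_top]))
      measurableSet_Ioc h
  refine h2.trans ?_
  rw [MeasureTheory.setIntegral_const, measureReal_def, Real.volume_Ioc, smul_eq_mul,
    ENNReal.toReal_ofReal (by linarith)]

/-- Oscillation bound: for antitone nonneg `g` on `[a,∞)` and an antiperiodic
bounded continuous `φ`, `|∫_a^b g φ| ≤ 2π g(a)`. -/
lemma osc_bound_s12 {φ : ℝ → ℝ} (hφc : Continuous φ) (hφ1 : ∀ u, |φ u| ≤ 1)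
    (hφa : ∀ u, φ (u + π) = -φ u)
    {g : ℝ → ℝ} {a b : ℝ} (hab : a ≤ b)
    (hmono : AntitoneOn g (Ici a)) (h0 : ∀ u ∈ Ici a, 0 ≤ g u) :
    |∫ u in a..b, g u * φ u| ≤ 2 * π * g a := by
  have hπ : (0:ℝ) < π := Real.pi_pos
  have hga : 0 ≤ g a := h0 a (le_refl a)
  -- integrability facts
  have hgi : ∀ c d, a ≤ c → c ≤ d → IntervalIntegrable g volume c d := by
    intro c d hc hcd
    refine (hmono.mono ?_).intervalIntegrable
    rw [uIcc_of_le hcd]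
    exact fun u hu => mem_Ici.2 (hc.trans hu.1)
  have hgsi : ∀ c d, a ≤ c → c ≤ d → IntervalIntegrable (fun u => g (u + π)) volume c d := by
    intro c d hc hcd
    have hA : AntitoneOn (fun u => g (u + π)) (uIcc c d) := by
      rw [uIcc_of_le hcd]
      intro u hu v hv huv
      have hπ' : (0:ℝ) < π := Real.pi_pos
      refine hmono (mem_Ici.2 (by have := hc.trans hu.1; linarith))
        (mem_Ici.2 (by have := hc.trans hv.1; linarith)) (by linarith)
    exact hA.intervalIntegrable
  have hgφi : ∀ c d, a ≤ c → c ≤ d → IntervalIntegrable (fun u => g u * φ u) volume c d :=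
    fun c d hc hcd => (hgi c d hc hcd).mul_continuousOn hφc.continuousOn
  have hgsφi : ∀ c d, a ≤ c → c ≤ d → IntervalIntegrable (fun u => g (u + π) * φ u) volume c d :=
    fun c d hc hcd => (hgsi c d hc hcd).mul_continuousOn hφc.continuousOn
  set I : ℕ → ℝ := fun k => a + k * π with hI
  have hIa : ∀ k : ℕ, a ≤ I k := by
    intro k; simp only [hI]; nlinarith [Nat.cast_nonneg (α := ℝ) k]
  have hIs : ∀ k : ℕ, I (k + 1) = I k + π := by
    intro k; simp only [hI]; push_cast; ring
  have hIle : ∀ k : ℕ, I k ≤ I (k + 1) := fun k => by rw [hIs k]; linarith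
  set h : ℕ → ℝ := fun k => ∫ u in I k..I (k+1), g u * φ u with hh
  set G : ℕ → ℝ := fun k => ∫ u in I k..I (k+1), g u with hG
  have hgle : ∀ k : ℕ, ∀ u ∈ Ioc (I k) (I (k+1)), g u ≤ g a := by
    intro k u hu
    exact hmono (mem_Ici.2 (le_refl a)) (mem_Ici.2 ((hIa k).trans hu.1.le))
      ((hIa k).trans hu.1.le)
  have hg0 : ∀ k : ℕ, ∀ u ∈ Ioc (I k) (I (k+1)), 0 ≤ g u := by
    intro k u hu; exact h0 u (mem_Ici.2 ((hIa k).trans hu.1.le))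
  have f1 : ∀ k, |h k| ≤ G k := by
    intro k
    refine abs_intInt_le (hIle k) (hgφi _ _ (hIa k) (hIle k)) (hgi _ _ (hIa k) (hIle k)) ?_
    intro u hu
    rw [abs_mul, abs_of_nonneg (hg0 k u hu)]
    calc g u * |φ u| ≤ g u * 1 := mul_le_mul_of_nonneg_left (hφ1 u) (hg0 k u hu)
    _ = g u := mul_one _
  have f2 : ∀ k, G k ≤ π * g a := by
    intro k
    have h' := intInt_le_const (hIle k) (hgi _ _ (hIa k) (hIle k)) (hgle k)
    have e : I (k+1) - I k = π := by rw [hIs k]; ring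
    exact h'.trans (le_of_eq (by rw [e]))
  have f2' : ∀ k, 0 ≤ G k := by
    intro k
    refine intervalIntegral.integral_nonneg (hIle k) ?_
    intro u hu; exact h0 u (mem_Ici.2 ((hIa k).trans hu.1))
  have shiftG : ∀ k : ℕ, G (k+1) = ∫ u in I k..I (k+1), g (u + π) := by
    intro k
    rw [intervalIntegral.integral_comp_add_right g π, ← hIs k, ← hIs (k+1)]
  have f3 : ∀ k, G (k+1) ≤ G k := by
    intro k
    rw [shiftG k]
    refine intervalIntegral.integral_mono_on (hIle k) (hgsi _ _ (hIa k) (hIle k)) (hgi _ _ (hIa k) (hIle k)) ?_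
    intro u hu
    exact hmono (mem_Ici.2 ((hIa k).trans hu.1)) (mem_Ici.2 (by nlinarith [(hIa k).trans hu.1]))
      (by linarith)
  have shifth : ∀ k : ℕ, h (k+1) = ∫ u in I k..I (k+1), -(g (u + π) * φ u) := by
    intro k
    have : h (k+1) = ∫ u in I k..I (k+1), g (u + π) * φ (u + π) := by
      rw [intervalIntegral.integral_comp_add_right (fun u => g u * φ u) π, ← hIs k, ← hIs (k+1)]
    rw [this]
    congr 1; funext u; rw [hφa u]; ring
  have f4 : ∀ k, |h k + h (k+1)| ≤ G k - G (k+1) := by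
    intro k
    have e1 : h k + h (k+1) = ∫ u in I k..I (k+1), (g u * φ u + -(g (u + π) * φ u)) := by
      rw [shifth k, hh]
      exact (intervalIntegral.integral_add (hgφi _ _ (hIa k) (hIle k)) (hgsφi _ _ (hIa k) (hIle k)).neg).symm
    have e2 : G k - G (k+1) = ∫ u in I k..I (k+1), (g u - g (u + π)) := by
      rw [shiftG k, hG]
      exact (intervalIntegral.integral_sub (hgi _ _ (hIa k) (hIle k)) (hgsi _ _ (hIa k) (hIle k))).symm
    rw [e1, e2]
    refine abs_intInt_le (hIle k) ?_ ?_ ?_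
    · exact (hgφi _ _ (hIa k) (hIle k)).add (hgsφi _ _ (hIa k) (hIle k)).neg
    · exact (hgi _ _ (hIa k) (hIle k)).sub (hgsi _ _ (hIa k) (hIle k))
    · intro u hu
      have hu1 : u ∈ Ici a := mem_Ici.2 ((hIa k).trans hu.1.le)
      have hmon : g (u + π) ≤ g u := hmono hu1 (mem_Ici.2 (by simp only [mem_Ici] at hu1; linarith)) (by linarith)
      have : g u * φ u + -(g (u + π) * φ u) = (g u - g (u + π)) * φ u := by ring
      rw [this, abs_mul, abs_of_nonneg (by linarith : (0:ℝ) ≤ g u - g (u + π))]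
      calc (g u - g (u + π)) * |φ u| ≤ (g u - g (u + π)) * 1 :=
            mul_le_mul_of_nonneg_left (hφ1 u) (by linarith)
      _ = g u - g (u + π) := mul_one _
  set S : ℕ → ℝ := fun n => ∑ k ∈ Finset.range n, h k with hS
  have sum_eq : ∀ n, S n = ∫ u in a..I n, g u * φ u := by
    intro n
    induction n with
    | zero => simp [hS, hI]
    | succ n ih =>
      simp only [hS, Finset.sum_range_succ]
      rw [show (∑ k ∈ Finset.range n, h k) = S n from rfl, ih]
      exact intervalIntegral.integral_add_adjacent_intervals
        (hgφi a (I n) (le_refl a) (hIa n)) (hgφi (I n) (I (n+1)) (hIa n) (hIle n))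
  have bound_even : ∀ q, |S (2*q)| ≤ G 0 - G (2*q) := by
    intro q
    induction q with
    | zero => simp [hS]
    | succ q ih =>
      have e : S (2*(q+1)) = S (2*q) + (h (2*q) + h (2*q+1)) := by
        have : 2*(q+1) = (2*q+1)+1 := by ring
        rw [this]; simp only [hS, Finset.sum_range_succ]; ring
      rw [e]
      calc |S (2*q) + (h (2*q) + h (2*q+1))| ≤ |S (2*q)| + |h (2*q) + h (2*q+1)| := abs_add_le _ _
      _ ≤ (G 0 - G (2*q)) + (G (2*q) - G (2*q+1)) := add_le_add ih (f4 (2*q))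
      _ = G 0 - G (2*q+1) := by ring
      _ ≤ G 0 - G (2*(q+1)) := by
          have := f3 (2*q+1)
          have e2 : 2*(q+1) = (2*q+1)+1 := by ring
          rw [e2]; linarith
  have bound_all : ∀ n, |S n| ≤ π * g a := by
    intro n
    rcases Nat.even_or_odd n with ⟨q, hq⟩ | ⟨q, hq⟩
    · have : n = 2*q := by omega
      rw [this]
      calc |S (2*q)| ≤ G 0 - G (2*q) := bound_even q
      _ ≤ G 0 := by linarith [f2' (2*q)]
      _ ≤ π * g a := f2 0
    · have : n = 2*q+1 := by omega
      rw [this]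
      have e : S (2*q+1) = S (2*q) + h (2*q) := by
        simp only [hS, Finset.sum_range_succ]
      rw [e]
      calc |S (2*q) + h (2*q)| ≤ |S (2*q)| + |h (2*q)| := abs_add_le _ _
      _ ≤ (G 0 - G (2*q)) + G (2*q) := add_le_add (bound_even q) (f1 (2*q))
      _ = G 0 := by ring
      _ ≤ π * g a := f2 0
  -- final assembly
  set n := ⌊(b - a) / π⌋₊ with hn
  have hn1 : I n ≤ b := by
    have h1 : (n:ℝ) ≤ (b - a) / π := Nat.floor_le (div_nonneg (by linarith) hπ.le)
    have := (le_div_iff₀ hπ).1 h1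
    simp only [hI]; linarith
  have hn2 : b ≤ I n + π := by
    have h1 : (b - a) / π < n + 1 := Nat.lt_floor_add_one _
    have := (div_lt_iff₀ hπ).1 h1
    simp only [hI]; nlinarith
  have split : (∫ u in a..b, g u * φ u) = S n + ∫ u in (I n)..b, g u * φ u := by
    rw [sum_eq n]
    exact (intervalIntegral.integral_add_adjacent_intervals
      (hgφi a (I n) (le_refl a) (hIa n)) (hgφi (I n) b (hIa n) hn1)).symm
  have tail : |∫ u in (I n)..b, g u * φ u| ≤ π * g a := by
    have h1 : |∫ u in (I n)..b, g u * φ u| ≤ ∫ u in (I n)..b, g u := by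
      refine abs_intInt_le hn1 (hgφi _ _ (hIa n) hn1) (hgi _ _ (hIa n) hn1) ?_
      intro u hu
      have hu0 : 0 ≤ g u := h0 u (mem_Ici.2 ((hIa n).trans hu.1.le))
      rw [abs_mul, abs_of_nonneg hu0]
      calc g u * |φ u| ≤ g u * 1 := mul_le_mul_of_nonneg_left (hφ1 u) hu0
      _ = g u := mul_one _
    refine h1.trans ?_
    have h2 : ∫ u in (I n)..b, g u ≤ (b - I n) * g a := by
      refine intInt_le_const hn1 (hgi _ _ (hIa n) hn1) ?_
      intro u hu
      exact hmono (mem_Ici.2 (le_refl a)) (mem_Ici.2 ((hIa n).trans hu.1.le))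
        ((hIa n).trans hu.1.le)
    refine h2.trans ?_
    exact mul_le_mul_of_nonneg_right (by linarith) hga
  rw [split]
  calc |S n + ∫ u in (I n)..b, g u * φ u| ≤ |S n| + |∫ u in (I n)..b, g u * φ u| := abs_add_le _ _
  _ ≤ π * g a + π * g a := add_le_add (bound_all n) tail
  _ = 2 * π * g a := by ring

/-- Existence of the improper integral `∫₀^∞ u^{-α} φ(u) du` via integration by parts. -/
lemma exists_C {α : ℝ} (hα0 : 0 < α) (hα1 : α < 1) {φ Φ : ℝ → ℝ}
    (hφc : Continuous φ)
    (hΦ : ∀ u, HasDerivAt Φ (φ u) u) (hΦ1 : ∀ u, |Φ u| ≤ 1) :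
    ∃ C, Tendsto (fun A => ∫ u in (0:ℝ)..A, u ^ (-α) * φ u) atTop (nhds C) := by
  have hΦc : Continuous Φ := by
    rw [continuous_iff_continuousAt]; exact fun x => (hΦ x).continuousAt
  have hint : ∀ a b : ℝ, IntervalIntegrable (fun u => u ^ (-α) * φ u) volume a b :=
    fun a b => (intervalIntegral.intervalIntegrable_rpow' (by linarith)).mul_continuousOn hφc.continuousOn
  -- the absolutely convergent integral
  have hcontOn : ContinuousOn (fun x : ℝ => -α * x ^ (-α - 1) * Φ x) (Ioi 1) := by
    refine ContinuousOn.mul (continuousOn_const.mul ?_) hΦc.continuousOn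
    exact fun x hx => ((Real.continuousAt_rpow_const x (-α - 1)
      (Or.inl (by simp only [mem_Ioi] at hx; linarith))).continuousWithinAt)
  have hR : IntegrableOn (fun x : ℝ => -α * x ^ (-α - 1) * Φ x) (Ioi 1) := by
    refine Integrable.mono' ((integrableOn_Ioi_rpow_of_lt (by linarith : -α - 1 < -1)
      one_pos).const_mul α) (hcontOn.aestronglyMeasurable measurableSet_Ioi) ?_
    refine (ae_restrict_mem measurableSet_Ioi).mono fun x hx => ?_
    have hx1 : (1:ℝ) < x := hx
    have hxp : (0:ℝ) ≤ x ^ (-α - 1) := Real.rpow_nonneg (by linarith) _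
    rw [norm_mul, norm_mul, Real.norm_eq_abs, Real.norm_eq_abs, Real.norm_eq_abs,
      abs_of_nonneg hxp, abs_neg, abs_of_pos hα0]
    calc α * x ^ (-α - 1) * |Φ x| ≤ α * x ^ (-α - 1) * 1 :=
          mul_le_mul_of_nonneg_left (hΦ1 x) (by positivity)
    _ = α * x ^ (-α - 1) := mul_one _
  set R := ∫ x in Ioi (1:ℝ), -α * x ^ (-α - 1) * Φ x with hRdef
  have hRt : Tendsto (fun A => ∫ x in (1:ℝ)..A, -α * x ^ (-α - 1) * Φ x) atTop (nhds R) :=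
    intervalIntegral_tendsto_integral_Ioi 1 hR tendsto_id
  -- boundary term
  have hBt : Tendsto (fun A : ℝ => A ^ (-α) * Φ A) atTop (nhds 0) := by
    refine squeeze_zero_norm' ?_ (tendsto_rpow_neg_atTop hα0)
    filter_upwards [eventually_ge_atTop (0:ℝ)] with A hA
    rw [Real.norm_eq_abs, abs_mul, abs_of_nonneg (Real.rpow_nonneg hA _)]
    calc A ^ (-α) * |Φ A| ≤ A ^ (-α) * 1 :=
          mul_le_mul_of_nonneg_left (hΦ1 A) (Real.rpow_nonneg hA _)
    _ = A ^ (-α) := mul_one _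
  -- IBP identity for A ≥ 1
  have hIBP : ∀ A : ℝ, 1 ≤ A →
      (∫ u in (1:ℝ)..A, u ^ (-α) * φ u) =
        A ^ (-α) * Φ A - 1 ^ (-(α:ℝ)) * Φ 1 - ∫ x in (1:ℝ)..A, -α * x ^ (-α - 1) * Φ x := by
    intro A hA
    have huIcc : uIcc (1:ℝ) A = Icc 1 A := uIcc_of_le hA
    refine intervalIntegral.integral_mul_deriv_eq_deriv_mul
      (u := fun x => x ^ (-α)) (u' := fun x => -α * x ^ (-α - 1)) (v := Φ) (v' := φ)
      ?_ (fun x _ => hΦ x) ?_ (hφc.intervalIntegrable 1 A)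
    · intro x hx
      rw [huIcc] at hx
      exact Real.hasDerivAt_rpow_const (Or.inl (by linarith [hx.1] : x ≠ 0))
    · refine (intervalIntegral.intervalIntegrable_rpow (Or.inr ?_)).const_mul (-α)
      rw [huIcc]; intro h; linarith [h.1]
  -- limit of ∫_1^A
  have h1A : Tendsto (fun A => ∫ u in (1:ℝ)..A, u ^ (-α) * φ u) atTop
      (nhds (0 - 1 ^ (-(α:ℝ)) * Φ 1 - R)) := by
    refine Tendsto.congr' ?_ (((hBt.sub tendsto_const_nhds).sub hRt))
    filter_upwards [eventually_ge_atTop (1:ℝ)] with A hA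
    exact (hIBP A hA).symm
  refine ⟨(∫ u in (0:ℝ)..1, u ^ (-α) * φ u) + (0 - 1 ^ (-(α:ℝ)) * Φ 1 - R), ?_⟩
  refine Tendsto.congr' ?_ (tendsto_const_nhds.add h1A)
  filter_upwards [eventually_ge_atTop (1:ℝ)] with A hA
  exact intervalIntegral.integral_add_adjacent_intervals (hint 0 1) (hint 1 A)

/-- Positivity of improper integrals `∫₀^∞ f(u) sin u du` for positive strictly
decreasing `f`. -/
lemma sin_weight_pos {f : ℝ → ℝ}
    (hanti : StrictAntiOn f (Ioi 0)) (hpos : ∀ u, 0 < u → 0 < f u)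
    (hint : ∀ b : ℝ, 0 ≤ b → IntervalIntegrable (fun u => f u * Real.sin u) volume 0 b)
    {L : ℝ} (hL : Tendsto (fun A => ∫ u in (0:ℝ)..A, f u * Real.sin u) atTop (nhds L)) :
    0 < L := by
  have hπ : (0:ℝ) < π := Real.pi_pos
  set F : ℝ → ℝ := fun u => f u * Real.sin u with hF
  have hintF : ∀ a b : ℝ, 0 ≤ a → a ≤ b → IntervalIntegrable F volume a b := by
    intro a b ha hab
    refine (hint b (ha.trans hab)).mono_set ?_
    rw [uIcc_of_le hab, uIcc_of_le (ha.trans hab)]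
    exact Icc_subset_Icc ha (le_refl b)
  have hintFs : ∀ a b : ℝ, 0 ≤ a → a ≤ b →
      IntervalIntegrable (fun u => F (u + π)) volume a b := by
    intro a b ha hab
    have := (hint (b + π) (by linarith [Real.pi_pos, ha.trans hab])).comp_add_right π
    refine this.mono_set ?_
    rw [uIcc_of_le hab, uIcc_of_le (by linarith : (0:ℝ) - π ≤ b + π - π)]
    simp only [zero_sub, add_sub_cancel_right]
    exact Icc_subset_Icc (by linarith) (by linarith)
  -- pairing: for 0 ≤ c, ∫_c^{c+2π} F = ∫_c^{c+π} (f u - f (u+π)) * sin u du + correction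
  have pairing : ∀ c : ℝ, 0 ≤ c →
      (∫ u in c..(c + 2*π), F u) = ∫ u in c..(c + π), (F u + F (u + π)) := by
    intro c hc
    have e1 : (∫ u in c..(c + 2*π), F u)
        = (∫ u in c..(c + π), F u) + ∫ u in (c + π)..(c + 2*π), F u :=
      (intervalIntegral.integral_add_adjacent_intervals
        (hintF c (c + π) hc (by linarith)) (hintF (c + π) (c + 2*π) (by linarith) (by linarith))).symm
    have e2 : (∫ u in (c + π)..(c + 2*π), F u) = ∫ u in c..(c + π), F (u + π) := by
      rw [intervalIntegral.integral_comp_add_right F π]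
      congr 1; ring
    rw [e1, e2]
    exact (intervalIntegral.integral_add (hintF c (c + π) hc (by linarith))
      (hintFs c (c + π) hc (by linarith))).symm
  have key : ∀ c : ℝ, 0 ≤ c → ∀ u, F u + F (u + π) = (f u - f (u + π)) * Real.sin u := by
    intro c hc u
    simp only [hF, Real.sin_add_pi]; ring
  -- step: blocks are nonnegative
  set c : ℕ → ℝ := fun n => 2*π*(n+1) with hc
  have hc0 : ∀ n : ℕ, 0 < c n := by
    intro n; simp only [hc]; positivity
  have hcs : ∀ n : ℕ, c (n+1) = c n + 2*π := by
    intro n; simp only [hc]; push_cast; ring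
  have hsin_nonneg : ∀ n : ℕ, ∀ u ∈ Icc (c n) (c n + π), 0 ≤ Real.sin u := by
    intro n u hu
    have e2 : u - 2*π*(n+1) + ((n+1 : ℕ) : ℝ) * (2*π) = u := by push_cast; ring
    have e3 : Real.sin u = Real.sin (u - 2*π*(n+1)) := by
      conv_lhs => rw [← e2]
      rw [Real.sin_add_nat_mul_two_pi]
    rw [e3]
    refine Real.sin_nonneg_of_nonneg_of_le_pi ?_ ?_
    · have := hu.1; simp only [hc] at this ⊢; linarith
    · have := hu.2; simp only [hc] at this ⊢; linarith
  have block_nonneg : ∀ n : ℕ, 0 ≤ ∫ u in (c n)..(c n + 2*π), F u := by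
    intro n
    rw [pairing (c n) (hc0 n).le]
    refine intervalIntegral.integral_nonneg (by linarith [hπ]) ?_
    intro u hu
    rw [key (c n) (hc0 n).le u]
    refine mul_nonneg ?_ (hsin_nonneg n u hu)
    have hu0 : 0 < u := lt_of_lt_of_le (hc0 n) hu.1
    have := (hanti (mem_Ioi.2 hu0) (mem_Ioi.2 (by linarith)) (by linarith : u < u + π)).le
    linarith
  -- T n := ∫₀^{c n} F is monotone, T 0 > 0, T n → L
  set T : ℕ → ℝ := fun n => ∫ u in (0:ℝ)..(c n), F u with hT
  have hTmono : Monotone T := by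
    refine monotone_nat_of_le_succ fun n => ?_
    have : T (n+1) = T n + ∫ u in (c n)..(c (n+1)), F u := by
      simp only [hT]
      exact (intervalIntegral.integral_add_adjacent_intervals
        (hintF 0 (c n) (le_refl 0) (hc0 n).le)
        (hintF (c n) (c (n+1)) (hc0 n).le (by rw [hcs n]; linarith))).symm
    rw [this, hcs n]
    linarith [block_nonneg n]
  have hT0 : 0 < T 0 := by
    have e : c 0 = 0 + 2*π := by simp only [hc]; push_cast; ring
    simp only [hT, e]
    rw [pairing 0 (le_refl 0)]
    refine intervalIntegral.intervalIntegral_pos_of_pos_on ?_ ?_ (by linarith)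
    · exact (hintF 0 (0 + π) (le_refl 0) (by linarith)).add (hintFs 0 (0 + π) (le_refl 0) (by linarith))
    · intro u hu
      rw [key 0 (le_refl 0) u]
      simp only [zero_add] at hu
      refine mul_pos ?_ (Real.sin_pos_of_pos_of_lt_pi hu.1 hu.2)
      have := hanti (mem_Ioi.2 hu.1) (mem_Ioi.2 (by linarith [hu.1] : (0:ℝ) < u + π))
        (by linarith : u < u + π)
      linarith
  have hTL : Tendsto T atTop (nhds L) := by
    refine hL.comp ?_
    refine tendsto_atTop_mono (fun n : ℕ => ?_) tendsto_natCast_atTop_atTop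
    simp only [hc]
    nlinarith [Real.pi_gt_three, Nat.cast_nonneg (α := ℝ) n]
  have : T 0 ≤ L := ge_of_tendsto hTL (Eventually.of_forall fun n => hTmono (Nat.zero_le n))
  linarith

/-- `∫₀^ε F → 0` as `ε → 0⁺`, for any `F` bounded pointwise by `u^{-α}`. -/
lemma head_vanish {α : ℝ} (hα0 : 0 < α) (hα1 : α < 1) {F : ℝ → ℝ}
    (hFi : ∀ b : ℝ, 0 ≤ b → IntervalIntegrable F volume 0 b)
    (hFb : ∀ u : ℝ, 0 < u → |F u| ≤ u ^ (-α)) :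
    Tendsto (fun ε => ∫ u in (0:ℝ)..ε, F u) (nhdsWithin 0 (Ioi 0)) (nhds 0) := by
  have h1α : (0:ℝ) < 1 - α := by linarith
  refine squeeze_zero_norm' (a := fun ε => ε ^ (1 - α) / (1 - α)) ?_ ?_
  · filter_upwards [self_mem_nhdsWithin] with ε (hε : (0:ℝ) < ε)
    have h1 : |∫ u in (0:ℝ)..ε, F u| ≤ ∫ u in (0:ℝ)..ε, u ^ (-α) := by
      refine abs_intInt_le hε.le (hFi ε hε.le)
        (intervalIntegral.intervalIntegrable_rpow' (by linarith)) ?_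
      exact fun u hu => hFb u hu.1
    have h2 : (∫ u in (0:ℝ)..ε, u ^ (-α)) = ε ^ (1 - α) / (1 - α) := by
      rw [integral_rpow (Or.inl (by linarith))]
      rw [Real.zero_rpow (by linarith : -α + 1 ≠ 0)]
      norm_num
      ring_nf
    rw [Real.norm_eq_abs]
    calc |∫ u in (0:ℝ)..ε, F u| ≤ ∫ u in (0:ℝ)..ε, u ^ (-α) := h1
    _ = ε ^ (1 - α) / (1 - α) := h2
  · have : Tendsto (fun ε : ℝ => ε ^ (1 - α)) (nhdsWithin 0 (Ioi 0)) (nhds 0) := by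
      have hc := (Real.continuousAt_rpow_const 0 (1 - α) (Or.inr h1α.le)).tendsto
      rw [Real.zero_rpow (by linarith : (1:ℝ) - α ≠ 0)] at hc
      exact hc.mono_left nhdsWithin_le_nhds
    simpa using this.div_const (1 - α)

/-- `u^{-α-1} sin u` is (absolutely) integrable on `(0,∞)`. -/
lemma sin_rpow_integrableOn {α : ℝ} (hα0 : 0 < α) (hα1 : α < 1) :
    IntegrableOn (fun u : ℝ => u ^ (-α-1) * Real.sin u) (Ioi 0) := by
  have part1 : IntegrableOn (fun u : ℝ => u ^ (-α-1) * Real.sin u) (Ioc 0 1) := by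
    refine Integrable.mono'
      ((intervalIntegrable_iff_integrableOn_Ioc_of_le zero_le_one).1
        (intervalIntegral.intervalIntegrable_rpow' (by linarith : (-1:ℝ) < -α))) ?_ ?_
    · refine (ContinuousOn.mul ?_ Real.continuous_sin.continuousOn).aestronglyMeasurable
        measurableSet_Ioc
      exact fun u hu => (Real.continuousAt_rpow_const u (-α-1)
        (Or.inl (ne_of_gt hu.1))).continuousWithinAt
    · refine (ae_restrict_mem measurableSet_Ioc).mono fun u hu => ?_
      have hu0 : 0 < u := hu.1
      rw [Real.norm_eq_abs, abs_mul, abs_of_nonneg (Real.rpow_nonneg hu0.le _)]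
      have hs : |Real.sin u| ≤ u := (Real.abs_sin_le_abs).trans (le_of_eq (abs_of_pos hu0))
      calc u ^ (-α-1) * |Real.sin u| ≤ u ^ (-α-1) * u :=
            mul_le_mul_of_nonneg_left hs (Real.rpow_nonneg hu0.le _)
      _ = u ^ (-α) := by
          rw [← Real.rpow_add_one (ne_of_gt hu0) (-α-1)]; ring_nf
  have part2 : IntegrableOn (fun u : ℝ => u ^ (-α-1) * Real.sin u) (Ioi 1) := by
    refine Integrable.mono' (integrableOn_Ioi_rpow_of_lt (by linarith : -α-1 < -1) one_pos) ?_ ?_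
    · refine (ContinuousOn.mul ?_ Real.continuous_sin.continuousOn).aestronglyMeasurable
        measurableSet_Ioi
      exact fun u hu => (Real.continuousAt_rpow_const u (-α-1)
        (Or.inl (by simp only [mem_Ioi] at hu; linarith))).continuousWithinAt
    · refine (ae_restrict_mem measurableSet_Ioi).mono fun u hu => ?_
      have hu0 : (0:ℝ) < u := lt_trans one_pos hu
      rw [Real.norm_eq_abs, abs_mul, abs_of_nonneg (Real.rpow_nonneg hu0.le _)]
      calc u ^ (-α-1) * |Real.sin u| ≤ u ^ (-α-1) * 1 :=
            mul_le_mul_of_nonneg_left (Real.abs_sin_le_one u) (Real.rpow_nonneg hu0.le _)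
      _ = u ^ (-α-1) := mul_one _
  have eq : Ioc (0:ℝ) 1 ∪ Ioi 1 = Ioi 0 := Ioc_union_Ioi_eq_Ioi zero_le_one
  rw [← eq]
  exact part1.union part2

/-- IBP identity: `∫₀^A u^{-α} cos u = A^{-α} sin A + α ∫₀^A u^{-α-1} sin u`. -/
lemma cos_ibp_id {α : ℝ} (hα0 : 0 < α) (hα1 : α < 1) (A : ℝ) (hA : 0 < A) :
    (∫ u in (0:ℝ)..A, u ^ (-α) * Real.cos u)
      = A ^ (-α) * Real.sin A + α * ∫ u in (0:ℝ)..A, u ^ (-α-1) * Real.sin u := by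
  have h1α : (0:ℝ) < 1 - α := by linarith
  have hJIoi := sin_rpow_integrableOn hα0 hα1
  have hJi : ∀ a b : ℝ, 0 ≤ a →
      IntervalIntegrable (fun u : ℝ => u ^ (-α-1) * Real.sin u) volume a b ∨ True := fun _ _ _ => Or.inr trivial
  -- interval integrability helpers
  have hIcos : ∀ a b : ℝ, IntervalIntegrable (fun u : ℝ => u ^ (-α) * Real.cos u) volume a b :=
    fun a b => (intervalIntegral.intervalIntegrable_rpow' (by linarith)).mul_continuousOn
      Real.continuous_cos.continuousOn
  have hIsin0 : ∀ b : ℝ, 0 ≤ b →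
      IntervalIntegrable (fun u : ℝ => u ^ (-α-1) * Real.sin u) volume 0 b := by
    intro b hb
    rw [intervalIntegrable_iff_integrableOn_Ioc_of_le hb]
    exact hJIoi.mono_set Ioc_subset_Ioi_self
  have hIsin : ∀ a b : ℝ, 0 < a → 0 < b →
      IntervalIntegrable (fun u : ℝ => u ^ (-α-1) * Real.sin u) volume a b := by
    intro a b ha hb
    rw [intervalIntegrable_iff]
    refine hJIoi.mono_set ?_
    intro u hu
    rcases le_total a b with h | h
    · rw [uIoc_of_le h] at hu; exact lt_of_lt_of_le ha hu.1.le
    · rw [uIoc_of_ge h] at hu; exact lt_of_lt_of_le hb hu.1.le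
  set l := nhdsWithin (0:ℝ) (Ioi 0) with hl
  haveI : l.NeBot := by rw [hl]; infer_instance
  set F : ℝ → ℝ := fun ε => ∫ u in ε..A, u ^ (-α) * Real.cos u with hFdef
  -- limit 1 : F → ∫₀^A
  have T1 : Tendsto F l (nhds (∫ u in (0:ℝ)..A, u ^ (-α) * Real.cos u)) := by
    have he : ∀ ε : ℝ, F ε = (∫ u in (0:ℝ)..A, u ^ (-α) * Real.cos u)
        - ∫ u in (0:ℝ)..ε, u ^ (-α) * Real.cos u := by
      intro ε
      have := intervalIntegral.integral_add_adjacent_intervals (hIcos 0 ε) (hIcos ε A)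
      simp only [hFdef]; linarith
    have h0 : Tendsto (fun ε => ∫ u in (0:ℝ)..ε, u ^ (-α) * Real.cos u) l (nhds 0) := by
      refine head_vanish hα0 hα1 (fun b hb => hIcos 0 b) ?_
      intro u hu
      rw [abs_mul, abs_of_nonneg (Real.rpow_nonneg hu.le _)]
      calc u ^ (-α) * |Real.cos u| ≤ u ^ (-α) * 1 :=
            mul_le_mul_of_nonneg_left (Real.abs_cos_le_one u) (Real.rpow_nonneg hu.le _)
      _ = u ^ (-α) := mul_one _
    have hres := (tendsto_const_nhds (x := ∫ u in (0:ℝ)..A, u ^ (-α) * Real.cos u)).sub h0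
    rw [sub_zero] at hres
    exact hres.congr fun ε => (he ε).symm
  -- limit 2 : via IBP
  have hsinbound : ∀ u : ℝ, 0 < u → |u ^ (-α-1) * Real.sin u| ≤ u ^ (-α) := by
    intro u hu0
    rw [abs_mul, abs_of_nonneg (Real.rpow_nonneg hu0.le _)]
    have hs : |Real.sin u| ≤ u := (Real.abs_sin_le_abs).trans (le_of_eq (abs_of_pos hu0))
    calc u ^ (-α-1) * |Real.sin u| ≤ u ^ (-α-1) * u :=
          mul_le_mul_of_nonneg_left hs (Real.rpow_nonneg hu0.le _)
    _ = u ^ (-α) := by rw [← Real.rpow_add_one (ne_of_gt hu0) (-α-1)]; ring_nf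
  have T2 : Tendsto F l (nhds (A ^ (-α) * Real.sin A
      + α * ∫ u in (0:ℝ)..A, u ^ (-α-1) * Real.sin u)) := by
    have hIBP : ∀ ε : ℝ, ε ∈ Ioo 0 A → F ε = A ^ (-α) * Real.sin A - ε ^ (-α) * Real.sin ε
        + α * ∫ u in ε..A, u ^ (-α-1) * Real.sin u := by
      intro ε hε
      have huIcc : uIcc ε A = Icc ε A := uIcc_of_le hε.2.le
      have h := intervalIntegral.integral_mul_deriv_eq_deriv_mul
        (u := fun x => x ^ (-α)) (u' := fun x => -α * x ^ (-α - 1))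
        (v := Real.sin) (v' := Real.cos)
        (fun x hx => by
          rw [huIcc] at hx
          exact Real.hasDerivAt_rpow_const (Or.inl (by linarith [hx.1, hε.1] : x ≠ 0)))
        (fun x _ => Real.hasDerivAt_sin x)
        (by
          refine (intervalIntegral.intervalIntegrable_rpow (Or.inr ?_)).const_mul (-α)
          rw [huIcc]; intro h; linarith [h.1, hε.1])
        (Real.continuous_cos.intervalIntegrable ε A)
      simp only [hFdef]
      rw [h]
      have e : (∫ x in ε..A, -α * x ^ (-α - 1) * Real.sin x)
          = -α * ∫ x in ε..A, x ^ (-α - 1) * Real.sin x := by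
        rw [← intervalIntegral.integral_const_mul]
        congr 1; funext x; ring
      rw [e]; ring
    have hb : Tendsto (fun ε : ℝ => ε ^ (-α) * Real.sin ε) l (nhds 0) := by
      refine squeeze_zero_norm' (a := fun ε => ε ^ (1 - α)) ?_ ?_
      · filter_upwards [self_mem_nhdsWithin] with ε (hε : (0:ℝ) < ε)
        rw [Real.norm_eq_abs, abs_mul, abs_of_nonneg (Real.rpow_nonneg hε.le _)]
        have hs : |Real.sin ε| ≤ ε := (Real.abs_sin_le_abs).trans (le_of_eq (abs_of_pos hε))
        calc ε ^ (-α) * |Real.sin ε| ≤ ε ^ (-α) * ε :=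
              mul_le_mul_of_nonneg_left hs (Real.rpow_nonneg hε.le _)
        _ = ε ^ (1-α) := by rw [← Real.rpow_add_one (ne_of_gt hε) (-α)]; ring_nf
      · have hc := (Real.continuousAt_rpow_const 0 (1 - α) (Or.inr h1α.le)).tendsto
        rw [Real.zero_rpow (by linarith : (1:ℝ) - α ≠ 0)] at hc
        exact hc.mono_left nhdsWithin_le_nhds
    have hcc : Tendsto (fun ε : ℝ => ∫ u in ε..A, u ^ (-α-1) * Real.sin u) l
        (nhds (∫ u in (0:ℝ)..A, u ^ (-α-1) * Real.sin u)) := by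
      have h0 : Tendsto (fun ε : ℝ => ∫ u in (0:ℝ)..ε, u ^ (-α-1) * Real.sin u) l (nhds 0) :=
        head_vanish hα0 hα1 hIsin0 hsinbound
      have hcongr : ∀ᶠ ε in l, (∫ u in (0:ℝ)..A, u ^ (-α-1) * Real.sin u)
          - (∫ u in (0:ℝ)..ε, u ^ (-α-1) * Real.sin u)
          = ∫ u in ε..A, u ^ (-α-1) * Real.sin u := by
        filter_upwards [self_mem_nhdsWithin] with ε (hε : (0:ℝ) < ε)
        have := intervalIntegral.integral_add_adjacent_intervals
          (hIsin0 ε hε.le) (hIsin ε A hε hA)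
        linarith
      have := (tendsto_const_nhds.sub h0).congr' hcongr
      rwa [sub_zero] at this
    have hG : Tendsto (fun ε : ℝ => A ^ (-α) * Real.sin A - ε ^ (-α) * Real.sin ε
        + α * ∫ u in ε..A, u ^ (-α-1) * Real.sin u) l
        (nhds (A ^ (-α) * Real.sin A - 0
          + α * ∫ u in (0:ℝ)..A, u ^ (-α-1) * Real.sin u)) :=
      (tendsto_const_nhds.sub hb).add (hcc.const_mul α)
    rw [sub_zero] at hG
    refine hG.congr' ?_
    filter_upwards [Ioo_mem_nhdsGT_of_mem (by exact ⟨le_refl 0, hA⟩ : (0:ℝ) ∈ Ico 0 A)]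
      with ε hε
    exact (hIBP ε hε).symm
  exact tendsto_nhds_unique T1 T2

/-- Positivity of `C₂`. -/
lemma C2_pos {α : ℝ} (hα0 : 0 < α) (hα1 : α < 1) {C : ℝ}
    (hC : Tendsto (fun A => ∫ u in (0:ℝ)..A, u ^ (-α) * Real.sin u) atTop (nhds C)) :
    0 < C := by
  refine sin_weight_pos ?_ ?_ ?_ hC
  · intro u hu v hv huv
    exact Real.rpow_lt_rpow_of_neg hu huv (by linarith : -α < 0)
  · intro u hu; exact Real.rpow_pos_of_pos hu _
  · intro b _
    exact (intervalIntegral.intervalIntegrable_rpow' (by linarith)).mul_continuousOn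
      Real.continuous_sin.continuousOn

/-- Positivity of `C₁`. -/
lemma C1_pos {α : ℝ} (hα0 : 0 < α) (hα1 : α < 1) {C : ℝ}
    (hC : Tendsto (fun A => ∫ u in (0:ℝ)..A, u ^ (-α) * Real.cos u) atTop (nhds C)) :
    0 < C := by
  have hJIoi := sin_rpow_integrableOn hα0 hα1
  set J := ∫ u in Ioi (0:ℝ), u ^ (-α-1) * Real.sin u with hJ
  have hJtend : Tendsto (fun A => ∫ u in (0:ℝ)..A, u ^ (-α-1) * Real.sin u) atTop (nhds J) :=
    intervalIntegral_tendsto_integral_Ioi 0 hJIoi tendsto_id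
  have hJpos : 0 < J := by
    refine sin_weight_pos ?_ ?_ ?_ hJtend
    · intro u hu v hv huv
      exact Real.rpow_lt_rpow_of_neg hu huv (by linarith : -α-1 < 0)
    · intro u hu; exact Real.rpow_pos_of_pos hu _
    · intro b hb
      rw [intervalIntegrable_iff_integrableOn_Ioc_of_le hb]
      exact hJIoi.mono_set Ioc_subset_Ioi_self
  have hb0 : Tendsto (fun A : ℝ => A ^ (-α) * Real.sin A) atTop (nhds 0) := by
    refine squeeze_zero_norm' (a := fun A : ℝ => A ^ (-α)) ?_ (tendsto_rpow_neg_atTop hα0)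
    filter_upwards [eventually_ge_atTop (0:ℝ)] with A hA
    rw [Real.norm_eq_abs, abs_mul, abs_of_nonneg (Real.rpow_nonneg hA _)]
    calc A ^ (-α) * |Real.sin A| ≤ A ^ (-α) * 1 :=
          mul_le_mul_of_nonneg_left (Real.abs_sin_le_one A) (Real.rpow_nonneg hA _)
    _ = A ^ (-α) := mul_one _
  have htend2 : Tendsto (fun A : ℝ => A ^ (-α) * Real.sin A
      + α * ∫ u in (0:ℝ)..A, u ^ (-α-1) * Real.sin u) atTop (nhds (0 + α * J)) :=
    hb0.add (hJtend.const_mul α)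
  have heq : ∀ᶠ A in (atTop : Filter ℝ), A ^ (-α) * Real.sin A
      + (α * ∫ u in (0:ℝ)..A, u ^ (-α-1) * Real.sin u)
      = ∫ u in (0:ℝ)..A, u ^ (-α) * Real.cos u := by
    filter_upwards [eventually_gt_atTop (0:ℝ)] with A hA
    exact (cos_ibp_id hα0 hα1 A hA).symm
  have : C = 0 + α * J := tendsto_nhds_unique hC (htend2.congr' heq)
  rw [this, zero_add]
  exact mul_pos hα0 hJpos

set_option maxHeartbeats 2000000 in
/-- Main Abelian limit. -/
lemma abelian_main {α : ℝ} (hα0 : 0 < α) (hα1 : α < 1)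
    {K : ℝ → ℝ}
    (hKloc : ∀ A > 0, IntegrableOn K (Ioc 0 A))
    (hKpos : ∀ t > 0, 0 < K t)
    {T : ℝ} (hKdec : AntitoneOn K (Ici T))
    {cα : ℝ} (hcα : 0 < cα)
    (hKα : Tendsto (fun t => t ^ α * K t) atTop (nhds cα))
    {φ : ℝ → ℝ} (hφc : Continuous φ) (hφ1 : ∀ u, |φ u| ≤ 1)
    (hφa : ∀ u, φ (u + π) = -φ u)
    {Kφ : ℝ → ℝ}
    (hKφ : ∀ ω > 0, Tendsto (fun A => ∫ t in (0:ℝ)..A, K t * φ (ω * t)) atTop (nhds (Kφ ω)))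
    {C : ℝ}
    (hC : Tendsto (fun A => ∫ u in (0:ℝ)..A, u ^ (-α) * φ u) atTop (nhds C)) :
    Tendsto (fun ω => ω ^ (1 - α) * Kφ ω) (nhdsWithin 0 (Ioi 0)) (nhds (cα * C)) := by
  have h1α : (0:ℝ) < 1 - α := by linarith
  have hπ : (0:ℝ) < π := Real.pi_pos
  -- T₀
  obtain ⟨N₁, hN₁⟩ := (Metric.tendsto_atTop.1 hKα) cα hcα
  set T₀ : ℝ := max (max T 1) N₁ with hT₀def
  have hT₀T : T ≤ T₀ := le_trans (le_max_left _ _) (le_max_left _ _)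
  have hT₀1 : (1:ℝ) ≤ T₀ := le_trans (le_max_right _ _) (le_max_left _ _)
  have hT₀0 : (0:ℝ) < T₀ := lt_of_lt_of_le one_pos hT₀1
  have hK2 : ∀ t, T₀ ≤ t → t ^ α * K t ≤ 2 * cα := by
    intro t ht
    have := hN₁ t (le_trans (le_max_right _ _) ht)
    rw [Real.dist_eq] at this
    have := abs_lt.1 this
    linarith [this.2]
  have hK2' : ∀ t, T₀ ≤ t → K t ≤ 2 * cα * t ^ (-α) := by
    intro t ht
    have ht0 : (0:ℝ) < t := lt_of_lt_of_le hT₀0 ht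
    have e : K t = t ^ (-α) * (t ^ α * K t) := by
      rw [← mul_assoc, ← Real.rpow_add ht0]
      simp
    rw [e]
    calc t ^ (-α) * (t ^ α * K t) ≤ t ^ (-α) * (2 * cα) :=
          mul_le_mul_of_nonneg_left (hK2 t ht) (Real.rpow_nonneg ht0.le _)
    _ = 2 * cα * t ^ (-α) := by ring
  -- interval integrability of K
  have hKint : ∀ b, 0 < b → IntervalIntegrable K volume 0 b := by
    intro b hb
    exact (intervalIntegrable_iff_integrableOn_Ioc_of_le hb.le).2 (hKloc b hb)
  have hKsub : ∀ a b, 0 < a → a ≤ b → IntervalIntegrable K volume a b := by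
    intro a b ha hab
    refine (hKint b (lt_of_lt_of_le ha hab)).mono_set ?_
    rw [uIcc_of_le hab, uIcc_of_le (le_trans ha.le hab)]
    exact Icc_subset_Icc ha.le (le_refl b)
  -- head growth bound
  set M : ℝ := ∫ t in (0:ℝ)..T₀, K t with hMdef
  have hM0 : 0 ≤ M := by
    rw [hMdef, intervalIntegral.integral_of_le hT₀0.le]
    exact MeasureTheory.setIntegral_nonneg measurableSet_Ioc fun t ht => (hKpos t ht.1).le
  set c' : ℝ := 2 * cα / (1 - α) with hc'def
  have hc'0 : 0 < c' := by positivity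
  have headK : ∀ X, T₀ ≤ X → (∫ t in (0:ℝ)..X, K t) ≤ M + c' * X ^ (1 - α) := by
    intro X hX
    have hX0 : (0:ℝ) < X := lt_of_lt_of_le hT₀0 hX
    have hsplit : (∫ t in (0:ℝ)..X, K t) = M + ∫ t in T₀..X, K t := by
      rw [hMdef]
      exact (intervalIntegral.integral_add_adjacent_intervals (hKint T₀ hT₀0)
        (hKsub T₀ X hT₀0 hX)).symm
    rw [hsplit]
    have h2 : (∫ t in T₀..X, K t) ≤ ∫ t in T₀..X, 2 * cα * t ^ (-α) := by
      refine intervalIntegral.integral_mono_on hX (hKsub T₀ X hT₀0 hX)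
        ((intervalIntegral.intervalIntegrable_rpow' (by linarith)).const_mul _) ?_
      intro t ht
      exact hK2' t ht.1
    have h3 : (∫ t in T₀..X, 2 * cα * t ^ (-α))
        = 2 * cα * ((X ^ (1-α) - T₀ ^ (1-α)) / (1 - α)) := by
      rw [intervalIntegral.integral_const_mul, integral_rpow (Or.inl (by linarith))]
      have e : -α + 1 = 1 - α := by ring
      rw [e]
    have h4 : 2 * cα * ((X ^ (1-α) - T₀ ^ (1-α)) / (1 - α)) ≤ c' * X ^ (1-α) := by
      have hT₀r : 0 ≤ T₀ ^ (1-α) := Real.rpow_nonneg hT₀0.le _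
      have e : c' * X ^ (1-α) = 2 * cα * (X ^ (1-α) / (1 - α)) := by
        rw [hc'def]; ring
      rw [e]
      gcongr
      linarith
    linarith
  -- start the ε argument
  rw [Metric.tendsto_nhds]
  intro ε hε
  -- choose U
  have hUtend : Tendsto (fun U : ℝ => 6 * π * cα * U ^ (-α)) atTop (nhds 0) := by
    have := (tendsto_rpow_neg_atTop hα0).const_mul (6 * π * cα)
    rwa [mul_zero] at this
  obtain ⟨U, hU1, hUε⟩ : ∃ U : ℝ, 1 ≤ U ∧ 6 * π * cα * U ^ (-α) ≤ ε / 3 := by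
    have h1 := eventually_ge_atTop (1:ℝ)
    have h2 := hUtend.eventually_le_const (by positivity : (0:ℝ) < ε / 3)
    exact (h1.and h2).exists
  have hU0 : (0:ℝ) < U := lt_of_lt_of_le one_pos hU1
  have hUr0 : (0:ℝ) < U ^ (1-α) := Real.rpow_pos_of_pos hU0 _
  -- choose δ'
  obtain ⟨δ', hδ'0, hδ'U, hδ'ε⟩ : ∃ δ' : ℝ, 0 < δ' ∧ δ' ≤ U ∧
      (c' + cα / (1 - α)) * δ' ^ (1-α) ≤ ε / 6 := by
    have htend : Tendsto (fun x : ℝ => (c' + cα / (1 - α)) * x ^ (1-α))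
        (nhdsWithin 0 (Ioi 0)) (nhds 0) := by
      have hc := (Real.continuousAt_rpow_const 0 (1-α) (Or.inr h1α.le)).tendsto
      rw [Real.zero_rpow (by linarith : (1:ℝ) - α ≠ 0)] at hc
      have hc2 : Tendsto (fun x : ℝ => x ^ (1-α)) (nhdsWithin 0 (Ioi 0)) (nhds 0) :=
        hc.mono_left nhdsWithin_le_nhds
      have := hc2.const_mul (c' + cα / (1 - α))
      rwa [mul_zero] at this
    have h2 := htend.eventually_le_const (by positivity : (0:ℝ) < ε / 6)
    have h3 : Ioo (0:ℝ) U ∈ nhdsWithin (0:ℝ) (Ioi 0) :=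
      Ioo_mem_nhdsGT_of_mem ⟨le_refl 0, hU0⟩
    obtain ⟨x, hx1, hx2⟩ := (h2.and (eventually_of_mem h3 fun x hx => hx)).exists
    exact ⟨x, hx2.1, hx2.2.le, hx1⟩
  have hδ'r : (0:ℝ) ≤ δ' ^ (1-α) := Real.rpow_nonneg hδ'0.le _
  -- ε'' and T₂
  set ε'' : ℝ := ε * (1 - α) / (6 * U ^ (1-α)) with hε''def
  have hε''0 : 0 < ε'' := by positivity
  obtain ⟨N₂, hN₂⟩ := (Metric.tendsto_atTop.1 hKα) ε'' hε''0
  set T₂ : ℝ := max N₂ T₀ with hT₂def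
  have hT₂0 : 0 < T₂ := lt_of_lt_of_le hT₀0 (le_max_right _ _)
  have hT₂T₀ : T₀ ≤ T₂ := le_max_right _ _
  have hKε'' : ∀ t, T₂ ≤ t → |t ^ α * K t - cα| ≤ ε'' := by
    intro t ht
    have := hN₂ t (le_trans (le_max_left _ _) ht)
    rw [Real.dist_eq] at this
    exact this.le
  -- eventualities in ω
  have ev1 : ∀ᶠ ω in nhdsWithin (0:ℝ) (Ioi 0), ω ^ (1-α) * M < ε / 6 := by
    have htend : Tendsto (fun ω : ℝ => ω ^ (1-α) * M) (nhdsWithin 0 (Ioi 0)) (nhds 0) := by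
      have hc := (Real.continuousAt_rpow_const 0 (1-α) (Or.inr h1α.le)).tendsto
      rw [Real.zero_rpow (by linarith : (1:ℝ) - α ≠ 0)] at hc
      have hc2 : Tendsto (fun x : ℝ => x ^ (1-α)) (nhdsWithin 0 (Ioi 0)) (nhds 0) :=
        hc.mono_left nhdsWithin_le_nhds
      have := hc2.mul_const M
      rwa [zero_mul] at this
    exact htend.eventually_lt_const (by positivity : (0:ℝ) < ε / 6)
  have ev2 : ∀ᶠ ω in nhdsWithin (0:ℝ) (Ioi 0), ω ∈ Ioo 0 (δ' / T₂) :=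
    eventually_of_mem (Ioo_mem_nhdsGT_of_mem ⟨le_refl 0, by positivity⟩) fun x hx => hx
  filter_upwards [ev1, ev2] with ω hωM hωI
  obtain ⟨hω0, hωT₂⟩ := hωI
  -- basic facts about ω
  have hδω : T₂ ≤ δ' / ω := le_of_lt ((lt_div_iff₀ hω0).2 (by
    have := (lt_div_iff₀ hT₂0).1 hωT₂
    linarith))
  have hδωT₀ : T₀ ≤ δ' / ω := le_trans hT₂T₀ hδω
  have hωr0 : (0:ℝ) < ω ^ (-α) := Real.rpow_pos_of_pos hω0 _
  have hω1α : ω ^ (-α) * ω = ω ^ (1-α) := by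
    rw [show (1:ℝ) - α = -α + 1 by ring, Real.rpow_add hω0, Real.rpow_one]
  have hω1αinv : ω ^ (1-α) * ω⁻¹ = ω ^ (-α) := by
    rw [show (1:ℝ) - α = -α + 1 by ring, Real.rpow_add hω0, Real.rpow_one,
      mul_assoc, mul_inv_cancel₀ (ne_of_gt hω0), mul_one]
  have hdiv : ∀ x y : ℝ, x ≤ y → x / ω ≤ y / ω := by
    intro x y hxy; gcongr
  -- the rescaled kernel
  set g : ℝ → ℝ := fun u => ω ^ (-α) * K (u / ω) with hgdef
  set h : ℝ → ℝ := fun u => cα * u ^ (-α) with hhdef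
  -- integrability
  have hKcomp : ∀ b, 0 < b → IntervalIntegrable (fun u => K (u / ω)) volume 0 b := by
    intro b hb
    have h1 := (hKint (b / ω) (div_pos hb hω0)).comp_mul_right (c := ω⁻¹)
    simp only [← div_eq_mul_inv] at h1
    have e0 : (0:ℝ) / ω⁻¹ = 0 := by simp
    have e1 : (b / ω) / ω⁻¹ = b := by field_simp
    rwa [e0, e1] at h1
  have hgBint : ∀ a b, 0 ≤ a → a ≤ b → IntervalIntegrable (fun u => g u * φ u) volume a b := by
    intro a b ha hab
    have hb1 : (0:ℝ) < b + 1 := by linarith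
    refine (((hKcomp (b+1) hb1).const_mul (ω ^ (-α))).mul_continuousOn
      hφc.continuousOn).mono_set ?_
    rw [uIcc_of_le hab, uIcc_of_le (by linarith : (0:ℝ) ≤ b + 1)]
    exact Icc_subset_Icc ha (by linarith)
  have hhBint : ∀ a b : ℝ, IntervalIntegrable (fun u => h u * φ u) volume a b := by
    intro a b
    exact ((intervalIntegral.intervalIntegrable_rpow' (by linarith)).const_mul cα).mul_continuousOn
      hφc.continuousOn
  -- identity: ∫₀^B g φ  tends to ω^{1-α} Kφ ω
  have hFB : Tendsto (fun B => ∫ u in (0:ℝ)..B, g u * φ u) atTop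
      (nhds (ω ^ (1-α) * Kφ ω)) := by
    set F : ℝ → ℝ := fun u => K (u / ω) * φ u with hF2def
    have key : ∀ A : ℝ, ω ^ (1-α) * ∫ t in (0:ℝ)..A, K t * φ (ω * t)
        = ∫ u in (0:ℝ)..(ω * A), g u * φ u := by
      intro A
      have e1 : (∫ t in (0:ℝ)..A, K t * φ (ω * t))
          = ∫ t in (0:ℝ)..A, F (ω * t) := by
        refine intervalIntegral.integral_congr fun t _ => ?_
        simp only [hF2def, mul_div_cancel_left₀ _ (ne_of_gt hω0)]
      have e2 : (∫ t in (0:ℝ)..A, F (ω * t))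
          = ω⁻¹ • ∫ u in (ω*0)..(ω*A), F u :=
        intervalIntegral.integral_comp_mul_left F (ne_of_gt hω0)
      rw [e1.trans e2, mul_zero, smul_eq_mul, ← mul_assoc, hω1αinv,
        ← intervalIntegral.integral_const_mul]
      refine intervalIntegral.integral_congr fun u _ => ?_
      simp only [hF2def, hgdef]; ring
    have h1 : Tendsto (fun A => ω ^ (1-α) * ∫ t in (0:ℝ)..A, K t * φ (ω * t)) atTop
        (nhds (ω ^ (1-α) * Kφ ω)) := (hKφ ω hω0).const_mul _
    have h2 : Tendsto (fun A => ∫ u in (0:ℝ)..(ω * A), g u * φ u) atTop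
        (nhds (ω ^ (1-α) * Kφ ω)) := h1.congr key
    have h3 : Tendsto (fun B : ℝ => B / ω) atTop atTop := tendsto_id.atTop_div_const hω0
    have h4 := h2.comp h3
    refine h4.congr fun B => ?_
    simp only [Function.comp]
    congr 1
    field_simp
  have hFC : Tendsto (fun B => ∫ u in (0:ℝ)..B, h u * φ u) atTop (nhds (cα * C)) := by
    have h1 := hC.const_mul cα
    refine h1.congr fun B => ?_
    rw [← intervalIntegral.integral_const_mul]
    refine intervalIntegral.integral_congr fun u _ => ?_
    simp only [hhdef]; ring
  have hdiff : Tendsto (fun B => (∫ u in (0:ℝ)..B, g u * φ u) - ∫ u in (0:ℝ)..B, h u * φ u)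
      atTop (nhds (ω ^ (1-α) * Kφ ω - cα * C)) := hFB.sub hFC
  -- bounds for B ≥ U
  have main_bound : ∀ B, U ≤ B →
      |(∫ u in (0:ℝ)..B, g u * φ u) - ∫ u in (0:ℝ)..B, h u * φ u| ≤ 5 * ε / 6 := by
    intro B hB
    have hδ'B : δ' ≤ B := le_trans hδ'U hB
    -- nonnegativity of g on positives
    have hgpos : ∀ u : ℝ, 0 < u → 0 ≤ g u := by
      intro u hu
      exact mul_nonneg hωr0.le (hKpos _ (div_pos hu hω0)).le
    -- head bound for g
    have bound1 : |∫ u in (0:ℝ)..δ', g u * φ u| ≤ ω ^ (1-α) * M + c' * δ' ^ (1-α) := by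
      have h1 : |∫ u in (0:ℝ)..δ', g u * φ u| ≤ ∫ u in (0:ℝ)..δ', g u := by
        refine abs_intInt_le hδ'0.le (hgBint 0 δ' (le_refl 0) hδ'0.le)
          ((hKcomp δ' hδ'0).const_mul _) ?_
        intro u hu
        rw [abs_mul, abs_of_nonneg (hgpos u hu.1)]
        calc g u * |φ u| ≤ g u * 1 := mul_le_mul_of_nonneg_left (hφ1 u) (hgpos u hu.1)
        _ = g u := mul_one _
      have h2 : (∫ u in (0:ℝ)..δ', g u) = ω ^ (-α) * (ω * ∫ t in (0:ℝ)..(δ' / ω), K t) := by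
        simp only [hgdef]
        rw [intervalIntegral.integral_const_mul]
        congr 1
        have e1 : (∫ u in (0:ℝ)..δ', K (u / ω)) = ∫ u in (0:ℝ)..δ', K (ω⁻¹ * u) := by
          refine intervalIntegral.integral_congr fun u _ => ?_
          rw [div_eq_mul_inv, mul_comm]
        rw [e1, intervalIntegral.integral_comp_mul_left _ (by positivity : ω⁻¹ ≠ 0),
          mul_zero, inv_inv, smul_eq_mul]
        congr 1
        rw [inv_mul_eq_div]
      have h3 : ω ^ (-α) * (ω * ∫ t in (0:ℝ)..(δ' / ω), K t)
          ≤ ω ^ (-α) * (ω * (M + c' * (δ' / ω) ^ (1-α))) := by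
        refine mul_le_mul_of_nonneg_left ?_ hωr0.le
        exact mul_le_mul_of_nonneg_left (headK (δ' / ω) hδωT₀) hω0.le
      have h4 : ω ^ (-α) * (ω * (M + c' * (δ' / ω) ^ (1-α)))
          = ω ^ (1-α) * M + c' * δ' ^ (1-α) := by
        have e2 : ω ^ (1-α) * (δ' / ω) ^ (1-α) = δ' ^ (1-α) := by
          rw [← Real.mul_rpow hω0.le (by positivity : (0:ℝ) ≤ δ' / ω)]
          rw [mul_comm ω, div_mul_cancel₀ _ (ne_of_gt hω0)]
        calc ω ^ (-α) * (ω * (M + c' * (δ' / ω) ^ (1-α)))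
            = (ω ^ (-α) * ω) * M + c' * ((ω ^ (-α) * ω) * (δ' / ω) ^ (1-α)) := by ring
        _ = ω ^ (1-α) * M + c' * (ω ^ (1-α) * (δ' / ω) ^ (1-α)) := by rw [hω1α]
        _ = ω ^ (1-α) * M + c' * δ' ^ (1-α) := by rw [e2]
      calc |∫ u in (0:ℝ)..δ', g u * φ u| ≤ ∫ u in (0:ℝ)..δ', g u := h1
      _ = ω ^ (-α) * (ω * ∫ t in (0:ℝ)..(δ' / ω), K t) := h2
      _ ≤ ω ^ (-α) * (ω * (M + c' * (δ' / ω) ^ (1-α))) := h3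
      _ = ω ^ (1-α) * M + c' * δ' ^ (1-α) := h4
    -- head bound for h
    have bound2 : |∫ u in (0:ℝ)..δ', h u * φ u| ≤ cα / (1-α) * δ' ^ (1-α) := by
      have h1 : |∫ u in (0:ℝ)..δ', h u * φ u| ≤ ∫ u in (0:ℝ)..δ', h u := by
        refine abs_intInt_le hδ'0.le (hhBint 0 δ')
          ((intervalIntegral.intervalIntegrable_rpow' (by linarith)).const_mul cα) ?_
        intro u hu
        have hh0 : 0 ≤ h u := mul_nonneg hcα.le (Real.rpow_nonneg hu.1.le _)
        rw [abs_mul, abs_of_nonneg hh0]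
        calc h u * |φ u| ≤ h u * 1 := mul_le_mul_of_nonneg_left (hφ1 u) hh0
        _ = h u := mul_one _
      have h2 : (∫ u in (0:ℝ)..δ', h u) = cα / (1-α) * δ' ^ (1-α) := by
        simp only [hhdef]
        rw [intervalIntegral.integral_const_mul, integral_rpow (Or.inl (by linarith)),
          Real.zero_rpow (by linarith : -α + 1 ≠ 0)]
        have : -α + 1 = 1 - α := by ring
        rw [this]
        ring
      rw [h2] at h1
      exact h1
    -- middle bound
    have bound3 : |(∫ u in δ'..U, g u * φ u) - ∫ u in δ'..U, h u * φ u| ≤ ε / 6 := by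
      have hsub : (∫ u in δ'..U, g u * φ u) - (∫ u in δ'..U, h u * φ u)
          = ∫ u in δ'..U, (g u * φ u - h u * φ u) :=
        (intervalIntegral.integral_sub (hgBint δ' U hδ'0.le hδ'U) (hhBint δ' U)).symm
      rw [hsub]
      have h1 : |∫ u in δ'..U, (g u * φ u - h u * φ u)| ≤ ∫ u in δ'..U, ε'' * u ^ (-α) := by
        refine abs_intInt_le hδ'U ((hgBint δ' U hδ'0.le hδ'U).sub (hhBint δ' U))
          ((intervalIntegral.intervalIntegrable_rpow' (by linarith)).const_mul ε'') ?_
        intro u hu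
        have hu0 : 0 < u := lt_trans hδ'0 hu.1
        have hur0 : (0:ℝ) ≤ u ^ (-α) := Real.rpow_nonneg hu0.le _
        have huT₂ : T₂ ≤ u / ω := le_trans hδω (hdiv _ _ hu.1.le)
        have hgu : g u - h u = u ^ (-α) * ((u / ω) ^ α * K (u / ω) - cα) := by
          simp only [hgdef, hhdef]
          have e : u ^ (-α) * (u / ω) ^ α = ω ^ (-α) := by
            rw [Real.div_rpow hu0.le hω0.le, Real.rpow_neg hu0.le, Real.rpow_neg hω0.le]
            field_simp
          have e2 : ω ^ (-α) * K (u / ω) = u ^ (-α) * ((u/ω) ^ α * K (u/ω)) := by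
            rw [← mul_assoc, e]
          rw [e2]; ring
        have efac : g u * φ u - h u * φ u = (g u - h u) * φ u := by ring
        rw [efac, abs_mul]
        calc |g u - h u| * |φ u| ≤ |g u - h u| * 1 :=
              mul_le_mul_of_nonneg_left (hφ1 u) (abs_nonneg _)
        _ = |g u - h u| := mul_one _
        _ = u ^ (-α) * |(u / ω) ^ α * K (u / ω) - cα| := by
              rw [hgu, abs_mul, abs_of_nonneg hur0]
        _ ≤ u ^ (-α) * ε'' := by
              refine mul_le_mul_of_nonneg_left ?_ hur0
              exact hKε'' (u / ω) huT₂
        _ = ε'' * u ^ (-α) := by ring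
      have h2 : (∫ u in δ'..U, ε'' * u ^ (-α)) ≤ ε'' * (U ^ (1-α) / (1-α)) := by
        rw [intervalIntegral.integral_const_mul, integral_rpow (Or.inl (by linarith))]
        have e : -α + 1 = 1 - α := by ring
        rw [e]
        refine mul_le_mul_of_nonneg_left ?_ hε''0.le
        gcongr
        linarith [Real.rpow_nonneg hδ'0.le (1-α)]
      have h3 : ε'' * (U ^ (1-α) / (1-α)) = ε / 6 := by
        rw [hε''def]
        field_simp
      calc |∫ u in δ'..U, (g u * φ u - h u * φ u)| ≤ ∫ u in δ'..U, ε'' * u ^ (-α) := h1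
      _ ≤ ε'' * (U ^ (1-α) / (1-α)) := h2
      _ = ε / 6 := h3.le.antisymm h3.ge
    -- tail bounds
    have hganti : AntitoneOn g (Ici U) := by
      intro u hu v hv huv
      simp only [hgdef]
      refine mul_le_mul_of_nonneg_left ?_ hωr0.le
      have hUω : T ≤ U / ω := le_trans hT₀T (le_trans hT₂T₀ (le_trans hδω (hdiv _ _ hδ'U)))
      refine hKdec ?_ ?_ ?_
      · exact mem_Ici.2 (le_trans hUω (hdiv _ _ hu))
      · exact mem_Ici.2 (le_trans hUω (hdiv _ _ (le_trans hu huv)))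
      · exact hdiv _ _ huv
    have hgU : g U ≤ 2 * cα * U ^ (-α) := by
      have hUωT₀ : T₀ ≤ U / ω := le_trans hT₂T₀ (le_trans hδω (hdiv _ _ hδ'U))
      have e : g U = U ^ (-α) * ((U / ω) ^ α * K (U / ω)) := by
        simp only [hgdef]
        have e2 : U ^ (-α) * (U / ω) ^ α = ω ^ (-α) := by
          rw [Real.div_rpow hU0.le hω0.le, Real.rpow_neg hU0.le, Real.rpow_neg hω0.le]
          field_simp
        rw [← mul_assoc, e2]
      rw [e]
      calc U ^ (-α) * ((U / ω) ^ α * K (U / ω)) ≤ U ^ (-α) * (2 * cα) :=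
            mul_le_mul_of_nonneg_left (hK2 _ hUωT₀) (Real.rpow_nonneg hU0.le _)
      _ = 2 * cα * U ^ (-α) := by ring
    have bound4g : |∫ u in U..B, g u * φ u| ≤ 2 * π * (2 * cα * U ^ (-α)) := by
      have := osc_bound_s12 hφc hφ1 hφa hB hganti
        (fun u hu => hgpos u (lt_of_lt_of_le hU0 hu))
      refine this.trans ?_
      exact mul_le_mul_of_nonneg_left hgU (by positivity)
    have bound4h : |∫ u in U..B, h u * φ u| ≤ 2 * π * (cα * U ^ (-α)) := by
      have hhanti : AntitoneOn h (Ici U) := by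
        intro u hu v hv huv
        simp only [hhdef]
        refine mul_le_mul_of_nonneg_left ?_ hcα.le
        rcases eq_or_lt_of_le huv with he | hlt
        · rw [he]
        · exact (Real.rpow_lt_rpow_of_neg (lt_of_lt_of_le hU0 hu) hlt
            (by linarith : -α < 0)).le
      have := osc_bound_s12 hφc hφ1 hφa hB hhanti
        (fun u hu => mul_nonneg hcα.le
          (Real.rpow_nonneg (le_trans hU0.le hu) _))
      refine this.trans (le_of_eq ?_)
      simp only [hhdef]
    -- assemble
    have sg : (∫ u in (0:ℝ)..B, g u * φ u)
        = (∫ u in (0:ℝ)..δ', g u * φ u) + (∫ u in δ'..U, g u * φ u)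
          + ∫ u in U..B, g u * φ u := by
      rw [intervalIntegral.integral_add_adjacent_intervals (hgBint 0 δ' (le_refl 0) hδ'0.le)
        (hgBint δ' U hδ'0.le hδ'U),
        intervalIntegral.integral_add_adjacent_intervals (hgBint 0 U (le_refl 0) hU0.le)
        (hgBint U B hU0.le hB)]
    have sh : (∫ u in (0:ℝ)..B, h u * φ u)
        = (∫ u in (0:ℝ)..δ', h u * φ u) + (∫ u in δ'..U, h u * φ u)
          + ∫ u in U..B, h u * φ u := by
      rw [intervalIntegral.integral_add_adjacent_intervals (hhBint 0 δ') (hhBint δ' U),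
        intervalIntegral.integral_add_adjacent_intervals (hhBint 0 U) (hhBint U B)]
    rw [sg, sh]
    have tri : ∀ a1 a2 a3 b1 b2 b3 : ℝ,
        |a1 + a2 + a3 - (b1 + b2 + b3)| ≤ |a1| + |b1| + |a2 - b2| + (|a3| + |b3|) := by
      intro a1 a2 a3 b1 b2 b3
      have : a1 + a2 + a3 - (b1 + b2 + b3) = (a1 - b1) + (a2 - b2) + (a3 - b3) := by ring
      rw [this]
      calc |(a1 - b1) + (a2 - b2) + (a3 - b3)|
          ≤ |(a1 - b1) + (a2 - b2)| + |a3 - b3| := abs_add_le _ _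
      _ ≤ |a1 - b1| + |a2 - b2| + |a3 - b3| := by
          linarith [abs_add_le (a1 - b1) (a2 - b2)]
      _ ≤ (|a1| + |b1|) + |a2 - b2| + (|a3| + |b3|) := by
          linarith [abs_sub (a1) (b1), abs_sub a3 b3]
    refine (tri _ _ _ _ _ _).trans ?_
    have final : (ω ^ (1-α) * M + c' * δ' ^ (1-α)) + (cα / (1-α) * δ' ^ (1-α)) + ε / 6
        + (2 * π * (2 * cα * U ^ (-α)) + 2 * π * (cα * U ^ (-α))) ≤ 5 * ε / 6 := by
      have e1 : 2 * π * (2 * cα * U ^ (-α)) + 2 * π * (cα * U ^ (-α))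
          = 6 * π * cα * U ^ (-α) := by ring
      have e2 : c' * δ' ^ (1-α) + cα / (1-α) * δ' ^ (1-α)
          = (c' + cα / (1-α)) * δ' ^ (1-α) := by ring
      rw [e1]
      linarith [hδ'ε, hωM, hUε]
    linarith [bound1, bound2, bound3, bound4g, bound4h]
  -- conclude
  have habs : |ω ^ (1-α) * Kφ ω - cα * C| ≤ 5 * ε / 6 := by
    refine le_of_tendsto hdiff.abs ?_
    filter_upwards [eventually_ge_atTop U] with B hB
    exact main_bound B hB
  rw [Real.dist_eq]
  calc |ω ^ (1-α) * Kφ ω - cα * C| ≤ 5 * ε / 6 := habs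
  _ < ε := by linarith

open MeasureTheory Filter Set

/-- Abelian theorem in the power-law case: if `t^α·K(t) → c_α ∈ (0,∞)` with
`α ∈ (0,1)`, then the improper integrals `C₁ = ∫₀^∞ u^{−α}cos u du` and
`C₂ = ∫₀^∞ u^{−α}sin u du` exist and are positive, and
`ω^{1−α}𝒦cos(ω) → c_α C₁`, `ω^{1−α}𝒦sin(ω) → c_α C₂` as `ω → 0⁺`. -/
theorem abelian_power_law_case
    (α : ℝ) (hα : α ∈ Set.Ioo (0:ℝ) 1)
    (K : ℝ → ℝ)
    (hKloc : ∀ A > 0, IntegrableOn K (Ioc 0 A))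
    (hKpos : ∀ t > 0, 0 < K t)
    (hKdec : ∃ T > 0, AntitoneOn K (Ici T))
    (cα : ℝ) (hcα : 0 < cα)
    (hKα : Tendsto (fun t => t ^ α * K t) atTop (nhds cα))
    (Kcos Ksin : ℝ → ℝ)
    (hKcos : ∀ ω > 0, Tendsto (fun A => ∫ t in (0:ℝ)..A, K t * Real.cos (ω * t))
      atTop (nhds (Kcos ω)))
    (hKsin : ∀ ω > 0, Tendsto (fun A => ∫ t in (0:ℝ)..A, K t * Real.sin (ω * t))
      atTop (nhds (Ksin ω))) :
    ∃ C₁ C₂ : ℝ, 0 < C₁ ∧ 0 < C₂ ∧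
      Tendsto (fun A => ∫ u in (0:ℝ)..A, u ^ (-α) * Real.cos u) atTop (nhds C₁) ∧
      Tendsto (fun A => ∫ u in (0:ℝ)..A, u ^ (-α) * Real.sin u) atTop (nhds C₂) ∧
      Tendsto (fun ω => ω ^ (1 - α) * Kcos ω) (nhdsWithin 0 (Ioi 0)) (nhds (cα * C₁)) ∧
      Tendsto (fun ω => ω ^ (1 - α) * Ksin ω) (nhdsWithin 0 (Ioi 0)) (nhds (cα * C₂)) := by
  obtain ⟨hα0, hα1⟩ := hα
  obtain ⟨T, hT0, hKdec'⟩ := hKdec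
  -- existence of the improper integrals
  obtain ⟨C₁, hC₁⟩ := exists_C hα0 hα1 Real.continuous_cos
    (fun u => Real.hasDerivAt_sin u) (fun u => Real.abs_sin_le_one u)
  obtain ⟨C₂, hC₂⟩ := exists_C hα0 hα1 Real.continuous_sin
    (Φ := fun u => -Real.cos u)
    (fun u => by have := (Real.hasDerivAt_cos u).neg; simp only [neg_neg] at this; exact this)
    (fun u => by rw [abs_neg]; exact Real.abs_cos_le_one u)
  refine ⟨C₁, C₂, C1_pos hα0 hα1 hC₁, C2_pos hα0 hα1 hC₂, hC₁, hC₂, ?_, ?_⟩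
  · exact abelian_main hα0 hα1 hKloc hKpos hKdec' hcα hKα
      Real.continuous_cos (fun u => Real.abs_cos_le_one u)
      (fun u => Real.cos_add_pi u) hKcos hC₁
  · exact abelian_main hα0 hα1 hKloc hKpos hKdec' hcα hKα
      Real.continuous_sin (fun u => Real.abs_sin_le_one u)
      (fun u => Real.sin_add_pi u) hKsin hC₂
end
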